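/- arXiv:1609.00715 — 6 statements merged into one kernel-verified Lean document; each statement's English description precedes it below -/
import Mathlib

section
/- Let r ≥ 1 be an integer, p, q nonzero complex numbers with |p| < 1, |q| < 1, and m ∈ ℤ. For every nonzero z ∈ ℂ that is not a pole of either factor, γ^{(r)}(z, m; p,q) · γ^{(r)}(pq z^{-1}, r−m; p,q) = 1. -/
open Complex Finset

noncomputable section

/-- The infinite q-Pochhammer symbol `(z;p)_∞ = ∏_{j≥0} (1 - z p^j)`. -/
def qPochInf (z p : ℂ) : ℂ := ∏' j : ℕ, (1 - z * p ^ j)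

/-- The theta function `θ(z;p) = (z;p)_∞ (p z⁻¹; p)_∞`. -/
def theta0 (z p : ℂ) : ℂ := qPochInf z p * qPochInf (p * z⁻¹) p

/-- The elliptic gamma function `Γ(z;p,q)`. -/
def ellGamma (z p q : ℂ) : ℂ :=
  ∏' jk : ℕ × ℕ,
    (1 - z⁻¹ * p ^ (jk.1 + 1) * q ^ (jk.2 + 1)) / (1 - z * p ^ jk.1 * q ^ jk.2)

/-- The second order elliptic gamma function `Γ(z;p,q,t)`. -/
def ellGamma3 (z p q t : ℂ) : ℂ :=
  ∏' x : ℕ × ℕ × ℕ,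
    (1 - z * p ^ x.1 * q ^ x.2.1 * t ^ x.2.2) *
      (1 - z⁻¹ * p ^ (x.1 + 1) * q ^ (x.2.1 + 1) * t ^ (x.2.2 + 1))

/-- The lens space elliptic gamma function `γ^{(r)}(z,m;p,q)`. -/
def lensGamma (r : ℕ) (z : ℂ) (m : ℤ) (p q : ℂ) : ℂ :=
  ellGamma (z * p ^ m) (p ^ r) (p * q) * ellGamma (z * q ^ ((r : ℤ) - m)) (q ^ r) (p * q)

/-- The rarefied elliptic gamma function `Γ^{(r)}(z,m;p,q)`, built with fixed
square roots σ, τ satisfying `σ² = pq`, `τ² = p/q`, `στ = p`. -/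
def rarGamma (r : ℕ) (z : ℂ) (m : ℤ) (p q σ τ : ℂ) : ℂ :=
  (-z / σ) ^ (m * (m - 1) / 2) * τ ^ (m * (m - 1) * (2 * m - 1) / 6) * lensGamma r z m p q

/-- `w` avoids the pole set `{P^{-j} Q^{-k} : j,k ≥ 0}` of `ellGamma w P Q`. -/
def notPole (w P Q : ℂ) : Prop := ∀ j k : ℕ, w ≠ P ^ (-(j : ℤ)) * Q ^ (-(k : ℤ))

/-- `z` is not a pole of either elliptic gamma factor of `lensGamma r z m p q`. -/
def lensReg (r : ℕ) (z : ℂ) (m : ℤ) (p q : ℂ) : Prop :=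
  notPole (z * p ^ m) (p ^ r) (p * q) ∧ notPole (z * q ^ ((r : ℤ) - m)) (q ^ r) (p * q)

/-- A pointwise-nonzero family with summable `f - 1` is multipliable. -/
lemma multipliable_of_summable_sub_one {ι : Type*} {f : ι → ℂ}
    (h0 : ∀ i, f i ≠ 0) (hs : Summable (fun i => f i - 1)) : Multipliable f := by
  have key : Summable fun i => Complex.log (f i) := by
    have hcof : ∀ᶠ i in Filter.cofinite, ‖f i - 1‖ ≤ 1 / 2 := by
      have := hs.tendsto_cofinite_zero
      have h2 := this.eventually (Metric.ball_mem_nhds (0 : ℂ) (by norm_num : (0:ℝ) < 1/2))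
      filter_upwards [h2] with i hi
      simpa [dist_eq_norm] using le_of_lt (by simpa [dist_eq_norm] using hi)
    refine Summable.of_norm_bounded_eventually (g := fun i => 3 / 2 * ‖f i - 1‖)
      (hs.norm.mul_left _) ?_
    filter_upwards [hcof] with i hi
    have : Complex.log (f i) = Complex.log (1 + (f i - 1)) := by ring_nf
    rw [this]
    exact Complex.norm_log_one_add_half_le_self hi
  exact Complex.multipliable_of_summable_log key

/-- Summability of a two-variable geometric family. -/
lemma summable_geom2 (c P Q : ℂ) (hP : ‖P‖ < 1) (hQ : ‖Q‖ < 1) :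
    Summable fun jk : ℕ × ℕ => c * P ^ jk.1 * Q ^ jk.2 := by
  have h1 : Summable fun j : ℕ => ‖c * P ^ j‖ := by
    simp only [norm_mul, norm_pow]
    exact (summable_geometric_of_lt_one (norm_nonneg P) hP).mul_left _
  have h2 : Summable fun k : ℕ => ‖(Q : ℂ) ^ k‖ := by
    simp only [norm_pow]
    exact summable_geometric_of_lt_one (norm_nonneg Q) hQ
  have := summable_mul_of_summable_norm h1 h2
  exact this.congr fun jk => by ring

/-- The inversion relation for the plain elliptic gamma function. -/
lemma ellGamma_inversion (P Q w : ℂ) (hP : P ≠ 0) (hQ : Q ≠ 0)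
    (hPlt : ‖P‖ < 1) (hQlt : ‖Q‖ < 1) (hw : w ≠ 0)
    (h1 : notPole w P Q) (h2 : notPole (P * Q * w⁻¹) P Q) :
    ellGamma w P Q * ellGamma (P * Q * w⁻¹) P Q = 1 := by
  set a : ℕ × ℕ → ℂ := fun jk => w⁻¹ * P ^ (jk.1 + 1) * Q ^ (jk.2 + 1) with ha_def
  set b : ℕ × ℕ → ℂ := fun jk => w * P ^ jk.1 * Q ^ jk.2 with hb_def
  have hb0 : ∀ jk : ℕ × ℕ, 1 - b jk ≠ 0 := by
    intro ⟨j, k⟩ h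
    apply h1 j k
    have hbjk : b (j, k) = 1 := by linear_combination -h
    have hh : w * P ^ j * Q ^ k = 1 := hbjk
    rw [zpow_neg, zpow_neg, zpow_natCast, zpow_natCast, ← mul_inv]
    exact eq_inv_of_mul_eq_one_right (by linear_combination hh)
  have ha0 : ∀ jk : ℕ × ℕ, 1 - a jk ≠ 0 := by
    intro ⟨j, k⟩ h
    apply h2 j k
    have hajk : a (j, k) = 1 := by linear_combination -h
    have hh : w⁻¹ * P ^ (j + 1) * Q ^ (k + 1) = 1 := hajk
    rw [zpow_neg, zpow_neg, zpow_natCast, zpow_natCast, ← mul_inv]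
    refine eq_inv_of_mul_eq_one_right ?_
    have hw' : w⁻¹ ≠ 0 := inv_ne_zero hw
    field_simp
    rw [pow_succ, pow_succ] at hh
    field_simp at hh
    linear_combination hh
  have hsa : Summable a := by
    have := summable_geom2 (w⁻¹ * P * Q) P Q hPlt hQlt
    exact this.congr fun jk => by simp only [ha_def]; ring
  have hsb : Summable b := summable_geom2 w P Q hPlt hQlt
  -- cofinitely, ‖b jk‖ ≤ 1/2, hence ‖1 - b jk‖ ≥ 1/2
  have hcof : ∀ᶠ jk in Filter.cofinite, ‖b jk‖ ≤ 1 / 2 := by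
    have := hsb.tendsto_cofinite_zero.eventually
      (Metric.ball_mem_nhds (0 : ℂ) (by norm_num : (0:ℝ) < 1/2))
    filter_upwards [this] with jk hjk
    exact le_of_lt (by simpa [dist_eq_norm] using hjk)
  have hquot : Summable fun jk => (b jk - a jk) / (1 - b jk) := by
    refine Summable.of_norm_bounded_eventually (g := fun jk => 2 * (‖b jk‖ + ‖a jk‖))
      ((hsb.norm.add hsa.norm).mul_left 2) ?_
    filter_upwards [hcof] with jk hjk
    have hden : (1 : ℝ) / 2 ≤ ‖1 - b jk‖ := by
      have := norm_sub_norm_le (1 : ℂ) (b jk)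
      simp only [norm_one] at this
      linarith
    rw [norm_div]
    rw [div_le_iff₀ (by linarith : (0:ℝ) < ‖1 - b jk‖)]
    have hnum : ‖b jk - a jk‖ ≤ ‖b jk‖ + ‖a jk‖ := norm_sub_le _ _
    nlinarith [norm_nonneg (a jk), norm_nonneg (b jk)]
  set f : ℕ × ℕ → ℂ := fun jk => (1 - a jk) / (1 - b jk) with hf_def
  set g : ℕ × ℕ → ℂ := fun jk => (1 - b jk) / (1 - a jk) with hg_def
  have hmf : Multipliable f := by
    refine multipliable_of_summable_sub_one
      (fun jk => div_ne_zero (ha0 jk) (hb0 jk)) (hquot.congr fun jk => ?_)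
    show (b jk - a jk) / (1 - b jk) = (1 - a jk) / (1 - b jk) - 1
    rw [div_sub_one (hb0 jk)]
    congr 1
    ring
  have hmg : Multipliable g := by
    have hquot' : Summable fun jk => (a jk - b jk) / (1 - a jk) := by
      have hcofa : ∀ᶠ jk in Filter.cofinite, ‖a jk‖ ≤ 1 / 2 := by
        have := hsa.tendsto_cofinite_zero.eventually
          (Metric.ball_mem_nhds (0 : ℂ) (by norm_num : (0:ℝ) < 1/2))
        filter_upwards [this] with jk hjk
        exact le_of_lt (by simpa [dist_eq_norm] using hjk)
      refine Summable.of_norm_bounded_eventually (g := fun jk => 2 * (‖a jk‖ + ‖b jk‖))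
        ((hsa.norm.add hsb.norm).mul_left 2) ?_
      filter_upwards [hcofa] with jk hjk
      have hden : (1 : ℝ) / 2 ≤ ‖1 - a jk‖ := by
        have := norm_sub_norm_le (1 : ℂ) (a jk)
        simp only [norm_one] at this
        linarith
      rw [norm_div]
      rw [div_le_iff₀ (by linarith : (0:ℝ) < ‖1 - a jk‖)]
      have hnum : ‖a jk - b jk‖ ≤ ‖a jk‖ + ‖b jk‖ := norm_sub_le _ _
      nlinarith [norm_nonneg (a jk), norm_nonneg (b jk)]
    refine multipliable_of_summable_sub_one
      (fun jk => div_ne_zero (hb0 jk) (ha0 jk)) (hquot'.congr fun jk => ?_)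
    show (a jk - b jk) / (1 - a jk) = (1 - b jk) / (1 - a jk) - 1
    rw [div_sub_one (ha0 jk)]
    congr 1
    ring
  have hEf : ellGamma w P Q = ∏' jk, f jk := rfl
  have hEg : ellGamma (P * Q * w⁻¹) P Q = ∏' jk, g jk := by
    unfold ellGamma
    refine tprod_congr fun jk => ?_
    simp only [hg_def, ha_def, hb_def]
    have h1' : (P * Q * w⁻¹)⁻¹ * P ^ (jk.1 + 1) * Q ^ (jk.2 + 1) = w * P ^ jk.1 * Q ^ jk.2 := by
      rw [pow_succ, pow_succ]
      field_simp
    have h2' : P * Q * w⁻¹ * P ^ jk.1 * Q ^ jk.2 = w⁻¹ * P ^ (jk.1 + 1) * Q ^ (jk.2 + 1) := by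
      rw [pow_succ, pow_succ]
      ring
    rw [h1', h2']
  rw [hEf, hEg, ← Multipliable.tprod_mul hmf hmg]
  have : ∀ jk : ℕ × ℕ, f jk * g jk = 1 := by
    intro jk
    rw [hf_def, hg_def, div_mul_div_comm, mul_comm (1 - a jk),
      div_self (mul_ne_zero (hb0 jk) (ha0 jk))]
  rw [tprod_congr this, tprod_one]

/-- The inversion relation for the lens-space elliptic gamma function:
`γ^{(r)}(z,m) γ^{(r)}(pq/z, r−m) = 1`. -/
theorem lensGamma_inversion
    (r : ℕ) (hr : 1 ≤ r) (p q : ℂ) (hp : p ≠ 0) (hq : q ≠ 0)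
    (hp1 : ‖p‖ < 1) (hq1 : ‖q‖ < 1)
    (m : ℤ) (z : ℂ) (hz : z ≠ 0)
    (hreg1 : lensReg r z m p q)
    (hreg2 : lensReg r (p * q * z⁻¹) ((r : ℤ) - m) p q) :
    lensGamma r z m p q * lensGamma r (p * q * z⁻¹) ((r : ℤ) - m) p q = 1 := by
  have hr0 : r ≠ 0 := by omega
  have hpr : (p : ℂ) ^ r ≠ 0 := pow_ne_zero _ hp
  have hqr : (q : ℂ) ^ r ≠ 0 := pow_ne_zero _ hq
  have hpq : p * q ≠ 0 := mul_ne_zero hp hq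
  have hprlt : ‖p ^ r‖ < 1 := by
    rw [norm_pow]; exact pow_lt_one₀ (norm_nonneg p) hp1 hr0
  have hqrlt : ‖q ^ r‖ < 1 := by
    rw [norm_pow]; exact pow_lt_one₀ (norm_nonneg q) hq1 hr0
  have hpqlt : ‖p * q‖ < 1 := by
    rw [norm_mul]
    have h1 := norm_nonneg p
    have h2 := norm_nonneg q
    nlinarith
  have hw1 : z * p ^ m ≠ 0 := mul_ne_zero hz (zpow_ne_zero _ hp)
  have hw2 : z * q ^ ((r : ℤ) - m) ≠ 0 := mul_ne_zero hz (zpow_ne_zero _ hq)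
  -- identify the arguments of the second lensGamma with the inversion points
  have e1 : p * q * z⁻¹ * p ^ ((r : ℤ) - m) = p ^ r * (p * q) * (z * p ^ m)⁻¹ := by
    rw [zpow_sub₀ hp, mul_inv]
    rw [show ((p : ℂ) ^ (r : ℤ)) = p ^ r from zpow_natCast p r]
    ring
  have e2 : p * q * z⁻¹ * q ^ ((r : ℤ) - ((r : ℤ) - m)) = q ^ r * (p * q) * (z * q ^ ((r : ℤ) - m))⁻¹ := by
    rw [show (r : ℤ) - ((r : ℤ) - m) = m by ring, show (m : ℤ) = (r : ℤ) - ((r : ℤ) - m) by ring,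
      zpow_sub₀ hq, mul_inv]
    rw [show ((q : ℂ) ^ (r : ℤ)) = q ^ r from zpow_natCast q r]
    ring
  have h2p : notPole (p ^ r * (p * q) * (z * p ^ m)⁻¹) (p ^ r) (p * q) := by
    rw [← e1]; exact hreg2.1
  have h2q : notPole (q ^ r * (p * q) * (z * q ^ ((r : ℤ) - m))⁻¹) (q ^ r) (p * q) := by
    rw [← e2]; exact hreg2.2
  have key1 := ellGamma_inversion (p ^ r) (p * q) (z * p ^ m) hpr hpq hprlt hpqlt hw1
    hreg1.1 h2p
  have key2 := ellGamma_inversion (q ^ r) (p * q) (z * q ^ ((r : ℤ) - m)) hqr hpq hqrlt hpqlt hw2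
    hreg1.2 h2q
  unfold lensGamma
  rw [e1, e2]
  calc ellGamma (z * p ^ m) (p ^ r) (p * q) * ellGamma (z * q ^ ((r:ℤ) - m)) (q ^ r) (p * q) *
        (ellGamma (p ^ r * (p * q) * (z * p ^ m)⁻¹) (p ^ r) (p * q) *
          ellGamma (q ^ r * (p * q) * (z * q ^ ((r:ℤ) - m))⁻¹) (q ^ r) (p * q))
      = (ellGamma (z * p ^ m) (p ^ r) (p * q) *
          ellGamma (p ^ r * (p * q) * (z * p ^ m)⁻¹) (p ^ r) (p * q)) *
        (ellGamma (z * q ^ ((r:ℤ) - m)) (q ^ r) (p * q) *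
          ellGamma (q ^ r * (p * q) * (z * q ^ ((r:ℤ) - m))⁻¹) (q ^ r) (p * q)) := by ring
    _ = 1 := by rw [key1, key2, one_mul]
end
end

section
/- Let r ≥ 1 be an integer, p, q nonzero complex numbers with |p| < 1, |q| < 1, σ, τ ∈ ℂ with σ² = pq, τ² = p/q and στ = p, and m ∈ ℤ. For every nonzero z ∈ ℂ that is not a pole of either factor, Γ^{(r)}(z, m; p,q) · Γ^{(r)}(pq z^{-1}, −m; p,q) = 1, where both rarefied elliptic gamma functions are formed with the same σ, τ. In particular Γ^{(r)}(σ, 0; p,q) = 1. -/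
open Complex Finset

noncomputable section

namespace RarAux
open Filter

variable {ι : Type*}

lemma hasProd_zero_of_factor_zero {f : ι → ℂ} (i0 : ι) (h : f i0 = 0) : HasProd f 0 := by
  have hev : (fun _ : Finset ι => (0:ℂ)) =ᶠ[atTop] fun s => ∏ i ∈ s, f i := by
    refine eventually_atTop.2 ⟨{i0}, fun s hs => ?_⟩
    exact (Finset.prod_eq_zero (hs (Finset.mem_singleton_self i0)) h).symm
  exact (tendsto_const_nhds.congr' hev : _)

lemma tprod_eq_zero_of_factor_zero {f : ι → ℂ} (i0 : ι) (h : f i0 = 0) : ∏' i, f i = 0 :=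
  (hasProd_zero_of_factor_zero i0 h).tprod_eq

lemma eventually_small {f : ι → ℂ} (h : Summable fun i => f i - 1) :
    ∀ᶠ i in cofinite, ‖f i - 1‖ ≤ 1/2 := by
  have h1 : ∀ᶠ x : ℂ in nhds 0, ‖x‖ ≤ 1/2 := by
    have := Metric.closedBall_mem_nhds (0:ℂ) (by norm_num : (0:ℝ) < 1/2)
    filter_upwards [this] with x hx
    simpa [Metric.mem_closedBall, dist_zero_right] using hx
  exact h.tendsto_cofinite_zero.eventually h1

lemma summable_log {f : ι → ℂ} (h0 : ∀ i, f i ≠ 0) (h : Summable fun i => f i - 1) :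
    Summable fun i => Complex.log (f i) := by
  refine Summable.of_norm_bounded_eventually (g := fun i => 3/2 * ‖f i - 1‖)
    ((summable_norm_iff.mpr h).mul_left _) ?_
  filter_upwards [eventually_small h] with i hi
  have h2 : ‖Complex.log (1 + (f i - 1))‖ ≤ 3/2 * ‖f i - 1‖ :=
    Complex.norm_log_one_add_half_le_self hi
  simpa using h2

lemma hasProd_exp {f : ι → ℂ} (h0 : ∀ i, f i ≠ 0) (h : Summable fun i => f i - 1) :
    HasProd f (Complex.exp (∑' i, Complex.log (f i))) := by
  have h1 := (summable_log h0 h).hasSum.cexp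
  have heq : (cexp ∘ fun i => Complex.log (f i)) = f := funext fun i => Complex.exp_log (h0 i)
  rwa [heq] at h1

lemma multipliable_of_summable_sub_one {f : ι → ℂ} (h : Summable fun i => f i - 1) :
    Multipliable f := by
  by_cases h0 : ∀ i, f i ≠ 0
  · exact (hasProd_exp h0 h).multipliable
  · push_neg at h0
    obtain ⟨i0, hi⟩ := h0
    exact ⟨0, hasProd_zero_of_factor_zero i0 hi⟩

lemma tprod_eq_exp {f : ι → ℂ} (h0 : ∀ i, f i ≠ 0) (h : Summable fun i => f i - 1) :
    ∏' i, f i = Complex.exp (∑' i, Complex.log (f i)) :=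
  (hasProd_exp h0 h).tprod_eq

lemma tprod_ne_zero {f : ι → ℂ} (h0 : ∀ i, f i ≠ 0) (h : Summable fun i => f i - 1) :
    ∏' i, f i ≠ 0 := by
  rw [tprod_eq_exp h0 h]; exact Complex.exp_ne_zero _

lemma summable_inv_sub_one {f : ι → ℂ} (h0 : ∀ i, f i ≠ 0) (h : Summable fun i => f i - 1) :
    Summable fun i => (f i)⁻¹ - 1 := by
  refine Summable.of_norm_bounded_eventually (g := fun i => 2 * ‖f i - 1‖)
    ((summable_norm_iff.mpr h).mul_left _) ?_
  filter_upwards [eventually_small h] with i hi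
  have hfi : (1:ℝ)/2 ≤ ‖f i‖ := by
    have h1 : ‖(1:ℂ)‖ ≤ ‖f i‖ + ‖1 - f i‖ := by
      simpa using norm_add_le (f i) (1 - f i)
    rw [norm_sub_rev] at h1
    simp only [norm_one] at h1
    linarith
  have hrw : (f i)⁻¹ - 1 = (1 - f i) * (f i)⁻¹ := by
    rw [sub_mul, one_mul, mul_inv_cancel₀ (h0 i)]
  rw [hrw, norm_mul, norm_inv, norm_sub_rev]
  have hpos : (0:ℝ) < ‖f i‖ := by positivity
  have hinv : ‖f i‖⁻¹ ≤ 2 := by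
    rw [inv_le_comm₀ hpos (by norm_num)]
    linarith
  have := mul_le_mul_of_nonneg_left hinv (norm_nonneg (f i - 1))
  linarith

lemma tprod_inv_eq {f : ι → ℂ} (h0 : ∀ i, f i ≠ 0) (h : Summable fun i => f i - 1) :
    ∏' i, (f i)⁻¹ = (∏' i, f i)⁻¹ := by
  have m1 : Multipliable f := multipliable_of_summable_sub_one h
  have m2 : Multipliable fun i => (f i)⁻¹ :=
    multipliable_of_summable_sub_one (summable_inv_sub_one h0 h)
  have key : (∏' i, f i) * ∏' i, (f i)⁻¹ = 1 := by
    rw [← Multipliable.tprod_mul m1 m2]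
    have : (fun i => f i * (f i)⁻¹) = fun _ => (1:ℂ) := funext fun i => mul_inv_cancel₀ (h0 i)
    rw [this, tprod_one]
  exact (inv_eq_of_mul_eq_one_right key).symm

lemma tprod_div {f g : ι → ℂ} (hf : Summable fun i => f i - 1) (hg0 : ∀ i, g i ≠ 0)
    (hg : Summable fun i => g i - 1) :
    ∏' i, f i / g i = (∏' i, f i) * (∏' i, g i)⁻¹ := by
  have m1 : Multipliable f := multipliable_of_summable_sub_one hf
  have m2 : Multipliable fun i => (g i)⁻¹ :=
    multipliable_of_summable_sub_one (summable_inv_sub_one hg0 hg)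
  calc ∏' i, f i / g i = ∏' i, f i * (g i)⁻¹ := by
        exact tprod_congr fun i => div_eq_mul_inv _ _
    _ = (∏' i, f i) * ∏' i, (g i)⁻¹ := Multipliable.tprod_mul m1 m2
    _ = (∏' i, f i) * (∏' i, g i)⁻¹ := by rw [tprod_inv_eq hg0 hg]


/-- double Pochhammer-type product -/
def dpoch (c P Q : ℂ) : ℂ := ∏' jk : ℕ × ℕ, (1 - c * P ^ jk.1 * Q ^ jk.2)

def qpoch (c Q : ℂ) : ℂ := ∏' j : ℕ, (1 - c * Q ^ j)

variable {c P Q : ℂ}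

lemma summable_geo1 (hQ : ‖Q‖ < 1) (c : ℂ) : Summable fun k : ℕ => c * Q ^ k := by
  simpa using (summable_geometric_of_norm_lt_one hQ).mul_left c

lemma summable_geo2 (hP : ‖P‖ < 1) (hQ : ‖Q‖ < 1) (c : ℂ) :
    Summable fun jk : ℕ × ℕ => c * P ^ jk.1 * Q ^ jk.2 := by
  have h1 : Summable fun j : ℕ => ‖c * P ^ j‖ := by
    simpa [norm_mul, norm_pow] using
      (summable_geometric_of_lt_one (norm_nonneg P) hP).mul_left ‖c‖
  have h2 : Summable fun k : ℕ => ‖Q ^ k‖ := by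
    simpa [norm_pow] using summable_geometric_of_lt_one (norm_nonneg Q) hQ
  have := summable_mul_of_summable_norm h1 h2
  simpa [mul_assoc] using this

lemma sub_one_1 (hQ : ‖Q‖ < 1) (c : ℂ) :
    Summable fun k : ℕ => (1 - c * Q ^ k) - 1 := by
  simpa using (summable_geo1 hQ c).neg

lemma sub_one_2 (hP : ‖P‖ < 1) (hQ : ‖Q‖ < 1) (c : ℂ) :
    Summable fun jk : ℕ × ℕ => (1 - c * P ^ jk.1 * Q ^ jk.2) - 1 := by
  simpa using (summable_geo2 hP hQ c).neg

lemma dpoch_ne_zero (hP : ‖P‖ < 1) (hQ : ‖Q‖ < 1)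
    (h0 : ∀ j k : ℕ, 1 - c * P ^ j * Q ^ k ≠ 0) : dpoch c P Q ≠ 0 := by
  unfold dpoch
  exact tprod_ne_zero (fun jk => h0 jk.1 jk.2) (sub_one_2 hP hQ c)

lemma qpoch_ne_zero (hQ : ‖Q‖ < 1) (h0 : ∀ k : ℕ, 1 - c * Q ^ k ≠ 0) : qpoch c Q ≠ 0 := by
  unfold qpoch
  exact tprod_ne_zero h0 (sub_one_1 hQ c)

lemma dpoch_eq_exp (hP : ‖P‖ < 1) (hQ : ‖Q‖ < 1)
    (h0 : ∀ j k : ℕ, 1 - c * P ^ j * Q ^ k ≠ 0) :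
    dpoch c P Q = Complex.exp (∑' jk : ℕ × ℕ, Complex.log (1 - c * P ^ jk.1 * Q ^ jk.2)) := by
  unfold dpoch
  exact tprod_eq_exp (fun jk => h0 jk.1 jk.2) (sub_one_2 hP hQ c)

lemma qpoch_eq_exp (hQ : ‖Q‖ < 1) (h0 : ∀ k : ℕ, 1 - c * Q ^ k ≠ 0) :
    qpoch c Q = Complex.exp (∑' k : ℕ, Complex.log (1 - c * Q ^ k)) := by
  unfold qpoch
  exact tprod_eq_exp h0 (sub_one_1 hQ c)

lemma qpoch_shift (hQ : ‖Q‖ < 1) (c : ℂ) : qpoch c Q = (1 - c) * qpoch (c * Q) Q := by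
  have hm : Multipliable fun j : ℕ => 1 - c * Q ^ (j + 1) := by
    refine (multipliable_of_summable_sub_one (f := fun j : ℕ => 1 - (c * Q) * Q ^ j)
      (sub_one_1 hQ (c * Q))).congr fun j => ?_
    ring
  rw [qpoch, tprod_eq_zero_mul' (f := fun j : ℕ => 1 - c * Q ^ j) hm, pow_zero, mul_one]
  congr 1
  exact tprod_congr fun j => by ring

lemma dpoch_shift (hP : ‖P‖ < 1) (hQ : ‖Q‖ < 1) (c : ℂ) :
    dpoch c P Q = qpoch c Q * dpoch (c * P) P Q := by
  by_cases h0 : ∀ j k : ℕ, 1 - c * P ^ j * Q ^ k ≠ 0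
  · have h0q : ∀ k : ℕ, 1 - c * Q ^ k ≠ 0 := fun k => by simpa using h0 0 k
    have h0s : ∀ j k : ℕ, 1 - (c * P) * P ^ j * Q ^ k ≠ 0 := fun j k => by
      rw [show 1 - (c * P) * P ^ j * Q ^ k = 1 - c * P ^ (j + 1) * Q ^ k by ring]
      exact h0 (j + 1) k
    rw [dpoch_eq_exp hP hQ h0, dpoch_eq_exp hP hQ h0s, qpoch_eq_exp hQ h0q, ← Complex.exp_add]
    congr 1
    set L : ℕ × ℕ → ℂ := fun jk => Complex.log (1 - c * P ^ jk.1 * Q ^ jk.2) with hL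
    have hs : Summable L :=
      summable_log (fun jk => h0 jk.1 jk.2) (sub_one_2 hP hQ c)
    have hfib : ∀ j : ℕ, Summable fun k : ℕ => L (j, k) := fun j => hs.prod_factor j
    have hshift : Summable fun jk : ℕ × ℕ => L (jk.1 + 1, jk.2) := by
      have hinj : Function.Injective (fun jk : ℕ × ℕ => (jk.1 + 1, jk.2)) := by
        intro a b hab
        simp only [Prod.ext_iff] at hab ⊢
        omega
      exact hs.comp_injective hinj
    have hg : Summable fun j : ℕ => ∑' k : ℕ, L (j, k) := Summable.prod hs
    have hg1 : Summable fun j : ℕ => ∑' k : ℕ, L (j + 1, k) :=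
      hg.comp_injective (add_left_injective 1)
    calc ∑' jk : ℕ × ℕ, L jk = ∑' j, ∑' k, L (j, k) := Summable.tsum_prod' hs hfib
      _ = (∑' k, L (0, k)) + ∑' j, ∑' k, L (j + 1, k) :=
          tsum_eq_zero_add' (f := fun j : ℕ => ∑' k : ℕ, L (j, k)) hg1
      _ = (∑' k : ℕ, Complex.log (1 - c * Q ^ k))
          + ∑' jk : ℕ × ℕ, Complex.log (1 - (c * P) * P ^ jk.1 * Q ^ jk.2) := by
          congr 1
          · exact tsum_congr fun k => by simp [hL]
          · rw [show (fun jk : ℕ × ℕ => Complex.log (1 - (c * P) * P ^ jk.1 * Q ^ jk.2))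
              = fun jk : ℕ × ℕ => L (jk.1 + 1, jk.2) from funext fun jk => by
                simp only [hL]
                rw [show 1 - (c * P) * P ^ jk.1 * Q ^ jk.2
                  = 1 - c * P ^ (jk.1 + 1) * Q ^ jk.2 by ring]]
            exact (Summable.tsum_prod' hshift fun j => hfib (j + 1)).symm
  · push_neg at h0
    obtain ⟨j, k, h⟩ := h0
    rw [show dpoch c P Q = 0 from tprod_eq_zero_of_factor_zero (j, k) h]
    cases j with
    | zero =>
      rw [show qpoch c Q = 0 from tprod_eq_zero_of_factor_zero k (by simpa using h), zero_mul]
    | succ n =>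
      rw [show dpoch (c * P) P Q = 0 from tprod_eq_zero_of_factor_zero (n, k) (by
        rw [show 1 - (c * P) * P ^ n * Q ^ k = 1 - c * P ^ (n + 1) * Q ^ k by ring]; exact h),
        mul_zero]



lemma qPochInf_eq (c Q : ℂ) : qPochInf c Q = qpoch c Q := rfl

variable {c P Q w u : ℂ}

lemma ellGamma_eq_div (hP : ‖P‖ < 1) (hQ : ‖Q‖ < 1) {z : ℂ}
    (h0 : ∀ j k : ℕ, 1 - z * P ^ j * Q ^ k ≠ 0) :
    ellGamma z P Q = dpoch (z⁻¹ * P * Q) P Q * (dpoch z P Q)⁻¹ := by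
  unfold ellGamma dpoch
  rw [tprod_congr (g := fun jk : ℕ × ℕ =>
      (1 - (z⁻¹ * P * Q) * P ^ jk.1 * Q ^ jk.2) / (1 - z * P ^ jk.1 * Q ^ jk.2))
    (fun jk => by rw [show 1 - z⁻¹ * P ^ (jk.1 + 1) * Q ^ (jk.2 + 1)
      = 1 - (z⁻¹ * P * Q) * P ^ jk.1 * Q ^ jk.2 by ring])]
  exact tprod_div (sub_one_2 hP hQ _) (fun jk => h0 jk.1 jk.2) (sub_one_2 hP hQ z)

lemma helperA (a b c d : ℂ) (ha : a ≠ 0) (hb : b ≠ 0) (hc : c ≠ 0) (hd : d ≠ 0) :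
    a * (c * b)⁻¹ * (b * (d * a)⁻¹) * (c * d) = 1 := by
  field_simp

lemma helperB (a b q1 q2 : ℂ) (ha : a ≠ 0) (hb : b ≠ 0) :
    q1 * a * b⁻¹ * (q2 * b * a⁻¹) = q2 * q1 := by
  field_simp

lemma theta0_eq (y Q : ℂ) : theta0 y Q = qpoch y Q * qpoch (Q * y⁻¹) Q := rfl

lemma theta_shift (hQ0 : Q ≠ 0) (hQ : ‖Q‖ < 1) {y : ℂ} (hy : y ≠ 0) :
    theta0 (Q * y) Q = -y⁻¹ * theta0 y Q := by
  rw [theta0_eq, theta0_eq]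
  rw [show Q * (Q * y)⁻¹ = y⁻¹ by field_simp]
  rw [qpoch_shift hQ y⁻¹, qpoch_shift hQ y]
  rw [show y⁻¹ * Q = Q * y⁻¹ by ring, show y * Q = Q * y by ring]
  have h1 : (1 : ℂ) - y⁻¹ = -y⁻¹ * (1 - y) := by
    field_simp
    ring
  rw [h1]
  ring

/-- the `A`-type pair: `Γ(w;P,Q) Γ(Qw⁻¹;P,Q) θ(w;Q) = 1`. -/
lemma pairA (hP : ‖P‖ < 1) (hQ : ‖Q‖ < 1) (hQ0 : Q ≠ 0) (hw : w ≠ 0)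
    (np1 : ∀ j k : ℕ, 1 - w * P ^ j * Q ^ k ≠ 0)
    (np2 : ∀ j k : ℕ, 1 - (Q * w⁻¹) * P ^ j * Q ^ k ≠ 0) :
    ellGamma w P Q * ellGamma (Q * w⁻¹) P Q * theta0 w Q = 1 ∧ theta0 w Q ≠ 0 := by
  have npA : ∀ j k : ℕ, 1 - (w * P) * P ^ j * Q ^ k ≠ 0 := fun j k => by
    rw [show 1 - (w * P) * P ^ j * Q ^ k = 1 - w * P ^ (j + 1) * Q ^ k by ring]
    exact np1 (j + 1) k
  have npB : ∀ j k : ℕ, 1 - ((Q * w⁻¹) * P) * P ^ j * Q ^ k ≠ 0 := fun j k => by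
    rw [show 1 - ((Q * w⁻¹) * P) * P ^ j * Q ^ k = 1 - (Q * w⁻¹) * P ^ (j + 1) * Q ^ k by ring]
    exact np2 (j + 1) k
  have e1 := ellGamma_eq_div hP hQ np1
  have e2 := ellGamma_eq_div hP hQ np2
  rw [show w⁻¹ * P * Q = ((Q * w⁻¹) * P) by ring] at e1
  rw [show (Q * w⁻¹)⁻¹ * P * Q = w * P by rw [mul_inv, inv_inv]; field_simp] at e2
  have s1 := dpoch_shift hP hQ w
  have s2 := dpoch_shift hP hQ (Q * w⁻¹)
  have n1 : dpoch (w * P) P Q ≠ 0 := dpoch_ne_zero hP hQ npA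
  have n2 : dpoch ((Q * w⁻¹) * P) P Q ≠ 0 := dpoch_ne_zero hP hQ npB
  have nq1 : qpoch w Q ≠ 0 := qpoch_ne_zero hQ (fun k => by simpa using np1 0 k)
  have nq2 : qpoch (Q * w⁻¹) Q ≠ 0 := qpoch_ne_zero hQ (fun k => by simpa using np2 0 k)
  constructor
  · rw [e1, e2, theta0_eq, s1, s2]
    exact helperA _ _ _ _ n2 n1 nq1 nq2
  · rw [theta0_eq]
    exact mul_ne_zero nq1 nq2

/-- the `B`-type pair: `Γ(u;P,Q) Γ(P²Qu⁻¹;P,Q) = θ(u/P;Q)`. -/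
lemma pairB (hP : ‖P‖ < 1) (hQ : ‖Q‖ < 1) (hP0 : P ≠ 0) (hQ0 : Q ≠ 0) (hu : u ≠ 0)
    (np1 : ∀ j k : ℕ, 1 - u * P ^ j * Q ^ k ≠ 0)
    (np2 : ∀ j k : ℕ, 1 - (P ^ 2 * Q * u⁻¹) * P ^ j * Q ^ k ≠ 0) :
    ellGamma u P Q * ellGamma (P ^ 2 * Q * u⁻¹) P Q = theta0 (u * P⁻¹) Q := by
  have e1 := ellGamma_eq_div hP hQ np1
  have e2 := ellGamma_eq_div hP hQ np2
  rw [show (P ^ 2 * Q * u⁻¹)⁻¹ * P * Q = u * P⁻¹ by field_simp] at e2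
  have s1 : dpoch (u * P⁻¹) P Q = qpoch (u * P⁻¹) Q * dpoch u P Q := by
    have := dpoch_shift hP hQ (u * P⁻¹)
    rwa [show u * P⁻¹ * P = u by field_simp] at this
  have s2 : dpoch (u⁻¹ * P * Q) P Q = qpoch (u⁻¹ * P * Q) Q * dpoch (P ^ 2 * Q * u⁻¹) P Q := by
    have := dpoch_shift hP hQ (u⁻¹ * P * Q)
    rwa [show u⁻¹ * P * Q * P = P ^ 2 * Q * u⁻¹ by ring] at this
  have n1 : dpoch u P Q ≠ 0 := dpoch_ne_zero hP hQ np1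
  have n2 : dpoch (P ^ 2 * Q * u⁻¹) P Q ≠ 0 := dpoch_ne_zero hP hQ np2
  have hθ : theta0 (u * P⁻¹) Q = qpoch (u * P⁻¹) Q * qpoch (u⁻¹ * P * Q) Q := by
    rw [theta0_eq, show Q * (u * P⁻¹)⁻¹ = u⁻¹ * P * Q by field_simp]
  rw [e1, e2, s2, s1, hθ]
  exact helperB _ _ _ _ n2 n1


/-! ### Integer exponent helpers -/

lemma two_dvd_helper (m : ℤ) : ∃ k : ℤ, m * (m - 1) = 2 * k := by
  obtain ⟨t, ht⟩ := Int.even_mul_succ_self (m - 1)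
  exact ⟨t, by linear_combination ht⟩

lemma six_dvd_helper (m : ℤ) : ∃ k : ℤ, m * (m - 1) * (2 * m - 1) = 6 * k := by
  have H : ∀ n : ℤ, (6:ℤ) ∣ n * (n - 1) * (2 * n - 1) := by
    intro n
    induction n using Int.induction_on with
    | zero => simp
    | succ n ih =>
        have : ((n:ℤ) + 1) * ((n + 1) - 1) * (2 * ((n:ℤ) + 1) - 1)
            = (n:ℤ) * ((n:ℤ) - 1) * (2 * (n:ℤ) - 1) + 6 * (n:ℤ) ^ 2 := by ring
        rw [this]
        exact dvd_add ih ⟨(n:ℤ) ^ 2, rfl⟩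
    | pred n ih =>
        have : (-(n:ℤ) - 1) * ((-(n:ℤ) - 1) - 1) * (2 * (-(n:ℤ) - 1) - 1)
            = (-(n:ℤ)) * ((-(n:ℤ)) - 1) * (2 * (-(n:ℤ)) - 1) - 6 * ((-(n:ℤ)) - 1) ^ 2 := by ring
        rw [this]
        exact dvd_sub ih ⟨((-(n:ℤ)) - 1) ^ 2, rfl⟩
  obtain ⟨k, hk⟩ := H m
  exact ⟨k, hk⟩

lemma half_succ (m : ℤ) {k : ℤ} (hk : m * (m - 1) = 2 * k) :
    (m + 1) * ((m + 1) - 1) / 2 = m * (m - 1) / 2 + m := by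
  have h1 : (m + 1) * ((m + 1) - 1) = 2 * (k + m) := by linear_combination hk
  rw [h1, hk, Int.mul_ediv_cancel_left _ (by norm_num), Int.mul_ediv_cancel_left _ (by norm_num)]

lemma half_pred (m : ℤ) {k : ℤ} (hk : m * (m - 1) = 2 * k) :
    (m - 1) * ((m - 1) - 1) / 2 = m * (m - 1) / 2 - (m - 1) := by
  have h1 : (m - 1) * ((m - 1) - 1) = 2 * (k - (m - 1)) := by linear_combination hk
  rw [h1, hk, Int.mul_ediv_cancel_left _ (by norm_num), Int.mul_ediv_cancel_left _ (by norm_num)]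

/-! ### Theta quasi-periodicity -/

lemma theta_qp {Q : ℂ} (hQ0 : Q ≠ 0) (hQ : ‖Q‖ < 1) {x : ℂ} (hx : x ≠ 0) (m : ℤ) :
    theta0 (Q ^ m * x) Q
      = (-1 : ℂ) ^ m * x ^ (-m) * Q ^ (-(m * (m - 1) / 2)) * theta0 x Q := by
  have hne : (-1 : ℂ) ≠ 0 := by norm_num
  have step_up : ∀ m : ℤ,
      theta0 (Q ^ m * x) Q
        = (-1 : ℂ) ^ m * x ^ (-m) * Q ^ (-(m * (m - 1) / 2)) * theta0 x Q →
      theta0 (Q ^ (m + 1) * x) Q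
        = (-1 : ℂ) ^ (m + 1) * x ^ (-(m + 1)) * Q ^ (-((m + 1) * ((m + 1) - 1) / 2)) * theta0 x Q := by
    intro m ih
    obtain ⟨k, hk⟩ := two_dvd_helper m
    have hQx : Q ^ m * x ≠ 0 := mul_ne_zero (zpow_ne_zero _ hQ0) hx
    have h1 : Q ^ (m + 1) * x = Q * (Q ^ m * x) := by
      rw [zpow_add_one₀ hQ0]; ring
    rw [h1, theta_shift hQ0 hQ hQx, ih, half_succ m hk]
    simp only [neg_add, zpow_add₀ hne, zpow_add₀ hx, zpow_add₀ hQ0, zpow_neg, zpow_one,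
      mul_inv, inv_inv]
    ring
  have step_down : ∀ m : ℤ,
      theta0 (Q ^ m * x) Q
        = (-1 : ℂ) ^ m * x ^ (-m) * Q ^ (-(m * (m - 1) / 2)) * theta0 x Q →
      theta0 (Q ^ (m - 1) * x) Q
        = (-1 : ℂ) ^ (m - 1) * x ^ (-(m - 1)) * Q ^ (-((m - 1) * ((m - 1) - 1) / 2)) * theta0 x Q := by
    intro m ih
    obtain ⟨k, hk⟩ := two_dvd_helper m
    have hQx : Q ^ (m - 1) * x ≠ 0 := mul_ne_zero (zpow_ne_zero _ hQ0) hx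
    have h1 : Q ^ m * x = Q * (Q ^ (m - 1) * x) := by
      rw [show m = (m - 1) + 1 by ring, zpow_add_one₀ hQ0]; ring_nf
    rw [h1, theta_shift hQ0 hQ hQx] at ih
    have h2 : theta0 (Q ^ (m - 1) * x) Q
        = (-(Q ^ (m - 1) * x)⁻¹)⁻¹ * ((-1 : ℂ) ^ m * x ^ (-m) * Q ^ (-(m * (m - 1) / 2)) * theta0 x Q) := by
      rw [← ih]
      field_simp
    rw [h2, half_pred m hk]
    simp only [neg_sub, sub_eq_add_neg, zpow_add₀ hne, zpow_add₀ hx, zpow_add₀ hQ0, zpow_neg,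
      zpow_one, mul_inv, inv_inv, neg_add, neg_neg]
    ring_nf
    simp only [inv_inv]
    ring
  induction m using Int.induction_on with
  | zero => norm_num
  | succ n ih => exact step_up n ih
  | pred n ih => exact step_down (-(n:ℤ)) ih



lemma notPole_factors {w P Q : ℂ} (h : notPole w P Q) :
    ∀ j k : ℕ, 1 - w * P ^ j * Q ^ k ≠ 0 := by
  intro j k hc
  apply h j k
  have h1 : w * (P ^ j * Q ^ k) = 1 := by
    rw [← mul_assoc]
    linear_combination -hc
  rw [zpow_neg, zpow_neg, zpow_natCast, zpow_natCast, ← mul_inv]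
  exact eq_inv_of_mul_eq_one_left h1

lemma fac_ne {c P Q : ℂ} (hc : ‖c‖ < 1) (hP : ‖P‖ ≤ 1) (hQ : ‖Q‖ ≤ 1) :
    ∀ j k : ℕ, 1 - c * P ^ j * Q ^ k ≠ 0 := by
  intro j k hzero
  have h1 : c * P ^ j * Q ^ k = 1 := by linear_combination -hzero
  have h2 : ‖c * P ^ j * Q ^ k‖ < 1 := by
    rw [norm_mul, norm_mul, norm_pow, norm_pow]
    have hpj : ‖P‖ ^ j ≤ 1 := pow_le_one₀ (norm_nonneg _) hP
    have hqk : ‖Q‖ ^ k ≤ 1 := pow_le_one₀ (norm_nonneg _) hQ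
    have h3 : ‖c‖ * ‖P‖ ^ j ≤ ‖c‖ := mul_le_of_le_one_right (norm_nonneg c) hpj
    have h4 : ‖c‖ * ‖P‖ ^ j * ‖Q‖ ^ k ≤ ‖c‖ * ‖P‖ ^ j :=
      mul_le_of_le_one_right (by positivity) hqk
    linarith
  rw [h1] at h2
  simp at h2

lemma cancel_zpow {a : ℂ} (ha : a ≠ 0) (s : ℤ) : a ^ s * a ^ (-s) = 1 := by
  rw [← zpow_add₀ ha]; simp

lemma neg_one_sq_zpow (m : ℤ) : (-1 : ℂ) ^ m * (-1 : ℂ) ^ m = 1 := by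
  rw [← zpow_add₀ (by norm_num : (-1:ℂ) ≠ 0), show m + m = 2 * m by ring, zpow_mul]
  norm_num

lemma neg_one_zpow_neg (m : ℤ) : (-1 : ℂ) ^ (-m) = (-1 : ℂ) ^ m := by
  rw [zpow_neg]
  exact inv_eq_of_mul_eq_one_right (neg_one_sq_zpow m)

lemma final_scalar {p q σ τ z : ℂ} (hp : p ≠ 0) (hq : q ≠ 0) (hz : z ≠ 0)
    (hσ0 : σ ≠ 0) (hτ0 : τ ≠ 0) (hσ : σ ^ 2 = p * q) (hστ : σ * τ = p)
    {m k1 k2 k3 k4 : ℤ} (h3 : m * (m - 1) = 2 * k3) (hk4 : k4 = k3 + m)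
    (hk12 : k1 + k2 = -(m * m)) :
    (-z / σ) ^ k3 * (-(p * q * z⁻¹) / σ) ^ k4 * (τ ^ k1 * τ ^ k2)
      * ((-1 : ℂ) ^ m * (z * q ^ (-m : ℤ)) ^ (-m) * (p * q) ^ (-k3))⁻¹ = 1 := by
  have hA0 : -z / σ ≠ 0 := div_ne_zero (neg_ne_zero.mpr hz) hσ0
  have hτq : q * τ = σ := by
    apply mul_left_cancel₀ hσ0
    rw [show σ * (q * τ) = σ * τ * q by ring, hστ, ← hσ]
    ring
  have hBA : -(p * q * z⁻¹) / σ = (-z / σ)⁻¹ := by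
    refine eq_inv_of_mul_eq_one_left ?_
    rw [← hσ]
    field_simp
  have F1 : (-z / σ) ^ k3 * (-(p * q * z⁻¹) / σ) ^ k4 = (-z / σ) ^ (-m) := by
    rw [hBA, inv_zpow, ← zpow_neg, ← zpow_add₀ hA0, show k3 + -k4 = -m by omega]
  have F2 : τ ^ k1 * τ ^ k2 = τ ^ (-(m * m)) := by
    rw [← zpow_add₀ hτ0, hk12]
  have F3 : ((-1 : ℂ) ^ m * (z * q ^ (-m : ℤ)) ^ (-m) * (p * q) ^ (-k3))⁻¹
      = (-1 : ℂ) ^ m * (z * q ^ (-m : ℤ)) ^ m * (p * q) ^ k3 := by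
    rw [mul_inv, mul_inv, ← zpow_neg, ← zpow_neg, ← zpow_neg, neg_neg, neg_neg,
      neg_one_zpow_neg]
  have hx_m : (z * q ^ (-m : ℤ)) ^ m = z ^ m * q ^ (-(m * m)) := by
    rw [mul_zpow, ← zpow_mul, show (-m) * m = -(m * m) by ring]
  have hA_m : (-z / σ) ^ (-m) = (-1 : ℂ) ^ m * z ^ (-m) * σ ^ m := by
    rw [show -z / σ = -1 * z * σ⁻¹ by ring, mul_zpow, mul_zpow, inv_zpow, ← zpow_neg,
      neg_neg, neg_one_zpow_neg]
  have hpq : (p * q) ^ k3 = σ ^ (m * m) * σ ^ (-m) := by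
    rw [← hσ, ← zpow_natCast σ 2, ← zpow_mul, ← zpow_add₀ hσ0,
      show ((2 : ℕ) : ℤ) * k3 = m * m + -m by linear_combination -h3]
  rw [F1, F2, F3, hx_m, hA_m, hpq]
  have hqt : q ^ (-(m * m)) * τ ^ (-(m * m)) = σ ^ (-(m * m)) := by
    rw [← mul_zpow, hτq]
  calc (-1 : ℂ) ^ m * z ^ (-m) * σ ^ m * τ ^ (-(m * m))
        * ((-1 : ℂ) ^ m * (z ^ m * q ^ (-(m * m))) * (σ ^ (m * m) * σ ^ (-m)))
      = ((-1 : ℂ) ^ m * (-1 : ℂ) ^ m) * (z ^ (-m) * z ^ (-(-m))) * (σ ^ m * σ ^ (-m))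
        * ((q ^ (-(m * m)) * τ ^ (-(m * m))) * σ ^ (m * m)) := by
        rw [neg_neg]; ring
    _ = 1 := by
        rw [neg_one_sq_zpow, cancel_zpow hz, cancel_zpow hσ0, hqt, ← zpow_add₀ hσ0]
        simp


lemma helperC (a b c : ℂ) (ha : a ≠ 0) (hb : b ≠ 0) (hc : c ≠ 0) :
    a * (c * a)⁻¹ * (c * b * b⁻¹) = 1 := by
  field_simp

end RarAux

open RarAux

/-- The inversion relation for the rarefied elliptic gamma function:
`Γ^{(r)}(z,m) Γ^{(r)}(pq/z, −m) = 1`, and the normalization `Γ^{(r)}(σ,0) = 1`. -/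
theorem rarGamma_inversion_and_normalization
    (r : ℕ) (hr : 1 ≤ r) (p q σ τ : ℂ) (hp : p ≠ 0) (hq : q ≠ 0)
    (hp1 : ‖p‖ < 1) (hq1 : ‖q‖ < 1)
    (hσ : σ ^ 2 = p * q) (hτ : τ ^ 2 = p / q) (hστ : σ * τ = p)
    (m : ℤ) (z : ℂ) (hz : z ≠ 0)
    (hreg1 : lensReg r z m p q)
    (hreg2 : lensReg r (p * q * z⁻¹) (-m) p q) :
    rarGamma r z m p q σ τ * rarGamma r (p * q * z⁻¹) (-m) p q σ τ = 1 ∧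
      rarGamma r σ 0 p q σ τ = 1 := by
  have hp' : ‖p‖ < 1 := by exact hp1
  have hq' : ‖q‖ < 1 := by exact hq1
  have hσ0 : σ ≠ 0 := by
    intro h
    rw [h] at hσ
    exact mul_ne_zero hp hq (by simpa using hσ.symm)
  have hτ0 : τ ≠ 0 := by
    intro h
    rw [h, mul_zero] at hστ
    exact hp hστ.symm
  have hQ0 : p * q ≠ 0 := mul_ne_zero hp hq
  have hP0 : (p : ℂ) ^ r ≠ 0 := pow_ne_zero _ hp
  have hP0' : (q : ℂ) ^ r ≠ 0 := pow_ne_zero _ hq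
  have hr0 : r ≠ 0 := by omega
  have hPn : ‖(p : ℂ) ^ r‖ < 1 := by
    rw [norm_pow]; exact pow_lt_one₀ (norm_nonneg _) hp' hr0
  have hPn' : ‖(q : ℂ) ^ r‖ < 1 := by
    rw [norm_pow]; exact pow_lt_one₀ (norm_nonneg _) hq' hr0
  have hQn : ‖p * q‖ < 1 := by
    rw [norm_mul]; nlinarith [norm_nonneg p, norm_nonneg q]
  constructor
  · -- inversion
    have hw0 : z * p ^ m ≠ 0 := mul_ne_zero hz (zpow_ne_zero _ hp)
    have hu0 : z * q ^ ((r : ℤ) - m) ≠ 0 := mul_ne_zero hz (zpow_ne_zero _ hq)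
    have hx0 : z * q ^ (-m : ℤ) ≠ 0 := mul_ne_zero hz (zpow_ne_zero _ hq)
    have harg1 : p * q * z⁻¹ * p ^ (-m : ℤ) = p * q * (z * p ^ m)⁻¹ := by
      rw [mul_inv, zpow_neg]
      ring
    have harg2 : p * q * z⁻¹ * q ^ ((r : ℤ) - -m)
        = ((q : ℂ) ^ r) ^ 2 * (p * q) * (z * q ^ ((r : ℤ) - m))⁻¹ := by
      rw [mul_inv, ← zpow_neg, ← pow_mul, ← zpow_natCast q (r * 2),
        show ((r * 2 : ℕ) : ℤ) = 2 * (r : ℤ) by push_cast; ring,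
        show (r : ℤ) - -m = 2 * (r : ℤ) + (-((r : ℤ) - m)) by ring, zpow_add₀ hq]
      ring
    have harg3 : z * q ^ ((r : ℤ) - m) * ((q : ℂ) ^ r)⁻¹ = z * q ^ (-m : ℤ) := by
      rw [← zpow_natCast q r, ← zpow_neg, mul_assoc, ← zpow_add₀ hq,
        show (r : ℤ) - m + -(r : ℤ) = -m by ring]
    have harg4 : (p * q) ^ m * (z * q ^ (-m : ℤ)) = z * p ^ m := by
      rw [mul_zpow, show p ^ m * q ^ m * (z * q ^ (-m : ℤ))
        = z * p ^ m * (q ^ m * q ^ (-m : ℤ)) by ring, cancel_zpow hq m, mul_one]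
    obtain ⟨h11, h12⟩ := hreg1
    obtain ⟨h21, h22⟩ := hreg2
    rw [harg1] at h21
    rw [harg2] at h22
    have np1A := notPole_factors h11
    have np2A := notPole_factors h21
    have np1B := notPole_factors h12
    have np2B := notPole_factors h22
    have HA := pairA hPn hQn hQ0 hw0 np1A np2A
    have HB := pairB hPn' hQn hP0' hQ0 hu0 np1B np2B
    rw [harg3] at HB
    obtain ⟨k3, h3⟩ := two_dvd_helper m
    obtain ⟨k4, h4⟩ := two_dvd_helper (-m)
    obtain ⟨k1, h1'⟩ := six_dvd_helper m
    obtain ⟨k2, h2'⟩ := six_dvd_helper (-m)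
    have hk3 : m * (m - 1) / 2 = k3 := by
      rw [h3]; exact Int.mul_ediv_cancel_left _ (by norm_num)
    have hk4 : -m * (-m - 1) / 2 = k4 := by
      rw [show -m * (-m - 1) = 2 * k4 from h4]
      exact Int.mul_ediv_cancel_left _ (by norm_num)
    have hk1 : m * (m - 1) * (2 * m - 1) / 6 = k1 := by
      rw [h1']; exact Int.mul_ediv_cancel_left _ (by norm_num)
    have hk2 : -m * (-m - 1) * (2 * -m - 1) / 6 = k2 := by
      rw [show -m * (-m - 1) * (2 * -m - 1) = 6 * k2 from h2']
      exact Int.mul_ediv_cancel_left _ (by norm_num)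
    have hk43 : k4 = k3 + m := by nlinarith [h3, h4]
    have hk12 : k1 + k2 = -(m * m) := by nlinarith [h1', h2']
    have hqp := theta_qp hQ0 hQn hx0 m
    rw [harg4, hk3] at hqp
    have hθw0 := HA.2
    have hθx0 : theta0 (z * q ^ (-m : ℤ)) (p * q) ≠ 0 := by
      intro h
      rw [h, mul_zero] at hqp
      exact hθw0 hqp
    have h_eAA : ellGamma (z * p ^ m) (p ^ r) (p * q)
          * ellGamma (p * q * (z * p ^ m)⁻¹) (p ^ r) (p * q)
        = (theta0 (z * p ^ m) (p * q))⁻¹ := eq_inv_of_mul_eq_one_left HA.1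
    have hratio : (theta0 (z * p ^ m) (p * q))⁻¹ * theta0 (z * q ^ (-m : ℤ)) (p * q)
        = ((-1 : ℂ) ^ m * (z * q ^ (-m : ℤ)) ^ (-m) * (p * q) ^ (-k3))⁻¹ := by
      rw [hqp, mul_inv, mul_assoc, inv_mul_cancel₀ hθx0, mul_one]
    rw [rarGamma, rarGamma, lensGamma, lensGamma, hk3, hk1, hk4, hk2, harg1, harg2]
    calc (-z / σ) ^ k3 * τ ^ k1
          * (ellGamma (z * p ^ m) (p ^ r) (p * q)
            * ellGamma (z * q ^ ((r : ℤ) - m)) (q ^ r) (p * q))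
          * ((-(p * q * z⁻¹) / σ) ^ k4 * τ ^ k2
            * (ellGamma (p * q * (z * p ^ m)⁻¹) (p ^ r) (p * q)
              * ellGamma (((q : ℂ) ^ r) ^ 2 * (p * q) * (z * q ^ ((r : ℤ) - m))⁻¹)
                  (q ^ r) (p * q)))
        = (-z / σ) ^ k3 * (-(p * q * z⁻¹) / σ) ^ k4 * (τ ^ k1 * τ ^ k2)
          * ((ellGamma (z * p ^ m) (p ^ r) (p * q)
              * ellGamma (p * q * (z * p ^ m)⁻¹) (p ^ r) (p * q))
            * (ellGamma (z * q ^ ((r : ℤ) - m)) (q ^ r) (p * q)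
              * ellGamma (((q : ℂ) ^ r) ^ 2 * (p * q) * (z * q ^ ((r : ℤ) - m))⁻¹)
                  (q ^ r) (p * q))) := by ring
      _ = (-z / σ) ^ k3 * (-(p * q * z⁻¹) / σ) ^ k4 * (τ ^ k1 * τ ^ k2)
          * ((theta0 (z * p ^ m) (p * q))⁻¹ * theta0 (z * q ^ (-m : ℤ)) (p * q)) := by
            rw [h_eAA, HB]
      _ = (-z / σ) ^ k3 * (-(p * q * z⁻¹) / σ) ^ k4 * (τ ^ k1 * τ ^ k2)
          * ((-1 : ℂ) ^ m * (z * q ^ (-m : ℤ)) ^ (-m) * (p * q) ^ (-k3))⁻¹ := by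
            rw [hratio]
      _ = 1 := final_scalar hp hq hz hσ0 hτ0 hσ hστ h3 hk43 hk12
  · -- normalization
    have hσn : ‖σ‖ < 1 := by
      have h2 : ‖σ‖ ^ 2 < 1 := by
        rw [← norm_pow, hσ, norm_mul]
        nlinarith [norm_nonneg p, norm_nonneg q]
      nlinarith [norm_nonneg σ]
    have hPle : ‖(p : ℂ) ^ r‖ ≤ 1 := le_of_lt hPn
    have hPle' : ‖(q : ℂ) ^ r‖ ≤ 1 := le_of_lt hPn'
    have hQle : ‖p * q‖ ≤ 1 := le_of_lt hQn
    have hσp : ‖σ * p ^ r‖ < 1 := by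
      rw [norm_mul, norm_pow]
      have h5 : ‖p‖ ^ r ≤ 1 := pow_le_one₀ (norm_nonneg _) hp'.le
      nlinarith [norm_nonneg σ, pow_nonneg (norm_nonneg p) r]
    have hσq : ‖σ * q ^ r‖ < 1 := by
      rw [norm_mul, norm_pow]
      have h5 : ‖q‖ ^ r ≤ 1 := pow_le_one₀ (norm_nonneg _) hq'.le
      nlinarith [norm_nonneg σ, pow_nonneg (norm_nonneg q) r]
    have facA := fac_ne hσn hPle hQle
    have facAP := fac_ne hσp hPle hQle
    have facB := fac_ne hσq hPle' hQle
    have e1 := ellGamma_eq_div hPn hQn facA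
    rw [show σ⁻¹ * (p : ℂ) ^ r * (p * q) = σ * p ^ r by
      rw [← hσ]; field_simp] at e1
    have s1 := dpoch_shift hPn hQn σ
    have e2 := ellGamma_eq_div hPn' hQn facB
    rw [show (σ * (q : ℂ) ^ r)⁻¹ * (q : ℂ) ^ r * (p * q) = σ by
      rw [← hσ]; field_simp] at e2
    have s2 := dpoch_shift hPn' hQn σ
    rw [s2] at e2
    have nA : dpoch (σ * p ^ r) (p ^ r) (p * q) ≠ 0 := dpoch_ne_zero hPn hQn facAP
    have nB : dpoch (σ * q ^ r) (q ^ r) (p * q) ≠ 0 := dpoch_ne_zero hPn' hQn facB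
    have nq : qpoch σ (p * q) ≠ 0 := qpoch_ne_zero hQn (fun k => by simpa using facA 0 k)
    rw [rarGamma, lensGamma]
    norm_num
    rw [e1, s1, e2]
    exact helperC _ _ _ nA nB nq
end
end

section
/- Let r ≥ 1 be an integer, p, q nonzero complex numbers with |p| < 1, |q| < 1, and let m ∈ ℤ with 0 ≤ m ≤ r. For every nonzero z ∈ ℂ not a pole of either side, γ^{(r)}(z, m; p,q) = ∏_{k=0}^{m−1} Γ(q^{r−m} z (pq)^k; p^r, q^r) · ∏_{k=0}^{r−m−1} Γ(p^m z (pq)^k; p^r, q^r). -/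
open Complex Finset


lemma hasProdZero {ι : Type*} {f : ι → ℂ} (h : ∃ i, f i = 0) : HasProd f 0 := by
  obtain ⟨i0, hi0⟩ := h
  have hev : ∀ᶠ s : Finset ι in Filter.atTop, ∏ i ∈ s, f i = 0 := by
    filter_upwards [Filter.eventually_ge_atTop ({i0} : Finset ι)] with s hs
    exact Finset.prod_eq_zero (hs (Finset.mem_singleton_self i0)) hi0
  exact Filter.Tendsto.congr' (hev.mono fun s hs => hs.symm) tendsto_const_nhds

lemma multipliableOneAdd {ι : Type*} (f : ι → ℂ) (hf : Summable f) :
    Multipliable fun i => 1 + f i := by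
  by_cases h : ∀ i, 1 + f i ≠ 0
  · have hev : ∀ᶠ i in Filter.cofinite, ‖f i‖ ≤ 1/2 := by
      have h0 : Metric.closedBall (0:ℂ) (1/2) ∈ nhds 0 :=
        Metric.closedBall_mem_nhds 0 (by norm_num)
      filter_upwards [hf.tendsto_cofinite_zero h0] with i hi
      simpa using mem_closedBall_zero_iff.mp hi
    have hlog : Summable (fun i => Complex.log (1 + f i)) := by
      refine Summable.of_norm_bounded_eventually (g := fun i => 3/2 * ‖f i‖)
        (hf.norm.mul_left _) ?_
      filter_upwards [hev] with i hi
      exact Complex.norm_log_one_add_half_le_self hi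
    exact multipliable_one_add_of_summable hf.norm
  · push_neg at h
    exact ⟨0, hasProdZero h⟩

lemma multipliableInvOneAdd {ι : Type*} (f : ι → ℂ) (hf : Summable f) :
    Multipliable fun i => (1 + f i)⁻¹ := by
  by_cases h : ∀ i, 1 + f i ≠ 0
  · have hev : ∀ᶠ i in Filter.cofinite, ‖(1 + f i)⁻¹ - 1‖ ≤ 2 * ‖f i‖ := by
      have h0 : Metric.closedBall (0:ℂ) (1/2) ∈ nhds 0 :=
        Metric.closedBall_mem_nhds 0 (by norm_num)
      filter_upwards [hf.tendsto_cofinite_zero h0] with i hi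
      have hfi : ‖f i‖ ≤ 1/2 := by simpa using mem_closedBall_zero_iff.mp hi
      have h1 : (1:ℝ)/2 ≤ ‖1 + f i‖ := by
        have hh : (1:ℝ) ≤ ‖1 + f i‖ + ‖f i‖ := by
          calc (1:ℝ) = ‖(1 + f i) - f i‖ := by simp
            _ ≤ ‖1 + f i‖ + ‖f i‖ := norm_sub_le _ _
        linarith
      have h2 : (1 + f i)⁻¹ - 1 = -f i * (1 + f i)⁻¹ := by
        field_simp [h i]
        ring
      rw [h2, norm_mul, norm_neg, norm_inv]
      have h3 : ‖1 + f i‖⁻¹ ≤ 2 := by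
        rw [inv_le_comm₀ (by linarith) (by norm_num)]
        linarith
      calc ‖f i‖ * ‖1 + f i‖⁻¹ ≤ ‖f i‖ * 2 := by
            exact mul_le_mul_of_nonneg_left h3 (norm_nonneg _)
        _ = 2 * ‖f i‖ := by ring
    have hs : Summable fun i => (1 + f i)⁻¹ - 1 :=
      Summable.of_norm_bounded_eventually (g := fun i => 2 * ‖f i‖) (hf.norm.mul_left _) hev
    exact (multipliableOneAdd _ hs).congr fun i => by ring
  · push_neg at h
    obtain ⟨i0, hi0⟩ := h
    exact ⟨0, hasProdZero ⟨i0, by rw [hi0, inv_zero]⟩⟩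

lemma tprodInv {ι : Type*} (f : ι → ℂ) (hf : Summable f) :
    ∏' i, (1 + f i)⁻¹ = (∏' i, (1 + f i))⁻¹ := by
  by_cases h : ∀ i, 1 + f i ≠ 0
  · have hm1 : Multipliable fun i => 1 + f i := multipliableOneAdd f hf
    have hm2 : Multipliable fun i => (1 + f i)⁻¹ := multipliableInvOneAdd f hf
    have hmul := hm1.hasProd.mul hm2.hasProd
    have heq : (fun i => (1 + f i) * (1 + f i)⁻¹) = fun _ => (1:ℂ) :=
      funext fun i => mul_inv_cancel₀ (h i)
    rw [heq] at hmul
    have h1 : HasProd (fun _ : ι => (1:ℂ)) 1 := hasProd_one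
    have := h1.unique hmul
    exact (inv_eq_of_mul_eq_one_right this.symm).symm
  · push_neg at h
    obtain ⟨i0, hi0⟩ := h
    have hz1 : (∏' i, (1 + f i)) = 0 := (hasProdZero ⟨i0, hi0⟩).tprod_eq
    have hz2 : (∏' i, (1 + f i)⁻¹) = 0 :=
      (hasProdZero ⟨i0, by rw [hi0, inv_zero]⟩).tprod_eq
    rw [hz1, hz2, inv_zero]

lemma geoSummable {a b : ℝ} (ha0 : 0 ≤ a) (ha : a < 1) (hb0 : 0 ≤ b) (hb : b < 1) :
    Summable (fun jl : ℕ × ℕ => a ^ jl.1 * b ^ jl.2) :=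
  (summable_geometric_of_lt_one ha0 ha).mul_of_nonneg
    (summable_geometric_of_lt_one hb0 hb)
    (fun j => pow_nonneg ha0 j) (fun l => pow_nonneg hb0 l)

lemma geoSummableC (w x y : ℂ) (hx : ‖x‖ < 1) (hy : ‖y‖ < 1) :
    Summable (fun jl : ℕ × ℕ => w * x ^ jl.1 * y ^ jl.2) := by
  refine Summable.of_norm_bounded (g :=
    (fun jl => ‖w‖ * (‖x‖ ^ jl.1 * ‖y‖ ^ jl.2)))
    (((geoSummable (norm_nonneg x) hx (norm_nonneg y) hy)).mul_left _) ?_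
  intro jl
  simp [norm_mul, norm_pow]
  ring_nf
  exact le_refl _

lemma multGeo (w x y : ℂ) (hx : ‖x‖ < 1) (hy : ‖y‖ < 1) :
    Multipliable (fun jl : ℕ × ℕ => 1 - w * x ^ jl.1 * y ^ jl.2) := by
  have := multipliableOneAdd _ (geoSummableC w x y hx hy).neg
  refine this.congr fun jl => ?_
  ring

set_option maxHeartbeats 1000000 in
lemma key (m n : ℕ) (hr : 1 ≤ m + n) (z p q : ℂ)
    (hp1 : ‖p‖ < 1) (hq1 : ‖q‖ < 1) :
    (∏' jl : ℕ × ℕ, (1 - z * p ^ (m + (m + n) * jl.1 + jl.2) * q ^ jl.2)) *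
      (∏' jl : ℕ × ℕ, (1 - z * p ^ jl.2 * q ^ (n + (m + n) * jl.1 + jl.2))) =
    (∏ k ∈ Finset.range m, ∏' jl : ℕ × ℕ,
        (1 - z * p ^ (k + (m + n) * jl.1) * q ^ ((n + k) + (m + n) * jl.2))) *
      ∏ k ∈ Finset.range n, ∏' jl : ℕ × ℕ,
        (1 - z * p ^ ((m + k) + (m + n) * jl.1) * q ^ (k + (m + n) * jl.2)) := by
  set r := m + n with hr'
  have hr0 : 0 < r := hr
  clear_value r
  set g : ℕ × ℕ → ℂ :=
    fun x => if (x.2 + m) % r = x.1 % r then 1 - z * p ^ x.1 * q ^ x.2 else 1 with hgdef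
  set u : ℕ × ℕ → ℂ :=
    fun x => if (x.2 + m) % r = x.1 % r then -(z * p ^ x.1 * q ^ x.2) else 0 with hudef
  have hs : Summable u := by
    rw [hudef]
    refine Summable.of_norm_bounded (g :=
      (fun jl => ‖z‖ * (‖p‖ ^ jl.1 * ‖q‖ ^ jl.2)))
      (((geoSummable (norm_nonneg p) hp1 (norm_nonneg q) hq1)).mul_left _) ?_
    intro jl
    by_cases hC : (jl.2 + m) % r = jl.1 % r
    · simp only [hC, if_pos, norm_neg, norm_mul, norm_pow]
      ring_nf
      exact le_refl _
    · simp only [hC, if_neg, norm_zero, if_false]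
      positivity
  have hgu : ∀ x, g x = 1 + u x := by
    intro x
    rw [hgdef, hudef]
    by_cases hC : (x.2 + m) % r = x.1 % r <;> simp [hC, sub_eq_add_neg]
  have hg : Multipliable g := (multipliableOneAdd _ hs).congr fun x => (hgu x).symm
  -- the two injections
  set ΦL : Bool × (ℕ × ℕ) → ℕ × ℕ := fun c =>
    if c.1 then (m + r * c.2.1 + c.2.2, c.2.2) else (c.2.2, n + r * c.2.1 + c.2.2)
    with hΦL
  set ΦR : (Fin m ⊕ Fin n) × (ℕ × ℕ) → ℕ × ℕ := fun c =>
    Sum.elim (fun k : Fin m => ((k : ℕ) + r * c.2.1, (n + (k : ℕ)) + r * c.2.2))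
      (fun k : Fin n => ((m + (k : ℕ)) + r * c.2.1, (k : ℕ) + r * c.2.2)) c.1
    with hΦR
  clear_value g u ΦL ΦR
  have hmod : ∀ x y : ℕ, (x + r * y) % r = x % r := fun x y => Nat.add_mul_mod_self_left x r y
  have hLinj : Function.Injective ΦL := by
    rintro ⟨b, j, l⟩ ⟨b', j', l'⟩ h
    cases b <;> cases b' <;>
      simp only [hΦL, if_true, if_false, Bool.false_eq_true, Prod.mk.injEq] at h
    · obtain ⟨h1, h2⟩ := h
      have hj : j = j' := by
        have : r * j = r * j' := by linarith
        exact Nat.eq_of_mul_eq_mul_left hr0 this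
      simp_all
    · exfalso
      obtain ⟨h1, h2⟩ := h
      have h3 : r = m + n := hr'
      have hj : 0 ≤ r * j := Nat.zero_le _
      have hj' : 0 ≤ r * j' := Nat.zero_le _
      linarith
    · exfalso
      obtain ⟨h1, h2⟩ := h
      have h3 : r = m + n := hr'
      have hj : 0 ≤ r * j := Nat.zero_le _
      have hj' : 0 ≤ r * j' := Nat.zero_le _
      linarith
    · obtain ⟨h1, h2⟩ := h
      have hj : j = j' := by
        have : r * j = r * j' := by linarith
        exact Nat.eq_of_mul_eq_mul_left hr0 this
      simp_all
  have hLsupp : Function.mulSupport g ⊆ Set.range ΦL := by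
    rintro ⟨a, b⟩ hx
    have hC : (b + m) % r = a % r := by
      by_contra hC
      exact hx (by rw [hgdef]; exact if_neg hC)
    rcases le_or_gt (b + m) a with hle | hlt
    · obtain ⟨t, ht⟩ := (Nat.modEq_iff_dvd' hle).mp hC
      refine ⟨(true, (t, b)), ?_⟩
      have ha : a = r * t + (b + m) := by
        have := (Nat.sub_eq_iff_eq_add hle).mp ht
        linarith
      simp only [hΦL, if_true, Prod.mk.injEq]
      exact ⟨by rw [ha]; ring, trivial⟩
    · obtain ⟨t, ht⟩ := (Nat.modEq_iff_dvd' (le_of_lt hlt)).mp hC.symm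
      obtain ⟨s, rfl⟩ : ∃ s, t = s + 1 := by
        refine ⟨t - 1, ?_⟩
        rcases Nat.eq_zero_or_pos t with rfl | hpos
        · exfalso; omega
        · omega
      refine ⟨(false, (s, a)), ?_⟩
      have hb2 : n + r * s + a = b := by
        have hb : b + m = r * (s + 1) + a := by
          have := (Nat.sub_eq_iff_eq_add (le_of_lt hlt)).mp ht
          linarith
        have h2 : r * (s + 1) = r * s + r := by ring
        have h3 : r = m + n := hr'
        linarith
      simp only [hΦL, if_false, Bool.false_eq_true, Prod.mk.injEq]
      exact ⟨trivial, hb2⟩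
  have hRinj : Function.Injective ΦR := by
    have hmodlt : ∀ x y : ℕ, x < r → (x + r * y) % r = x := fun x y hx => by
      rw [hmod, Nat.mod_eq_of_lt hx]
    rintro ⟨c, j, l⟩ ⟨c', j', l'⟩ h
    rcases c with k | k <;> rcases c' with k' | k' <;>
      simp only [hΦR, Sum.elim_inl, Sum.elim_inr, Prod.mk.injEq] at h <;>
      obtain ⟨h1, h2⟩ := h
    · have e1 : ((k : ℕ) + r * j) % r = k := hmodlt _ _ (by have := k.2; omega)
      have e2 : ((k' : ℕ) + r * j') % r = k' := hmodlt _ _ (by have := k'.2; omega)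
      have hk : (k : ℕ) = (k' : ℕ) := by rw [← e1, ← e2, h1]
      have h1' : (k : ℕ) + r * j = (k : ℕ) + r * j' := by rw [h1, hk]
      have h2' : (n + (k : ℕ)) + r * l = (n + (k : ℕ)) + r * l' := by rw [h2, hk]
      have hj : j = j' := Nat.eq_of_mul_eq_mul_left hr0 (Nat.add_left_cancel h1')
      have hl : l = l' := Nat.eq_of_mul_eq_mul_left hr0 (Nat.add_left_cancel h2')
      simp only [Prod.mk.injEq, Sum.inl.injEq]
      exact ⟨Fin.ext hk, hj, hl⟩
    · exfalso
      have e1 : ((k : ℕ) + r * j) % r = k := hmodlt _ _ (by have := k.2; omega)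
      have e2 : ((m + (k' : ℕ)) + r * j') % r = m + k' := hmodlt _ _ (by have := k'.2; omega)
      have : (k : ℕ) = m + k' := by rw [← e1, ← e2, h1]
      have := k.2; omega
    · exfalso
      have e1 : ((k : ℕ) + r * l) % r = k := hmodlt _ _ (by have := k.2; omega)
      have e2 : ((n + (k' : ℕ)) + r * l') % r = n + k' := hmodlt _ _ (by have := k'.2; omega)
      have : (k : ℕ) = n + k' := by rw [← e1, ← e2, h2]
      have := k.2; omega
    · have e1 : ((m + (k : ℕ)) + r * j) % r = m + k := hmodlt _ _ (by have := k.2; omega)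
      have e2 : ((m + (k' : ℕ)) + r * j') % r = m + k' := hmodlt _ _ (by have := k'.2; omega)
      have hk : (k : ℕ) = (k' : ℕ) := by
        have : m + (k : ℕ) = m + (k' : ℕ) := by rw [← e1, ← e2, h1]
        omega
      have h1' : (m + (k : ℕ)) + r * j = (m + (k : ℕ)) + r * j' := by rw [h1, hk]
      have h2' : (k : ℕ) + r * l = (k : ℕ) + r * l' := by rw [h2, hk]
      have hj : j = j' := Nat.eq_of_mul_eq_mul_left hr0 (Nat.add_left_cancel h1')
      have hl : l = l' := Nat.eq_of_mul_eq_mul_left hr0 (Nat.add_left_cancel h2')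
      simp only [Prod.mk.injEq, Sum.inr.injEq]
      exact ⟨Fin.ext hk, hj, hl⟩
  have hRsupp : Function.mulSupport g ⊆ Set.range ΦR := by
    rintro ⟨a, b⟩ hx
    have hC : (b + m) % r = a % r := by
      by_contra hC
      exact hx (by rw [hgdef]; exact if_neg hC)
    have har : a % r < r := Nat.mod_lt _ hr0
    have hbr : b % r < r := Nat.mod_lt _ hr0
    have hC' : (b % r + m) % r = a % r := by rw [Nat.mod_add_mod]; exact hC
    rcases lt_or_ge (a % r) m with hk | hk
    · have hb0 : b % r = n + a % r := by
        rcases lt_or_ge (b % r + m) r with hcase | hcase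
        · rw [Nat.mod_eq_of_lt hcase] at hC'
          omega
        · rw [Nat.mod_eq_sub_mod hcase, Nat.mod_eq_of_lt (by omega)] at hC'
          omega
      refine ⟨(Sum.inl ⟨a % r, hk⟩, (a / r, b / r)), ?_⟩
      simp only [hΦR, Sum.elim_inl, Prod.mk.injEq]
      refine ⟨Nat.mod_add_div a r, ?_⟩
      rw [← hb0]
      exact Nat.mod_add_div b r
    · have hb0 : b % r = a % r - m := by
        rcases lt_or_ge (b % r + m) r with hcase | hcase
        · rw [Nat.mod_eq_of_lt hcase] at hC'
          omega
        · rw [Nat.mod_eq_sub_mod hcase, Nat.mod_eq_of_lt (by omega)] at hC'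
          omega
      refine ⟨(Sum.inr ⟨a % r - m, by omega⟩, (a / r, b / r)), ?_⟩
      simp only [hΦR, Sum.elim_inr, Prod.mk.injEq]
      constructor
      · rw [show m + (a % r - m) = a % r from by omega]
        exact Nat.mod_add_div a r
      · rw [← hb0]
        exact Nat.mod_add_div b r
  have hgL : Multipliable (fun c => g (ΦL c)) :=
    (multipliableOneAdd _ (hs.comp_injective hLinj)).congr fun c => (hgu (ΦL c)).symm
  have hgR : Multipliable (fun c => g (ΦR c)) :=
    (multipliableOneAdd _ (hs.comp_injective hRinj)).congr fun c => (hgu (ΦR c)).symm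
  have hL : ∏' c, g (ΦL c) = ∏' x, g x := hLinj.tprod_eq hLsupp
  have hR : ∏' c, g (ΦR c) = ∏' x, g x := hRinj.tprod_eq hRsupp
  have hterm1 : ∀ jl : ℕ × ℕ,
      g (ΦL (true, jl)) = 1 - z * p ^ (m + r * jl.1 + jl.2) * q ^ jl.2 := by
    intro jl
    simp only [hΦL, hgdef, if_true]
    rw [if_pos]
    rw [show m + r * jl.1 + jl.2 = (jl.2 + m) + r * jl.1 from by ring, hmod]
  have hterm2 : ∀ jl : ℕ × ℕ,
      g (ΦL (false, jl)) = 1 - z * p ^ jl.2 * q ^ (n + r * jl.1 + jl.2) := by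
    intro jl
    simp only [hΦL, hgdef, Bool.false_eq_true, if_false]
    rw [if_pos]
    rw [show (n + r * jl.1 + jl.2) + m = jl.2 + r * (jl.1 + 1) from by rw [hr']; ring, hmod]
  have hterm3 : ∀ (k : ℕ) (jl : ℕ × ℕ),
      g ((k + r * jl.1, (n + k) + r * jl.2)) =
        1 - z * p ^ (k + r * jl.1) * q ^ ((n + k) + r * jl.2) := by
    intro k jl
    simp only [hgdef]
    rw [if_pos]
    rw [show ((n + k) + r * jl.2) + m = k + r * (jl.2 + 1) from by rw [hr']; ring, hmod, hmod]
  have hterm4 : ∀ (k : ℕ) (jl : ℕ × ℕ),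
      g (((m + k) + r * jl.1, k + r * jl.2)) =
        1 - z * p ^ ((m + k) + r * jl.1) * q ^ (k + r * jl.2) := by
    intro k jl
    simp only [hgdef]
    rw [if_pos]
    rw [show (k + r * jl.2) + m = (m + k) + r * jl.2 from by ring, hmod, hmod]
  have hLslice : ∀ bb : Bool, Multipliable (fun jl : ℕ × ℕ => g (ΦL (bb, jl))) := by
    intro bb
    have hinj : Function.Injective (fun jl : ℕ × ℕ => ΦL (bb, jl)) := by
      intro x y hxy
      have := hLinj hxy
      exact congrArg Prod.snd this
    exact (multipliableOneAdd _ (hs.comp_injective hinj)).congr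
      fun jl => (hgu (ΦL (bb, jl))).symm
  have hRslice : ∀ bb : Fin m ⊕ Fin n, Multipliable (fun jl : ℕ × ℕ => g (ΦR (bb, jl))) := by
    intro bb
    have hinj : Function.Injective (fun jl : ℕ × ℕ => ΦR (bb, jl)) := by
      intro x y hxy
      have := hRinj hxy
      exact congrArg Prod.snd this
    exact (multipliableOneAdd _ (hs.comp_injective hinj)).congr
      fun jl => (hgu (ΦR (bb, jl))).symm
  have hLsplit : ∏' c : Bool × (ℕ × ℕ), g (ΦL c)
      = (∏' jl : ℕ × ℕ, g (ΦL (true, jl))) * ∏' jl : ℕ × ℕ, g (ΦL (false, jl)) := by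
    rw [hgL.tprod_prod' hLslice, tprod_fintype]
    exact Fintype.prod_bool _
  have hRsplit : ∏' c : (Fin m ⊕ Fin n) × (ℕ × ℕ), g (ΦR c)
      = (∏ k ∈ Finset.range m, ∏' jl : ℕ × ℕ, g ((k + r * jl.1, (n + k) + r * jl.2))) *
        ∏ k ∈ Finset.range n, ∏' jl : ℕ × ℕ, g (((m + k) + r * jl.1, k + r * jl.2)) := by
    rw [hgR.tprod_prod' hRslice, tprod_fintype, Fintype.prod_sum_type]
    congr 1
    · rw [← Fin.prod_univ_eq_prod_range
        (fun k => ∏' jl : ℕ × ℕ, g ((k + r * jl.1, (n + k) + r * jl.2))) m]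
      refine Finset.prod_congr rfl fun k _ => ?_
      refine tprod_congr fun jl => ?_
      simp only [hΦR, Sum.elim_inl]
    · rw [← Fin.prod_univ_eq_prod_range
        (fun k => ∏' jl : ℕ × ℕ, g (((m + k) + r * jl.1, k + r * jl.2))) n]
      refine Finset.prod_congr rfl fun k _ => ?_
      refine tprod_congr fun jl => ?_
      simp only [hΦR, Sum.elim_inr]
  calc (∏' jl : ℕ × ℕ, (1 - z * p ^ (m + r * jl.1 + jl.2) * q ^ jl.2)) *
        ∏' jl : ℕ × ℕ, (1 - z * p ^ jl.2 * q ^ (n + r * jl.1 + jl.2))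
      = (∏' jl : ℕ × ℕ, g (ΦL (true, jl))) * ∏' jl : ℕ × ℕ, g (ΦL (false, jl)) := by
        rw [tprod_congr hterm1, tprod_congr hterm2]
    _ = ∏' c : Bool × (ℕ × ℕ), g (ΦL c) := hLsplit.symm
    _ = ∏' x : ℕ × ℕ, g x := hL
    _ = ∏' c : (Fin m ⊕ Fin n) × (ℕ × ℕ), g (ΦR c) := hR.symm
    _ = (∏ k ∈ Finset.range m, ∏' jl : ℕ × ℕ, g ((k + r * jl.1, (n + k) + r * jl.2))) *
        ∏ k ∈ Finset.range n, ∏' jl : ℕ × ℕ, g (((m + k) + r * jl.1, k + r * jl.2)) := hRsplit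
    _ = (∏ k ∈ Finset.range m, ∏' jl : ℕ × ℕ,
          (1 - z * p ^ (k + r * jl.1) * q ^ ((n + k) + r * jl.2))) *
        ∏ k ∈ Finset.range n, ∏' jl : ℕ × ℕ,
          (1 - z * p ^ ((m + k) + r * jl.1) * q ^ (k + r * jl.2)) := by
        congr 1
        · exact Finset.prod_congr rfl fun k _ => tprod_congr (hterm3 k)
        · exact Finset.prod_congr rfl fun k _ => tprod_congr (hterm4 k)

noncomputable section

/-- For `0 ≤ m ≤ r`, the lens-space elliptic gamma function is a finite product of
ordinary elliptic gamma functions with bases `p^r` and `q^r` (formula (3.5)). -/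
theorem lensGamma_as_product_of_ellGamma
    (r : ℕ) (hr : 1 ≤ r) (p q : ℂ) (hp : p ≠ 0) (hq : q ≠ 0)
    (hp1 : ‖p‖ < 1) (hq1 : ‖q‖ < 1)
    (m : ℕ) (hm : m ≤ r) (z : ℂ) (hz : z ≠ 0)
    (hreg : lensReg r z (m : ℤ) p q)
    (hreg1 : ∀ k ∈ Finset.range m,
      notPole (q ^ ((r : ℤ) - (m : ℤ)) * z * (p * q) ^ k) (p ^ r) (q ^ r))
    (hreg2 : ∀ k ∈ Finset.range (r - m),
      notPole (p ^ (m : ℤ) * z * (p * q) ^ k) (p ^ r) (q ^ r)) :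
    lensGamma r z (m : ℤ) p q =
      (∏ k ∈ Finset.range m,
          ellGamma (q ^ ((r : ℤ) - (m : ℤ)) * z * (p * q) ^ k) (p ^ r) (q ^ r)) *
        ∏ k ∈ Finset.range (r - m),
          ellGamma (p ^ (m : ℤ) * z * (p * q) ^ k) (p ^ r) (q ^ r) := by
  obtain ⟨n, rfl⟩ : ∃ n, r = m + n := ⟨r - m, by omega⟩
  have hn' : m + n - m = n := by omega
  have hzc : ((m + n : ℕ) : ℤ) - (m : ℤ) = ((n : ℕ) : ℤ) := by push_cast; ring
  simp only [lensGamma, ellGamma, hzc, zpow_natCast, hn']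
  have hpq : ‖p * q‖ < 1 := by
    rw [norm_mul]
    calc ‖p‖ * ‖q‖ ≤ ‖p‖ * 1 :=
          mul_le_mul_of_nonneg_left (le_of_lt hq1) (norm_nonneg p)
      _ < 1 := by simpa using hp1
  have hpr : ‖p ^ (m + n)‖ < 1 := by
    rw [norm_pow]; exact pow_lt_one₀ (norm_nonneg p) hp1 (by omega)
  have hqr : ‖q ^ (m + n)‖ < 1 := by
    rw [norm_pow]; exact pow_lt_one₀ (norm_nonneg q) hq1 (by omega)
  have hsplit : ∀ w x y : ℂ, ‖x‖ < 1 → ‖y‖ < 1 →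
      (∏' jk : ℕ × ℕ, ((1 - w⁻¹ * x ^ (jk.1 + 1) * y ^ (jk.2 + 1)) /
          (1 - w * x ^ jk.1 * y ^ jk.2))) =
        (∏' jk : ℕ × ℕ, (1 - w⁻¹ * x ^ (jk.1 + 1) * y ^ (jk.2 + 1))) *
          (∏' jk : ℕ × ℕ, (1 - w * x ^ jk.1 * y ^ jk.2))⁻¹ := by
    intro w x y hx hy
    have hN : Multipliable (fun jk : ℕ × ℕ => 1 - w⁻¹ * x ^ (jk.1 + 1) * y ^ (jk.2 + 1)) :=
      (multGeo (w⁻¹ * x * y) x y hx hy).congr fun jk => by ring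
    have hDi : Multipliable (fun jk : ℕ × ℕ => (1 - w * x ^ jk.1 * y ^ jk.2)⁻¹) := by
      have := multipliableInvOneAdd (fun jk : ℕ × ℕ => -(w * x ^ jk.1 * y ^ jk.2))
        (geoSummableC w x y hx hy).neg
      exact this.congr fun jk => by ring_nf
    have hInv : (∏' jk : ℕ × ℕ, (1 - w * x ^ jk.1 * y ^ jk.2)⁻¹)
        = (∏' jk : ℕ × ℕ, (1 - w * x ^ jk.1 * y ^ jk.2))⁻¹ := by
      have h0 := tprodInv (fun jk : ℕ × ℕ => -(w * x ^ jk.1 * y ^ jk.2))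
        (geoSummableC w x y hx hy).neg
      calc (∏' jk : ℕ × ℕ, (1 - w * x ^ jk.1 * y ^ jk.2)⁻¹)
          = ∏' jk : ℕ × ℕ, (1 + -(w * x ^ jk.1 * y ^ jk.2))⁻¹ :=
            tprod_congr fun jk => by ring_nf
        _ = (∏' jk : ℕ × ℕ, (1 + -(w * x ^ jk.1 * y ^ jk.2)))⁻¹ := h0
        _ = (∏' jk : ℕ × ℕ, (1 - w * x ^ jk.1 * y ^ jk.2))⁻¹ :=
            congrArg Inv.inv (tprod_congr fun jk => by ring)
    calc (∏' jk : ℕ × ℕ, ((1 - w⁻¹ * x ^ (jk.1 + 1) * y ^ (jk.2 + 1)) /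
          (1 - w * x ^ jk.1 * y ^ jk.2)))
        = ∏' jk : ℕ × ℕ, ((1 - w⁻¹ * x ^ (jk.1 + 1) * y ^ (jk.2 + 1)) *
          (1 - w * x ^ jk.1 * y ^ jk.2)⁻¹) := tprod_congr fun jk => div_eq_mul_inv _ _
      _ = (∏' jk : ℕ × ℕ, (1 - w⁻¹ * x ^ (jk.1 + 1) * y ^ (jk.2 + 1))) *
          ∏' jk : ℕ × ℕ, (1 - w * x ^ jk.1 * y ^ jk.2)⁻¹ := hN.tprod_mul hDi
      _ = _ := by rw [hInv]
  rw [hsplit (z * p ^ m) (p ^ (m + n)) (p * q) hpr hpq,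
    hsplit (z * q ^ n) (q ^ (m + n)) (p * q) hqr hpq,
    Finset.prod_congr rfl
      (fun k _ => hsplit (q ^ n * z * (p * q) ^ k) (p ^ (m + n)) (q ^ (m + n)) hpr hqr),
    Finset.prod_congr rfl
      (fun k _ => hsplit (p ^ m * z * (p * q) ^ k) (p ^ (m + n)) (q ^ (m + n)) hpr hqr),
    Finset.prod_mul_distrib, Finset.prod_mul_distrib,
    Finset.prod_inv_distrib, Finset.prod_inv_distrib]
  have hD : (∏' jk : ℕ × ℕ, (1 - z * p ^ m * (p ^ (m + n)) ^ jk.1 * (p * q) ^ jk.2)) *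
      (∏' jk : ℕ × ℕ, (1 - z * q ^ n * (q ^ (m + n)) ^ jk.1 * (p * q) ^ jk.2)) =
      (∏ k ∈ Finset.range m, ∏' jk : ℕ × ℕ,
          (1 - q ^ n * z * (p * q) ^ k * (p ^ (m + n)) ^ jk.1 * (q ^ (m + n)) ^ jk.2)) *
        ∏ k ∈ Finset.range n, ∏' jk : ℕ × ℕ,
          (1 - p ^ m * z * (p * q) ^ k * (p ^ (m + n)) ^ jk.1 * (q ^ (m + n)) ^ jk.2) := by
    have h := key m n hr z p q hp1 hq1
    have e1 : (∏' jl : ℕ × ℕ, (1 - z * p ^ (m + (m + n) * jl.1 + jl.2) * q ^ jl.2))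
        = ∏' jk : ℕ × ℕ, (1 - z * p ^ m * (p ^ (m + n)) ^ jk.1 * (p * q) ^ jk.2) :=
      tprod_congr fun jl => by ring
    have e2 : (∏' jl : ℕ × ℕ, (1 - z * p ^ jl.2 * q ^ (n + (m + n) * jl.1 + jl.2)))
        = ∏' jk : ℕ × ℕ, (1 - z * q ^ n * (q ^ (m + n)) ^ jk.1 * (p * q) ^ jk.2) :=
      tprod_congr fun jl => by ring
    have e3 : ∀ k : ℕ,
        (∏' jl : ℕ × ℕ, (1 - z * p ^ (k + (m + n) * jl.1) * q ^ ((n + k) + (m + n) * jl.2)))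
        = ∏' jk : ℕ × ℕ,
          (1 - q ^ n * z * (p * q) ^ k * (p ^ (m + n)) ^ jk.1 * (q ^ (m + n)) ^ jk.2) :=
      fun k => tprod_congr fun jl => by ring
    have e4 : ∀ k : ℕ,
        (∏' jl : ℕ × ℕ, (1 - z * p ^ ((m + k) + (m + n) * jl.1) * q ^ (k + (m + n) * jl.2)))
        = ∏' jk : ℕ × ℕ,
          (1 - p ^ m * z * (p * q) ^ k * (p ^ (m + n)) ^ jk.1 * (q ^ (m + n)) ^ jk.2) :=
      fun k => tprod_congr fun jl => by ring
    rw [e1, e2, Finset.prod_congr rfl (fun k _ => e3 k),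
      Finset.prod_congr rfl (fun k _ => e4 k)] at h
    exact h
  have hN : (∏' jk : ℕ × ℕ,
        (1 - (z * p ^ m)⁻¹ * (p ^ (m + n)) ^ (jk.1 + 1) * (p * q) ^ (jk.2 + 1))) *
      (∏' jk : ℕ × ℕ,
        (1 - (z * q ^ n)⁻¹ * (q ^ (m + n)) ^ (jk.1 + 1) * (p * q) ^ (jk.2 + 1))) =
      (∏ k ∈ Finset.range m, ∏' jk : ℕ × ℕ,
          (1 - (q ^ n * z * (p * q) ^ k)⁻¹ * (p ^ (m + n)) ^ (jk.1 + 1) *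
            (q ^ (m + n)) ^ (jk.2 + 1))) *
        ∏ k ∈ Finset.range n, ∏' jk : ℕ × ℕ,
          (1 - (p ^ m * z * (p * q) ^ k)⁻¹ * (p ^ (m + n)) ^ (jk.1 + 1) *
            (q ^ (m + n)) ^ (jk.2 + 1)) := by
    have h := key n m (by omega) (z⁻¹ * p * q) p q hp1 hq1
    have e1 : (∏' jl : ℕ × ℕ, (1 - (z⁻¹ * p * q) * p ^ (n + (n + m) * jl.1 + jl.2) * q ^ jl.2))
        = ∏' jk : ℕ × ℕ,
          (1 - (z * p ^ m)⁻¹ * (p ^ (m + n)) ^ (jk.1 + 1) * (p * q) ^ (jk.2 + 1)) :=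
      tprod_congr fun jl => by
        have hx : (z * p ^ m)⁻¹ * (p ^ (m + n)) ^ (jl.1 + 1) * (p * q) ^ (jl.2 + 1)
            = (z⁻¹ * p * q) * p ^ (n + (n + m) * jl.1 + jl.2) * q ^ jl.2 := by
          field_simp
          ring
        rw [hx]
    have e2 : (∏' jl : ℕ × ℕ, (1 - (z⁻¹ * p * q) * p ^ jl.2 * q ^ (m + (n + m) * jl.1 + jl.2)))
        = ∏' jk : ℕ × ℕ,
          (1 - (z * q ^ n)⁻¹ * (q ^ (m + n)) ^ (jk.1 + 1) * (p * q) ^ (jk.2 + 1)) :=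
      tprod_congr fun jl => by
        have hx : (z * q ^ n)⁻¹ * (q ^ (m + n)) ^ (jl.1 + 1) * (p * q) ^ (jl.2 + 1)
            = (z⁻¹ * p * q) * p ^ jl.2 * q ^ (m + (n + m) * jl.1 + jl.2) := by
          field_simp
          ring
        rw [hx]
    have e3 : (∏ k ∈ Finset.range m, ∏' jl : ℕ × ℕ,
          (1 - (z⁻¹ * p * q) * p ^ ((n + k) + (n + m) * jl.1) * q ^ (k + (n + m) * jl.2)))
        = ∏ k ∈ Finset.range m, ∏' jk : ℕ × ℕ,
          (1 - (q ^ n * z * (p * q) ^ k)⁻¹ * (p ^ (m + n)) ^ (jk.1 + 1) *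
            (q ^ (m + n)) ^ (jk.2 + 1)) := by
      rw [← Finset.prod_range_reflect]
      refine Finset.prod_congr rfl fun k hk => ?_
      rw [Finset.mem_range] at hk
      refine tprod_congr fun jl => ?_
      obtain ⟨d, rfl⟩ : ∃ d, m = k + d + 1 := ⟨m - k - 1, by omega⟩
      rw [show k + d + 1 - 1 - k = d from by omega]
      have hx : (q ^ n * z * (p * q) ^ k)⁻¹ * (p ^ (k + d + 1 + n)) ^ (jl.1 + 1) *
            (q ^ (k + d + 1 + n)) ^ (jl.2 + 1)
          = (z⁻¹ * p * q) * p ^ ((n + d) + (n + (k + d + 1)) * jl.1) *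
            q ^ (d + (n + (k + d + 1)) * jl.2) := by
        field_simp
        ring
      rw [hx]
    have e4 : (∏ k ∈ Finset.range n, ∏' jl : ℕ × ℕ,
          (1 - (z⁻¹ * p * q) * p ^ (k + (n + m) * jl.1) * q ^ ((m + k) + (n + m) * jl.2)))
        = ∏ k ∈ Finset.range n, ∏' jk : ℕ × ℕ,
          (1 - (p ^ m * z * (p * q) ^ k)⁻¹ * (p ^ (m + n)) ^ (jk.1 + 1) *
            (q ^ (m + n)) ^ (jk.2 + 1)) := by
      rw [← Finset.prod_range_reflect]
      refine Finset.prod_congr rfl fun k hk => ?_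
      rw [Finset.mem_range] at hk
      refine tprod_congr fun jl => ?_
      obtain ⟨d, rfl⟩ : ∃ d, n = k + d + 1 := ⟨n - k - 1, by omega⟩
      rw [show k + d + 1 - 1 - k = d from by omega]
      have hx : (p ^ m * z * (p * q) ^ k)⁻¹ * (p ^ (m + (k + d + 1))) ^ (jl.1 + 1) *
            (q ^ (m + (k + d + 1))) ^ (jl.2 + 1)
          = (z⁻¹ * p * q) * p ^ (d + ((k + d + 1) + m) * jl.1) *
            q ^ ((m + d) + ((k + d + 1) + m) * jl.2) := by
        field_simp
        ring
      rw [hx]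
    rw [e1, e2, e3, e4] at h
    exact h.trans (mul_comm _ _)
  set N1 := ∏' jk : ℕ × ℕ,
    (1 - (z * p ^ m)⁻¹ * (p ^ (m + n)) ^ (jk.1 + 1) * (p * q) ^ (jk.2 + 1)) with hN1
  set N2 := ∏' jk : ℕ × ℕ,
    (1 - (z * q ^ n)⁻¹ * (q ^ (m + n)) ^ (jk.1 + 1) * (p * q) ^ (jk.2 + 1)) with hN2
  set D1 := ∏' jk : ℕ × ℕ, (1 - z * p ^ m * (p ^ (m + n)) ^ jk.1 * (p * q) ^ jk.2) with hD1
  set D2 := ∏' jk : ℕ × ℕ, (1 - z * q ^ n * (q ^ (m + n)) ^ jk.1 * (p * q) ^ jk.2) with hD2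
  set RN1 := ∏ k ∈ Finset.range m, ∏' jk : ℕ × ℕ,
    (1 - (q ^ n * z * (p * q) ^ k)⁻¹ * (p ^ (m + n)) ^ (jk.1 + 1) * (q ^ (m + n)) ^ (jk.2 + 1))
    with hRN1
  set RN2 := ∏ k ∈ Finset.range n, ∏' jk : ℕ × ℕ,
    (1 - (p ^ m * z * (p * q) ^ k)⁻¹ * (p ^ (m + n)) ^ (jk.1 + 1) * (q ^ (m + n)) ^ (jk.2 + 1))
    with hRN2
  set RD1 := ∏ k ∈ Finset.range m, ∏' jk : ℕ × ℕ,
    (1 - q ^ n * z * (p * q) ^ k * (p ^ (m + n)) ^ jk.1 * (q ^ (m + n)) ^ jk.2) with hRD1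
  set RD2 := ∏ k ∈ Finset.range n, ∏' jk : ℕ × ℕ,
    (1 - p ^ m * z * (p * q) ^ k * (p ^ (m + n)) ^ jk.1 * (q ^ (m + n)) ^ jk.2) with hRD2
  calc N1 * D1⁻¹ * (N2 * D2⁻¹) = (N1 * N2) * (D1 * D2)⁻¹ := by
        rw [mul_inv]; ring
    _ = (RN1 * RN2) * (RD1 * RD2)⁻¹ := by rw [hN, hD]
    _ = RN1 * RD1⁻¹ * (RN2 * RD2⁻¹) := by rw [mul_inv]; ring
end
end

section
/- Let r ≥ 1 be an integer, p, q nonzero complex numbers with |p| < 1, |q| < 1, and m ∈ ℤ. For every nonzero z ∈ ℂ not a pole of either side, γ^{(r)}(z, m; p,q) = [Γ((pq)^m q^{r−m} z; p^r, q^r, pq) / Γ(q^{r−m} z; p^r, q^r, pq)] · [Γ((pq)^{r−m} p^m z; p^r, q^r, pq) / Γ(p^m z; p^r, q^r, pq)], where Γ(·;·,·,·) is the second-order elliptic gamma function. -/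
open Complex Finset

noncomputable section

open Filter in
private lemma hasProd_zero_of_eq_zero' {ι : Type*} {f : ι → ℂ} {i0 : ι} (h : f i0 = 0) :
    HasProd f 0 := by
  unfold HasProd
  rw [tendsto_congr' (f₂ := fun _ => (0:ℂ))]
  · exact tendsto_const_nhds
  · refine eventually_atTop.2 ⟨{i0}, fun s hs => Finset.prod_eq_zero (by simpa using hs) h⟩

private lemma summable_log_one_sub' {ι : Type*} {v : ι → ℂ} (hv : Summable fun i => ‖v i‖) :
    Summable fun i => Complex.log (1 - v i) := by
  refine Summable.of_norm_bounded_eventually (g := fun i => 3/2 * ‖v i‖) (hv.mul_left _) ?_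
  filter_upwards [hv.tendsto_cofinite_zero (Metric.ball_mem_nhds 0 (by norm_num : (0:ℝ) < 1/2))]
    with i hi
  simp only [Set.mem_preimage, Metric.mem_ball, dist_zero_right, Real.norm_eq_abs] at hi
  have : ‖-v i‖ ≤ 1/2 := by
    rw [norm_neg]; exact le_of_lt (by simpa using hi)
  simpa [sub_eq_add_neg, norm_neg] using Complex.norm_log_one_add_half_le_self this

private lemma multipliable_one_sub' {ι : Type*} {v : ι → ℂ} (hv : Summable fun i => ‖v i‖) :
    Multipliable fun i => 1 - v i := by
  by_cases h : ∀ i, 1 - v i ≠ 0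
  · exact Complex.multipliable_of_summable_log (summable_log_one_sub' hv)
  · push_neg at h
    obtain ⟨i0, hi0⟩ := h
    exact ⟨0, hasProd_zero_of_eq_zero' hi0⟩

private lemma summable_norm_geo2' (c P T : ℂ) (hP : ‖P‖ < 1) (hT : ‖T‖ < 1) :
    Summable fun jk : ℕ × ℕ => ‖c * P ^ jk.1 * T ^ jk.2‖ := by
  have h1 : Summable fun j : ℕ => ‖P‖ ^ j :=
    summable_geometric_of_lt_one (norm_nonneg _) hP
  have h2 : Summable fun j : ℕ => ‖T‖ ^ j :=
    summable_geometric_of_lt_one (norm_nonneg _) hT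
  have := (h1.mul_of_nonneg h2 (fun _ => pow_nonneg (norm_nonneg _) _)
      (fun _ => pow_nonneg (norm_nonneg _) _)).mul_left ‖c‖
  refine this.congr fun jk => ?_
  simp [norm_mul, norm_pow, mul_assoc]

private lemma summable_norm_geo3' (c P Q T : ℂ) (hP : ‖P‖ < 1) (hQ : ‖Q‖ < 1) (hT : ‖T‖ < 1) :
    Summable fun n : ℕ × ℕ × ℕ => ‖c * P ^ n.1 * Q ^ n.2.1 * T ^ n.2.2‖ := by
  have h1 : Summable fun j : ℕ => ‖P‖ ^ j :=
    summable_geometric_of_lt_one (norm_nonneg _) hP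
  have h2 := summable_norm_geo2' c Q T hQ hT
  have := h1.mul_of_nonneg h2 (fun _ => pow_nonneg (norm_nonneg _) _) (fun _ => norm_nonneg _)
  have := this.congr (f := fun n : ℕ × (ℕ × ℕ) => ‖P‖ ^ n.1 * ‖c * Q ^ n.2.1 * T ^ n.2.2‖)
     (g := fun n : ℕ × ℕ × ℕ => ‖c * P ^ n.1 * Q ^ n.2.1 * T ^ n.2.2‖) fun n => by
    simp [norm_mul, norm_pow]; ring
  exact this

private lemma hasProd_peel_mid' {f : ℕ × ℕ × ℕ → ℂ}
    (h0 : Multipliable fun jl : ℕ × ℕ => f (jl.1, 0, jl.2))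
    (h1 : Multipliable fun n : ℕ × ℕ × ℕ => f (n.1, n.2.1 + 1, n.2.2)) :
    HasProd f ((∏' jl : ℕ × ℕ, f (jl.1, 0, jl.2)) *
      ∏' n : ℕ × ℕ × ℕ, f (n.1, n.2.1 + 1, n.2.2)) := by
  set s : Set (ℕ × ℕ × ℕ) := {n | n.2.1 = 0} with hs
  let e1 : (ℕ × ℕ) ≃ s :=
    { toFun := fun jl => ⟨(jl.1, 0, jl.2), rfl⟩
      invFun := fun n => (n.1.1, n.1.2.2)
      left_inv := fun jl => rfl
      right_inv := fun n => by
        obtain ⟨⟨j, k, l⟩, hk⟩ := n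
        simp only [hs, Set.mem_setOf_eq] at hk
        simp [hk] }
  let e2 : (ℕ × ℕ × ℕ) ≃ ↥sᶜ :=
    { toFun := fun n => ⟨(n.1, n.2.1 + 1, n.2.2), by simp [hs]⟩
      invFun := fun m => (m.1.1, m.1.2.1 - 1, m.1.2.2)
      left_inv := fun n => by simp
      right_inv := fun m => by
        obtain ⟨⟨j, k, l⟩, hk⟩ := m
        simp only [hs, Set.mem_compl_iff, Set.mem_setOf_eq] at hk
        have : k - 1 + 1 = k := Nat.succ_pred_eq_of_ne_zero hk
        simp [this] }
  have hA : HasProd (f ∘ (↑) : s → ℂ) (∏' jl : ℕ × ℕ, f (jl.1, 0, jl.2)) := by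
    rw [← Equiv.hasProd_iff e1]
    exact h0.hasProd
  have hB : HasProd (f ∘ (↑) : ↥sᶜ → ℂ) (∏' n : ℕ × ℕ × ℕ, f (n.1, n.2.1 + 1, n.2.2)) := by
    rw [← Equiv.hasProd_iff e2]
    exact h1.hasProd
  exact hA.mul_isCompl isCompl_compl hB

private lemma ellGamma3_shiftQ (P Q T w : ℂ) (hP : ‖P‖ < 1) (hQ : ‖Q‖ < 1) (hT : ‖T‖ < 1)
    (hQ0 : Q ≠ 0) (hw : ∀ j l : ℕ, 1 - w * P ^ j * T ^ l ≠ 0) :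
    ellGamma3 (Q * w) P Q T = ellGamma w P T * ellGamma3 w P Q T := by
  set A : ℕ × ℕ × ℕ → ℂ := fun n => 1 - w * P ^ n.1 * Q ^ n.2.1 * T ^ n.2.2 with hA
  set B : ℕ × ℕ × ℕ → ℂ := fun n => 1 - w⁻¹ * P ^ (n.1 + 1) * Q ^ n.2.1 * T ^ (n.2.2 + 1)
    with hB
  set A1 : ℕ × ℕ × ℕ → ℂ := fun n => 1 - w * P ^ n.1 * Q ^ (n.2.1 + 1) * T ^ n.2.2 with hA1
  set B1 : ℕ × ℕ × ℕ → ℂ :=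
    fun n => 1 - w⁻¹ * P ^ (n.1 + 1) * Q ^ (n.2.1 + 1) * T ^ (n.2.2 + 1) with hB1
  set A0 : ℕ × ℕ → ℂ := fun jl => 1 - w * P ^ jl.1 * T ^ jl.2 with hA0
  set B0 : ℕ × ℕ → ℂ := fun jl => 1 - w⁻¹ * P ^ (jl.1 + 1) * T ^ (jl.2 + 1) with hB0
  have mA : Multipliable A := multipliable_one_sub' (summable_norm_geo3' w P Q T hP hQ hT)
  have mB : Multipliable B := multipliable_one_sub'
    ((summable_norm_geo3' (w⁻¹ * P * T) P Q T hP hQ hT).congr fun n =>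
      congrArg norm (by ring))
  have mA1 : Multipliable A1 := multipliable_one_sub'
    ((summable_norm_geo3' (w * Q) P Q T hP hQ hT).congr fun n => congrArg norm (by ring))
  have mB1 : Multipliable B1 := multipliable_one_sub'
    ((summable_norm_geo3' (w⁻¹ * P * Q * T) P Q T hP hQ hT).congr fun n =>
      congrArg norm (by ring))
  have mA0 : Multipliable A0 := multipliable_one_sub' (summable_norm_geo2' w P T hP hT)
  have mB0 : Multipliable B0 := multipliable_one_sub'
    ((summable_norm_geo2' (w⁻¹ * P * T) P T hP hT).congr fun jl => congrArg norm (by ring))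
  have hA_peel : ∏' n, A n = (∏' jl : ℕ × ℕ, A0 jl) * ∏' n, A1 n := by
    have h0 : Multipliable fun jl : ℕ × ℕ => A (jl.1, 0, jl.2) :=
      mA0.congr fun jl => by simp [hA, hA0]
    have h := (hasProd_peel_mid' (f := A) h0 mA1).tprod_eq
    rw [h]
    congr 1
    exact tprod_congr fun jl => by simp [hA, hA0]
  have hB_peel : ∏' n, B n = (∏' jl : ℕ × ℕ, B0 jl) * ∏' n, B1 n := by
    have h0 : Multipliable fun jl : ℕ × ℕ => B (jl.1, 0, jl.2) :=
      mB0.congr fun jl => by simp [hB, hB0]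
    have h := (hasProd_peel_mid' (f := B) h0 mB1).tprod_eq
    rw [h]
    congr 1
    exact tprod_congr fun jl => by simp [hB, hB0]
  have hG3w : ellGamma3 w P Q T = (∏' n, A n) * ∏' n, B1 n := by
    rw [ellGamma3, tprod_congr (g := fun n => A n * B1 n) fun n => rfl]
    exact Multipliable.tprod_mul mA mB1
  have hG3Qw : ellGamma3 (Q * w) P Q T = (∏' n, A1 n) * ∏' n, B n := by
    rw [ellGamma3, tprod_congr (g := fun n => A1 n * B n) fun n => ?_]
    · exact Multipliable.tprod_mul mA1 mB
    · have h2 : (Q * w)⁻¹ * P ^ (n.1 + 1) * Q ^ (n.2.1 + 1) * T ^ (n.2.2 + 1)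
          = w⁻¹ * P ^ (n.1 + 1) * Q ^ n.2.1 * T ^ (n.2.2 + 1) := by
        have hq : Q⁻¹ * Q ^ (n.2.1 + 1) = Q ^ n.2.1 := by
          rw [pow_succ', ← mul_assoc, inv_mul_cancel₀ hQ0, one_mul]
        calc (Q * w)⁻¹ * P ^ (n.1 + 1) * Q ^ (n.2.1 + 1) * T ^ (n.2.2 + 1)
            = Q⁻¹ * Q ^ (n.2.1 + 1) * (w⁻¹ * P ^ (n.1 + 1) * T ^ (n.2.2 + 1)) := by
              rw [mul_inv]; ring
          _ = _ := by rw [hq]; ring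
      simp only [hA1, hB]
      rw [h2]
      ring_nf
  have sU : Summable fun jl : ℕ × ℕ => ‖(A0 jl - B0 jl) / A0 jl‖ := by
    have sg : Summable fun jl : ℕ × ℕ =>
        2 * (‖w⁻¹ * P ^ (jl.1 + 1) * T ^ (jl.2 + 1)‖ + ‖w * P ^ jl.1 * T ^ jl.2‖) :=
      (((summable_norm_geo2' (w⁻¹ * P * T) P T hP hT).congr fun jl =>
        congrArg norm (by ring)).add (summable_norm_geo2' w P T hP hT)).mul_left 2
    refine Summable.of_norm_bounded_eventually sg ?_
    have hten : Filter.Tendsto (fun jl : ℕ × ℕ => ‖w * P ^ jl.1 * T ^ jl.2‖)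
        Filter.cofinite (nhds 0) :=
      (summable_norm_geo2' w P T hP hT).tendsto_cofinite_zero
    filter_upwards [hten.eventually_lt_const (by norm_num : (0 : ℝ) < 1 / 2)] with jl h2
    rw [norm_norm, norm_div]
    have hAlow : (1 : ℝ) / 2 ≤ ‖A0 jl‖ := by
      have h3 := norm_sub_norm_le (1 : ℂ) (w * P ^ jl.1 * T ^ jl.2)
      rw [norm_one] at h3
      have : (1 : ℝ) / 2 ≤ 1 - ‖w * P ^ jl.1 * T ^ jl.2‖ := by linarith
      exact le_trans this h3
    have hdiff : A0 jl - B0 jl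
        = w⁻¹ * P ^ (jl.1 + 1) * T ^ (jl.2 + 1) - w * P ^ jl.1 * T ^ jl.2 := by
      simp only [hA0, hB0]; ring
    calc ‖A0 jl - B0 jl‖ / ‖A0 jl‖ ≤ ‖A0 jl - B0 jl‖ / (1 / 2) :=
          div_le_div_of_nonneg_left (norm_nonneg _) (by norm_num) hAlow
      _ = 2 * ‖A0 jl - B0 jl‖ := by ring
      _ ≤ 2 * (‖w⁻¹ * P ^ (jl.1 + 1) * T ^ (jl.2 + 1)‖ + ‖w * P ^ jl.1 * T ^ jl.2‖) := by
          rw [hdiff]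
          exact mul_le_mul_of_nonneg_left (norm_sub_le _ _) (by norm_num)
  have mR : Multipliable fun jl : ℕ × ℕ => B0 jl / A0 jl :=
    (multipliable_one_sub' sU).congr fun jl => by
      have h := hw jl.1 jl.2
      rw [hA0] at *
      field_simp
      ring
  have hN : ellGamma w P T * (∏' jl : ℕ × ℕ, A0 jl) = ∏' jl : ℕ × ℕ, B0 jl := by
    have h1 : ellGamma w P T = ∏' jl : ℕ × ℕ, B0 jl / A0 jl := rfl
    rw [h1, ← Multipliable.tprod_mul mR mA0]
    exact tprod_congr fun jl => div_mul_cancel₀ _ (hw jl.1 jl.2)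
  rw [hG3Qw, hG3w, hB_peel, hA_peel, ← hN]
  ring

private lemma ellGamma3_swap (z P Q T : ℂ) : ellGamma3 z P Q T = ellGamma3 z Q P T := by
  let e : (ℕ × ℕ × ℕ) ≃ (ℕ × ℕ × ℕ) :=
    { toFun := fun n => (n.2.1, n.1, n.2.2)
      invFun := fun n => (n.2.1, n.1, n.2.2)
      left_inv := fun n => rfl
      right_inv := fun n => rfl }
  have h := Equiv.tprod_eq e (fun x : ℕ × ℕ × ℕ =>
    (1 - z * Q ^ x.1 * P ^ x.2.1 * T ^ x.2.2) *
      (1 - z⁻¹ * Q ^ (x.1 + 1) * P ^ (x.2.1 + 1) * T ^ (x.2.2 + 1)))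
  rw [ellGamma3, ellGamma3, ← h]
  exact tprod_congr fun c => by simp only [e, Equiv.coe_fn_mk]; ring

private lemma ellGamma3_shiftP (P Q T w : ℂ) (hP : ‖P‖ < 1) (hQ : ‖Q‖ < 1) (hT : ‖T‖ < 1)
    (hP0 : P ≠ 0) (hw : ∀ j l : ℕ, 1 - w * Q ^ j * T ^ l ≠ 0) :
    ellGamma3 (P * w) P Q T = ellGamma w Q T * ellGamma3 w P Q T := by
  rw [ellGamma3_swap (P * w) P Q T, ellGamma3_swap w P Q T]
  exact ellGamma3_shiftQ Q P T w hQ hP hT hP0 hw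

private lemma notPole_ne {w P T : ℂ} (h : notPole w P T) :
    ∀ j l : ℕ, 1 - w * P ^ j * T ^ l ≠ 0 := by
  intro j l heq
  apply h j l
  have h1 : w * (P ^ j * T ^ l) = 1 := by linear_combination -heq
  rw [zpow_neg, zpow_neg, zpow_natCast, zpow_natCast, ← mul_inv]
  exact eq_inv_of_mul_eq_one_left h1

/-- The lens-space elliptic gamma function as a ratio of second order elliptic gamma
functions (formula (3.4) of the paper). -/
theorem lensGamma_as_ratio_of_ellGamma3
    (r : ℕ) (hr : 1 ≤ r) (p q : ℂ) (hp : p ≠ 0) (hq : q ≠ 0)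
    (hp1 : ‖p‖ < 1) (hq1 : ‖q‖ < 1)
    (m : ℤ) (z : ℂ) (hz : z ≠ 0)
    (hreg : lensReg r z m p q)
    (hden1 : ellGamma3 (q ^ ((r : ℤ) - m) * z) (p ^ r) (q ^ r) (p * q) ≠ 0)
    (hden2 : ellGamma3 (p ^ m * z) (p ^ r) (q ^ r) (p * q) ≠ 0) :
    lensGamma r z m p q =
      (ellGamma3 ((p * q) ^ m * q ^ ((r : ℤ) - m) * z) (p ^ r) (q ^ r) (p * q) /
          ellGamma3 (q ^ ((r : ℤ) - m) * z) (p ^ r) (q ^ r) (p * q)) *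
        (ellGamma3 ((p * q) ^ ((r : ℤ) - m) * p ^ m * z) (p ^ r) (q ^ r) (p * q) /
          ellGamma3 (p ^ m * z) (p ^ r) (q ^ r) (p * q)) := by
  obtain ⟨hreg1, hreg2⟩ := hreg
  have hpn : ‖p‖ < 1 := hp1
  have hqn : ‖q‖ < 1 := hq1
  have hPn : ‖(p : ℂ) ^ r‖ < 1 := by
    rw [norm_pow]
    exact lt_of_le_of_lt (pow_le_of_le_one (norm_nonneg _) (le_of_lt hpn) (by omega)) hpn
  have hQn : ‖(q : ℂ) ^ r‖ < 1 := by
    rw [norm_pow]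
    exact lt_of_le_of_lt (pow_le_of_le_one (norm_nonneg _) (le_of_lt hqn) (by omega)) hqn
  have hTn : ‖p * q‖ < 1 := by
    rw [norm_mul]
    nlinarith [norm_nonneg p, norm_nonneg q]
  have hP0 : (p : ℂ) ^ r ≠ 0 := pow_ne_zero _ hp
  have hQ0 : (q : ℂ) ^ r ≠ 0 := pow_ne_zero _ hq
  have hwa := notPole_ne hreg1
  have hwb := notPole_ne hreg2
  have S1 := ellGamma3_shiftQ (p ^ r) (q ^ r) (p * q) (z * p ^ m) hPn hQn hTn hQ0 hwa
  have S2 := ellGamma3_shiftP (p ^ r) (q ^ r) (p * q) (z * q ^ ((r : ℤ) - m))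
    hPn hQn hTn hP0 hwb
  have e1 : (p * q) ^ m * q ^ ((r : ℤ) - m) * z = q ^ r * (z * p ^ m) := by
    have hqq : (q : ℂ) ^ (m : ℤ) * q ^ ((r : ℤ) - m) = q ^ (r : ℕ) := by
      rw [← zpow_add₀ hq, show m + ((r : ℤ) - m) = (r : ℤ) by ring, zpow_natCast]
    calc (p * q) ^ m * q ^ ((r : ℤ) - m) * z
        = (q ^ (m : ℤ) * q ^ ((r : ℤ) - m)) * (z * p ^ m) := by rw [mul_zpow]; ring
      _ = q ^ (r : ℕ) * (z * p ^ m) := by rw [hqq]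
  have e2 : (p * q) ^ ((r : ℤ) - m) * p ^ m * z = p ^ r * (z * q ^ ((r : ℤ) - m)) := by
    have hpp : (p : ℂ) ^ ((r : ℤ) - m) * p ^ (m : ℤ) = p ^ (r : ℕ) := by
      rw [← zpow_add₀ hp, show ((r : ℤ) - m) + m = (r : ℤ) by ring, zpow_natCast]
    calc (p * q) ^ ((r : ℤ) - m) * p ^ m * z
        = (p ^ ((r : ℤ) - m) * p ^ (m : ℤ)) * (z * q ^ ((r : ℤ) - m)) := by
          rw [mul_zpow]; ring
      _ = p ^ (r : ℕ) * (z * q ^ ((r : ℤ) - m)) := by rw [hpp]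
  have e3 : (q : ℂ) ^ ((r : ℤ) - m) * z = z * q ^ ((r : ℤ) - m) := mul_comm _ _
  have e4 : (p : ℂ) ^ (m : ℤ) * z = z * p ^ (m : ℤ) := mul_comm _ _
  rw [e3] at hden1
  rw [e4] at hden2
  rw [e1, e2, e3, e4, lensGamma, S1, S2]
  field_simp
end
end

section
/- Let r ≥ 1 be an integer and p, q nonzero complex numbers with |p| < 1, |q| < 1. Then lim_{z→1} (1 − z) · γ^{(r)}(z, 0; p,q) = 1 / ((p^r;p^r)_∞ (q^r;q^r)_∞). -/
open Complex Finset

noncomputable section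

namespace LensAux

lemma term_ne_zero {w : ℂ} (h : ‖w‖ < 1) : (1 : ℂ) - w ≠ 0 := by
  intro h0
  have : w = 1 := by linear_combination -h0
  simp [this] at h

lemma term_mem_slitPlane {w : ℂ} (h : ‖w‖ < 1) : (1 : ℂ) - w ∈ slitPlane := by
  rw [Complex.mem_slitPlane_iff]
  left
  have : w.re ≤ ‖w‖ := Complex.re_le_norm w
  simp only [Complex.sub_re, Complex.one_re]
  linarith

lemma norm_log_one_sub_le {w : ℂ} {δ : ℝ} (h : ‖w‖ ≤ δ) (hδ : δ < 1) :
    ‖Complex.log (1 - w)‖ ≤ (δ * (1 - δ)⁻¹ / 2 + 1) * ‖w‖ := by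
  have hw1 : ‖w‖ < 1 := lt_of_le_of_lt h hδ
  have hw1' : ‖-w‖ < 1 := by simpa using hw1
  have := Complex.norm_log_one_add_le hw1'
  rw [show (1 : ℂ) + -w = 1 - w by ring] at this
  refine this.trans ?_
  rw [norm_neg] at *
  have h0 : (0:ℝ) ≤ ‖w‖ := norm_nonneg w
  have hinv : (1 - ‖w‖)⁻¹ ≤ (1 - δ)⁻¹ := by
    apply inv_anti₀ <;> linarith
  have hδ0 : (0:ℝ) ≤ δ := le_trans h0 h
  have hinv0 : (0:ℝ) ≤ (1 - ‖w‖)⁻¹ := by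
    rw [inv_nonneg]; linarith
  have h2 : ‖w‖ ^ 2 ≤ δ * ‖w‖ := by nlinarith
  have key : ‖w‖ ^ 2 * (1 - ‖w‖)⁻¹ ≤ δ * ‖w‖ * (1 - δ)⁻¹ :=
    mul_le_mul h2 hinv hinv0 (by positivity)
  nlinarith [key]

variable {ι : Type*}

/-- Key lemma: an absolutely convergent product `∏ (1 - cᵢ)` with all `‖cᵢ‖ ≤ δ < 1`
has product `exp (∑ log (1 - cᵢ))`. -/
lemma keyProd (c : ι → ℂ) {δ : ℝ} (hs : Summable fun i => ‖c i‖)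
    (hb : ∀ i, ‖c i‖ ≤ δ) (hδ : δ < 1) :
    HasProd (fun i => 1 - c i) (Complex.exp (∑' i, Complex.log (1 - c i))) := by
  have hlog : Summable fun i => Complex.log (1 - c i) := by
    apply Summable.of_norm_bounded (g := fun i => (δ * (1 - δ)⁻¹ / 2 + 1) * ‖c i‖)
      (hs.mul_left _)
    intro i
    exact norm_log_one_sub_le (hb i) hδ
  have h1 : ∀ i, ‖c i‖ < 1 := fun i => lt_of_le_of_lt (hb i) hδ
  have hpe := hlog.hasSum.cexp
  rw [show (fun i => (1:ℂ) - c i) = fun i => Complex.exp (Complex.log (1 - c i)) from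
    funext fun i => (Complex.exp_log (term_ne_zero (h1 i))).symm]
  exact hpe

lemma keyHasProd (c : ι → ℂ) {δ : ℝ} (hs : Summable fun i => ‖c i‖)
    (hb : ∀ i, ‖c i‖ ≤ δ) (hδ : δ < 1) :
    HasProd (fun i => 1 - c i) (∏' i, (1 - c i)) := by
  have h := keyProd c hs hb hδ
  rwa [← h.tprod_eq] at h

lemma keyNeZero (c : ι → ℂ) {δ : ℝ} (hs : Summable fun i => ‖c i‖)
    (hb : ∀ i, ‖c i‖ ≤ δ) (hδ : δ < 1) :
    (∏' i, (1 - c i)) ≠ 0 := by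
  rw [(keyProd c hs hb hδ).tprod_eq]
  exact Complex.exp_ne_zero _

/-- Continuity of `z ↦ ∏ (1 - cᵢ z)` on a ball. -/
lemma keyCont (c : ι → ℂ) {m R : ℝ} (hs : Summable fun i => ‖c i‖)
    (hm : ∀ i, ‖c i‖ ≤ m) (hm0 : 0 ≤ m) (hR : 0 < R) (hmR : m * R < 1) :
    ContinuousOn (fun z => ∏' i, (1 - c i * z)) (Metric.ball (0 : ℂ) R) := by
  have hbz : ∀ i, ∀ z ∈ Metric.ball (0 : ℂ) R, ‖c i * z‖ ≤ m * R := by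
    intro i z hz
    rw [Metric.mem_ball, dist_zero_right] at hz
    rw [norm_mul]
    exact mul_le_mul (hm i) hz.le (norm_nonneg z) hm0
  have hcontL : ContinuousOn (fun z => ∑' i, Complex.log (1 - c i * z))
      (Metric.ball (0 : ℂ) R) := by
    apply continuousOn_tsum (u := fun i => (m * R * (1 - m * R)⁻¹ / 2 + 1) * (‖c i‖ * R))
    · intro i
      apply ContinuousOn.clog
      · fun_prop
      · intro z hz
        exact term_mem_slitPlane (lt_of_le_of_lt (hbz i z hz) hmR)
    · exact (hs.mul_right R).mul_left _
    · intro i z hz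
      refine (norm_log_one_sub_le (hbz i z hz) hmR).trans ?_
      gcongr
      · rw [norm_mul]
        rw [Metric.mem_ball, dist_zero_right] at hz
        exact mul_le_mul le_rfl hz.le (norm_nonneg z) (norm_nonneg _)
  have heq : Set.EqOn (fun z => ∏' i, (1 - c i * z))
      (fun z => Complex.exp (∑' i, Complex.log (1 - c i * z))) (Metric.ball (0 : ℂ) R) := by
    intro z hz
    exact (keyProd (fun i => c i * z) ((hs.mul_right ‖z‖).congr fun i => (norm_mul _ _).symm)
      (fun i => hbz i z hz) hmR).tprod_eq
  exact (Complex.continuous_exp.comp_continuousOn hcontL).congr heq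

/-- Division of HasProd in a field. -/
lemma hasProd_div {N D : ι → ℂ} {a b : ℂ} (hN : HasProd N a) (hD : HasProd D b)
    (hb : b ≠ 0) : HasProd (fun i => N i / D i) (a / b) := by
  have := Filter.Tendsto.div hN hD hb
  simpa [HasProd, Finset.prod_div_distrib, Pi.div_def] using this



def cA1 (P Q : ℂ) : ℕ × ℕ → ℂ := fun i => P ^ (i.1 + 1) * Q ^ (i.2 + 1)
def cC1 (P Q : ℂ) : ℕ × ℕ → ℂ := fun i => if i = (0, 0) then 0 else P ^ i.1 * Q ^ i.2
def cA2 (P Q : ℂ) : ℕ × ℕ → ℂ := fun i => P ^ i.1 * Q ^ (i.2 + 1)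
def cB2 (P Q : ℂ) : ℕ × ℕ → ℂ := fun i => P ^ (i.1 + 1) * Q ^ i.2
def cQ1 (P : ℂ) : ℕ → ℂ := fun j => P ^ (j + 1)

lemma aux1 {x y : ℝ} (hx0 : 0 ≤ x) (hx1 : x ≤ 1) (hy0 : 0 ≤ y) (hy1 : y ≤ 1)
    {j k : ℕ} (hj : 1 ≤ j) : x ^ j * y ^ k ≤ x := by
  calc x ^ j * y ^ k ≤ x ^ 1 * 1 := by
        apply mul_le_mul (pow_le_pow_of_le_one hx0 hx1 hj) (pow_le_one₀ hy0 hy1)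
          (by positivity) (by positivity)
    _ = x := by ring

lemma cA1_bound {P Q : ℂ} (hP : ‖P‖ ≤ 1) (hQ : ‖Q‖ ≤ 1) (i : ℕ × ℕ) :
    ‖cA1 P Q i‖ ≤ max ‖P‖ ‖Q‖ := by
  rw [cA1, norm_mul, norm_pow, norm_pow]
  exact (aux1 (norm_nonneg P) hP (norm_nonneg Q) hQ (by omega)).trans (le_max_left _ _)

lemma cA2_bound {P Q : ℂ} (hP : ‖P‖ ≤ 1) (hQ : ‖Q‖ ≤ 1) (i : ℕ × ℕ) :
    ‖cA2 P Q i‖ ≤ max ‖P‖ ‖Q‖ := by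
  rw [cA2, norm_mul, norm_pow, norm_pow, mul_comm]
  exact (aux1 (norm_nonneg Q) hQ (norm_nonneg P) hP (by omega)).trans (le_max_right _ _)

lemma cB2_bound {P Q : ℂ} (hP : ‖P‖ ≤ 1) (hQ : ‖Q‖ ≤ 1) (i : ℕ × ℕ) :
    ‖cB2 P Q i‖ ≤ max ‖P‖ ‖Q‖ := by
  rw [cB2, norm_mul, norm_pow, norm_pow]
  exact (aux1 (norm_nonneg P) hP (norm_nonneg Q) hQ (by omega)).trans (le_max_left _ _)

lemma cC1_bound {P Q : ℂ} (hP : ‖P‖ ≤ 1) (hQ : ‖Q‖ ≤ 1) (i : ℕ × ℕ) :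
    ‖cC1 P Q i‖ ≤ max ‖P‖ ‖Q‖ := by
  rcases i with ⟨j, k⟩
  rcases eq_or_ne ((j, k) : ℕ × ℕ) (0, 0) with h | h
  · rw [cC1, if_pos h, norm_zero]
    positivity
  · rw [cC1]
    simp only [h, if_false, norm_mul, norm_pow]
    rcases Nat.eq_zero_or_pos j with hj | hj
    · have hk : 1 ≤ k := by
        rcases Nat.eq_zero_or_pos k with hk | hk
        · exact absurd (by simp [hj, hk, Prod.ext_iff]) h
        · exact hk
      rw [mul_comm]
      exact (aux1 (norm_nonneg Q) hQ (norm_nonneg P) hP hk).trans (le_max_right _ _)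
    · exact (aux1 (norm_nonneg P) hP (norm_nonneg Q) hQ hj).trans (le_max_left _ _)

lemma cQ1_bound {P : ℂ} (hP : ‖P‖ ≤ 1) (j : ℕ) : ‖cQ1 P j‖ ≤ ‖P‖ := by
  rw [cQ1, norm_pow]
  calc ‖P‖ ^ (j + 1) ≤ ‖P‖ ^ 1 := pow_le_pow_of_le_one (norm_nonneg P) hP (by omega)
    _ = ‖P‖ := pow_one _

lemma summable_master {P Q : ℂ} (hP : ‖P‖ < 1) (hQ : ‖Q‖ < 1) :
    Summable fun i : ℕ × ℕ => ‖P‖ ^ i.1 * ‖Q‖ ^ i.2 :=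
  (summable_geometric_of_lt_one (norm_nonneg _) hP).mul_of_nonneg
    (summable_geometric_of_lt_one (norm_nonneg _) hQ)
    (fun _ => by positivity) (fun _ => by positivity)

lemma pow_succ_le {x : ℝ} (h0 : 0 ≤ x) (h1 : x ≤ 1) (n : ℕ) : x ^ (n + 1) ≤ x ^ n :=
  pow_le_pow_of_le_one h0 h1 (by omega)

lemma summable_cA1 {P Q : ℂ} (hP : ‖P‖ < 1) (hQ : ‖Q‖ < 1) :
    Summable fun i => ‖cA1 P Q i‖ := by
  apply (summable_master hP hQ).of_nonneg_of_le (fun i => norm_nonneg _)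
  intro i
  rw [cA1, norm_mul, norm_pow, norm_pow]
  exact mul_le_mul (pow_succ_le (norm_nonneg _) hP.le _)
    (pow_succ_le (norm_nonneg _) hQ.le _) (by positivity) (by positivity)

lemma summable_cA2 {P Q : ℂ} (hP : ‖P‖ < 1) (hQ : ‖Q‖ < 1) :
    Summable fun i => ‖cA2 P Q i‖ := by
  apply (summable_master hP hQ).of_nonneg_of_le (fun i => norm_nonneg _)
  intro i
  rw [cA2, norm_mul, norm_pow, norm_pow]
  exact mul_le_mul le_rfl (pow_succ_le (norm_nonneg _) hQ.le _) (by positivity) (by positivity)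

lemma summable_cB2 {P Q : ℂ} (hP : ‖P‖ < 1) (hQ : ‖Q‖ < 1) :
    Summable fun i => ‖cB2 P Q i‖ := by
  apply (summable_master hP hQ).of_nonneg_of_le (fun i => norm_nonneg _)
  intro i
  rw [cB2, norm_mul, norm_pow, norm_pow]
  exact mul_le_mul (pow_succ_le (norm_nonneg _) hP.le _) le_rfl (by positivity) (by positivity)

lemma summable_cC1 {P Q : ℂ} (hP : ‖P‖ < 1) (hQ : ‖Q‖ < 1) :
    Summable fun i => ‖cC1 P Q i‖ := by
  apply (summable_master hP hQ).of_nonneg_of_le (fun i => norm_nonneg _)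
  intro i
  rw [cC1]
  split
  · simp
    positivity
  · rw [norm_mul, norm_pow, norm_pow]

lemma summable_cQ1 {P : ℂ} (hP : ‖P‖ < 1) :
    Summable fun j => ‖cQ1 P j‖ := by
  apply (summable_geometric_of_lt_one (norm_nonneg P) hP).of_nonneg_of_le
    (fun i => norm_nonneg _)
  intro j
  rw [cQ1, norm_pow]
  exact pow_succ_le (norm_nonneg _) hP.le _


/-- Splitting `∏_{(j,k)≠(0,0)} (1-P^jQ^k)` into interior, bottom row, left column. -/
lemma split1 {P Q : ℂ} {aA aP aQ : ℂ}
    (hA : HasProd (fun i => 1 - cA1 P Q i) aA)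
    (hP : HasProd (fun j => 1 - cQ1 P j) aP)
    (hQ : HasProd (fun k => 1 - cQ1 Q k) aQ) :
    HasProd (fun i => 1 - cC1 P Q i) (aA * aP * aQ) := by
  have h1 : HasProd (fun i : ℕ × ℕ =>
      if 1 ≤ i.1 ∧ 1 ≤ i.2 then 1 - P ^ i.1 * Q ^ i.2 else 1) aA := by
    have hinj : Function.Injective (fun jk : ℕ × ℕ => ((jk.1 + 1, jk.2 + 1) : ℕ × ℕ)) := by
      intro x y hxy
      simp only [Prod.mk.injEq] at hxy
      exact Prod.ext (by omega) (by omega)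
    rw [← hinj.hasProd_iff]
    · convert hA using 1
      funext jk
      simp [cA1]
    · intro x hx
      rw [if_neg]
      rintro ⟨h1, h2⟩
      exact hx ⟨(x.1 - 1, x.2 - 1), Prod.ext (by simp; omega) (by simp; omega)⟩
  have h2 : HasProd (fun i : ℕ × ℕ =>
      if i.2 = 0 ∧ 1 ≤ i.1 then 1 - P ^ i.1 else 1) aP := by
    have hinj : Function.Injective (fun j : ℕ => ((j + 1, 0) : ℕ × ℕ)) := by
      intro x y hxy
      simp only [Prod.mk.injEq] at hxy
      omega
    rw [← hinj.hasProd_iff]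
    · convert hP using 1
      funext j
      simp [cQ1]
    · intro x hx
      rw [if_neg]
      rintro ⟨h1, h2⟩
      exact hx ⟨x.1 - 1, Prod.ext (by simp; omega) (by simp [h1])⟩
  have h3 : HasProd (fun i : ℕ × ℕ =>
      if i.1 = 0 ∧ 1 ≤ i.2 then 1 - Q ^ i.2 else 1) aQ := by
    have hinj : Function.Injective (fun k : ℕ => ((0, k + 1) : ℕ × ℕ)) := by
      intro x y hxy
      simp only [Prod.mk.injEq] at hxy
      omega
    rw [← hinj.hasProd_iff]
    · convert hQ using 1
      funext k
      simp [cQ1]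
    · intro x hx
      rw [if_neg]
      rintro ⟨h1, h2⟩
      exact hx ⟨x.2 - 1, Prod.ext (by simp [h1]) (by simp; omega)⟩
  have key := (h1.mul h2).mul h3
  have he : (fun i : ℕ × ℕ => 1 - cC1 P Q i) =
      ((fun i : ℕ × ℕ => if 1 ≤ i.1 ∧ 1 ≤ i.2 then 1 - P ^ i.1 * Q ^ i.2 else 1) *
        fun i : ℕ × ℕ => if i.2 = 0 ∧ 1 ≤ i.1 then 1 - P ^ i.1 else 1) *
        fun i : ℕ × ℕ => if i.1 = 0 ∧ 1 ≤ i.2 then 1 - Q ^ i.2 else 1 := by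
    funext i
    rcases i with ⟨j, k⟩
    rcases j with _ | j <;> rcases k with _ | k <;>
      simp [cC1, Pi.mul_apply, Prod.ext_iff]
  rw [he]
  exact key

/-- Splitting `∏ (1-P^jQ^{k+1})` into left column and interior. -/
lemma split2 {P Q : ℂ} {aD aQ : ℂ}
    (hD : HasProd (fun i => 1 - cA1 P Q i) aD)
    (hQ : HasProd (fun k => 1 - cQ1 Q k) aQ) :
    HasProd (fun i => 1 - cA2 P Q i) (aQ * aD) := by
  have h1 : HasProd (fun i : ℕ × ℕ =>
      if i.1 = 0 then 1 - Q ^ (i.2 + 1) else 1) aQ := by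
    have hinj : Function.Injective (fun k : ℕ => ((0, k) : ℕ × ℕ)) := by
      intro x y hxy
      simpa using hxy
    rw [← hinj.hasProd_iff]
    · have hc : ((fun i : ℕ × ℕ => if i.1 = 0 then 1 - Q ^ (i.2 + 1) else 1) ∘
          fun k : ℕ => ((0, k) : ℕ × ℕ)) = fun k => 1 - cQ1 Q k := by
        funext k; simp [cQ1]
      rw [hc]; exact hQ
    · intro x hx
      rw [if_neg]
      intro h1
      exact hx ⟨x.2, Prod.ext (by simp [h1]) (by simp)⟩
  have h2 : HasProd (fun i : ℕ × ℕ =>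
      if 1 ≤ i.1 then 1 - P ^ i.1 * Q ^ (i.2 + 1) else 1) aD := by
    have hinj : Function.Injective (fun jk : ℕ × ℕ => ((jk.1 + 1, jk.2) : ℕ × ℕ)) := by
      intro x y hxy
      simp only [Prod.mk.injEq] at hxy
      exact Prod.ext (by omega) hxy.2
    rw [← hinj.hasProd_iff]
    · convert hD using 1
      funext jk
      simp [cA1]
    · intro x hx
      rw [if_neg]
      intro h1
      exact hx ⟨(x.1 - 1, x.2), Prod.ext (by simp; omega) (by simp)⟩
  have key := h1.mul h2
  have he : (fun i : ℕ × ℕ => 1 - cA2 P Q i) =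
      (fun i : ℕ × ℕ => if i.1 = 0 then 1 - Q ^ (i.2 + 1) else 1) *
        fun i : ℕ × ℕ => if 1 ≤ i.1 then 1 - P ^ i.1 * Q ^ (i.2 + 1) else 1 := by
    funext i
    rcases i with ⟨j, k⟩
    rcases j with _ | j <;> simp [cA2, Pi.mul_apply]
  rw [he]
  exact key

/-- Splitting `∏ (1-P^{j+1}Q^k)` into bottom row and interior. -/
lemma split3 {P Q : ℂ} {aD aP : ℂ}
    (hD : HasProd (fun i => 1 - cA1 P Q i) aD)
    (hP : HasProd (fun j => 1 - cQ1 P j) aP) :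
    HasProd (fun i => 1 - cB2 P Q i) (aP * aD) := by
  have h1 : HasProd (fun i : ℕ × ℕ =>
      if i.2 = 0 then 1 - P ^ (i.1 + 1) else 1) aP := by
    have hinj : Function.Injective (fun j : ℕ => ((j, 0) : ℕ × ℕ)) := by
      intro x y hxy
      simpa using hxy
    rw [← hinj.hasProd_iff]
    · have hc : ((fun i : ℕ × ℕ => if i.2 = 0 then 1 - P ^ (i.1 + 1) else 1) ∘
          fun j : ℕ => ((j, 0) : ℕ × ℕ)) = fun j => 1 - cQ1 P j := by
        funext j; simp [cQ1]
      rw [hc]; exact hP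
    · intro x hx
      rw [if_neg]
      intro h1
      exact hx ⟨x.1, Prod.ext (by simp) (by simp [h1])⟩
  have h2 : HasProd (fun i : ℕ × ℕ =>
      if 1 ≤ i.2 then 1 - P ^ (i.1 + 1) * Q ^ i.2 else 1) aD := by
    have hinj : Function.Injective (fun jk : ℕ × ℕ => ((jk.1, jk.2 + 1) : ℕ × ℕ)) := by
      intro x y hxy
      simp only [Prod.mk.injEq] at hxy
      exact Prod.ext hxy.1 (by omega)
    rw [← hinj.hasProd_iff]
    · convert hD using 1
      funext jk
      simp [cA1]
    · intro x hx
      rw [if_neg]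
      intro h1
      exact hx ⟨(x.1, x.2 - 1), Prod.ext (by simp) (by simp; omega)⟩
  have key := h1.mul h2
  have he : (fun i : ℕ × ℕ => 1 - cB2 P Q i) =
      (fun i : ℕ × ℕ => if i.2 = 0 then 1 - P ^ (i.1 + 1) else 1) *
        fun i : ℕ × ℕ => if 1 ≤ i.2 then 1 - P ^ (i.1 + 1) * Q ^ i.2 else 1 := by
    funext i
    rcases i with ⟨j, k⟩
    rcases k with _ | k <;> simp [cB2, Pi.mul_apply]
  rw [he]
  exact key

end LensAux

/-- The residue-type limit `lim_{z→1} (1−z) γ^{(r)}(z,0;p,q) = 1/((p^r;p^r)_∞ (q^r;q^r)_∞)`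
(formula (3.17) of the paper). -/
theorem lensGamma_residue_limit
    (r : ℕ) (hr : 1 ≤ r) (p q : ℂ) (hp : p ≠ 0) (hq : q ≠ 0)
    (hp1 : ‖p‖ < 1) (hq1 : ‖q‖ < 1) :
    Filter.Tendsto (fun z : ℂ => (1 - z) * lensGamma r z 0 p q)
      (nhdsWithin 1 {(1 : ℂ)}ᶜ)
      (nhds (1 / (qPochInf (p ^ r) (p ^ r) * qPochInf (q ^ r) (q ^ r)))) := by
  classical
  open LensAux in
  have hp1' : ‖p‖ < 1 := by exact hp1
  have hq1' : ‖q‖ < 1 := by exact hq1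
  have hrne : r ≠ 0 := by omega
  have hP1n : ‖(p ^ r : ℂ)‖ < 1 := by
    rw [norm_pow]
    exact pow_lt_one₀ (norm_nonneg _) hp1' hrne
  have hP2n : ‖(q ^ r : ℂ)‖ < 1 := by
    rw [norm_pow]
    exact pow_lt_one₀ (norm_nonneg _) hq1' hrne
  have hQn : ‖p * q‖ < 1 := by
    rw [norm_mul]
    nlinarith [norm_nonneg p, norm_nonneg q]
  have hP1pos : 0 < ‖(p ^ r : ℂ)‖ := norm_pos_iff.mpr (pow_ne_zero r hp)
  set m0 : ℝ := max (max ‖(p ^ r : ℂ)‖ ‖(q ^ r : ℂ)‖) ‖p * q‖ with hm0def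
  have hm01 : m0 < 1 := max_lt (max_lt hP1n hP2n) hQn
  have hm00 : 0 < m0 := lt_of_lt_of_le hP1pos ((le_max_left _ _).trans (le_max_left _ _))
  have hmax1 : max ‖(p ^ r : ℂ)‖ ‖p * q‖ ≤ m0 :=
    max_le ((le_max_left _ _).trans (le_max_left _ _)) (le_max_right _ _)
  have hmax2 : max ‖(q ^ r : ℂ)‖ ‖p * q‖ ≤ m0 :=
    max_le ((le_max_right _ _).trans (le_max_left _ _)) (le_max_right _ _)
  set δ0 : ℝ := (1 + m0) / 2 with hd0def
  have hδ1 : δ0 < 1 := by rw [hd0def]; linarith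
  have hm0δ : m0 < δ0 := by rw [hd0def]; linarith
  have hδpos : 0 < δ0 := by rw [hd0def]; linarith
  set R : ℝ := δ0 / m0 with hRdef
  have hR0 : 0 < R := div_pos hδpos hm00
  have hR1 : 1 < R := by rw [hRdef, lt_div_iff₀ hm00]; linarith
  have hmR : m0 * R = δ0 := by rw [hRdef]; field_simp
  have hmR1 : m0 * R < 1 := by rw [hmR]; exact hδ1
  -- norm bounds by m0
  have hbA1 : ∀ i, ‖cA1 (p ^ r) (p * q) i‖ ≤ m0 :=
    fun i => (cA1_bound hP1n.le hQn.le i).trans hmax1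
  have hbC1 : ∀ i, ‖cC1 (p ^ r) (p * q) i‖ ≤ m0 :=
    fun i => (cC1_bound hP1n.le hQn.le i).trans hmax1
  have hbA2 : ∀ i, ‖cA2 (q ^ r) (p * q) i‖ ≤ m0 :=
    fun i => (cA2_bound hP2n.le hQn.le i).trans hmax2
  have hbB2 : ∀ i, ‖cB2 (q ^ r) (p * q) i‖ ≤ m0 :=
    fun i => (cB2_bound hP2n.le hQn.le i).trans hmax2
  have hbD : ∀ i, ‖cA1 (q ^ r) (p * q) i‖ ≤ m0 :=
    fun i => (cA1_bound hP2n.le hQn.le i).trans hmax2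
  have hbQP1 : ∀ j, ‖cQ1 (p ^ r) j‖ ≤ m0 :=
    fun j => (cQ1_bound hP1n.le j).trans ((le_max_left _ _).trans (le_max_left _ _))
  have hbQP2 : ∀ j, ‖cQ1 (q ^ r) j‖ ≤ m0 :=
    fun j => (cQ1_bound hP2n.le j).trans ((le_max_right _ _).trans (le_max_left _ _))
  have hbQQ : ∀ j, ‖cQ1 (p * q) j‖ ≤ m0 :=
    fun j => (cQ1_bound hQn.le j).trans (le_max_right _ _)
  -- summability
  have hsA1 := summable_cA1 hP1n hQn
  have hsC1 := summable_cC1 hP1n hQn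
  have hsA2 := summable_cA2 hP2n hQn
  have hsB2 := summable_cB2 hP2n hQn
  have hsD := summable_cA1 hP2n hQn
  have hsQP1 := summable_cQ1 hP1n
  have hsQP2 := summable_cQ1 hP2n
  have hsQQ := summable_cQ1 hQn
  -- scaled HasProd machine
  have keyz : ∀ {ι : Type} (c : ι → ℂ) (w : ℂ), (Summable fun i => ‖c i‖) →
      (∀ i, ‖c i‖ ≤ m0) → ‖w‖ ≤ R →
      HasProd (fun i => 1 - c i * w) (∏' i, (1 - c i * w)) ∧ (∏' i, (1 - c i * w)) ≠ 0 := by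
    intro ι c w hs hb hw
    have hs' : Summable fun i => ‖c i * w‖ := by
      simpa [norm_mul] using hs.mul_right ‖w‖
    have hb' : ∀ i, ‖c i * w‖ ≤ δ0 := by
      intro i
      rw [norm_mul, ← hmR]
      exact mul_le_mul (hb i) hw (norm_nonneg _) hm00.le
    exact ⟨keyHasProd _ hs' hb' hδ1, keyNeZero _ hs' hb' hδ1⟩
  have key1 : ∀ {ι : Type} (c : ι → ℂ), (Summable fun i => ‖c i‖) → (∀ i, ‖c i‖ ≤ m0) →
      HasProd (fun i => 1 - c i) (∏' i, (1 - c i)) ∧ (∏' i, (1 - c i)) ≠ 0 := by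
    intro ι c hs hb
    exact ⟨keyHasProd c hs (fun i => (hb i).trans hm0δ.le) hδ1,
      keyNeZero c hs (fun i => (hb i).trans hm0δ.le) hδ1⟩
  obtain ⟨hHA1, hA1ne⟩ := key1 (cA1 (p ^ r) (p * q)) hsA1 hbA1
  obtain ⟨hHC1, hC1ne⟩ := key1 (cC1 (p ^ r) (p * q)) hsC1 hbC1
  obtain ⟨hHA2, hA2ne⟩ := key1 (cA2 (q ^ r) (p * q)) hsA2 hbA2
  obtain ⟨hHB2, hB2ne⟩ := key1 (cB2 (q ^ r) (p * q)) hsB2 hbB2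
  obtain ⟨hHD, hDne⟩ := key1 (cA1 (q ^ r) (p * q)) hsD hbD
  obtain ⟨hHP1, hP1ne⟩ := key1 (cQ1 (p ^ r)) hsQP1 hbQP1
  obtain ⟨hHP2, hP2ne⟩ := key1 (cQ1 (q ^ r)) hsQP2 hbQP2
  obtain ⟨hHQ, hQne⟩ := key1 (cQ1 (p * q)) hsQQ hbQQ
  -- telescoping identities at z = 1
  have hI1 : (∏' i, (1 - cC1 (p ^ r) (p * q) i)) =
      (∏' i, (1 - cA1 (p ^ r) (p * q) i)) * (∏' j, (1 - cQ1 (p ^ r) j)) *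
        (∏' k, (1 - cQ1 (p * q) k)) :=
    hHC1.unique (split1 hHA1 hHP1 hHQ)
  have hI2 : (∏' i, (1 - cA2 (q ^ r) (p * q) i)) =
      (∏' k, (1 - cQ1 (p * q) k)) * (∏' i, (1 - cA1 (q ^ r) (p * q) i)) :=
    hHA2.unique (split2 hHD hHQ)
  have hI3 : (∏' i, (1 - cB2 (q ^ r) (p * q) i)) =
      (∏' j, (1 - cQ1 (q ^ r) j)) * (∏' i, (1 - cA1 (q ^ r) (p * q) i)) :=
    hHB2.unique (split3 hHD hHP2)
  have hqp1 : qPochInf (p ^ r) (p ^ r) = ∏' j, (1 - cQ1 (p ^ r) j) := by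
    rw [qPochInf]
    exact tprod_congr fun j => by rw [cQ1, pow_succ']
  have hqp2 : qPochInf (q ^ r) (q ^ r) = ∏' j, (1 - cQ1 (q ^ r) j) := by
    rw [qPochInf]
    exact tprod_congr fun j => by rw [cQ1, pow_succ']
  -- continuity
  have h1ball : (1 : ℂ) ∈ Metric.ball (0 : ℂ) R := by
    rw [Metric.mem_ball, dist_zero_right, norm_one]; exact hR1
  have hball : Metric.ball (0 : ℂ) R ∈ nhds (1 : ℂ) := Metric.isOpen_ball.mem_nhds h1ball
  have hcont : ∀ {ι : Type} (c : ι → ℂ), (Summable fun i => ‖c i‖) → (∀ i, ‖c i‖ ≤ m0) →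
      ContinuousAt (fun z : ℂ => ∏' i, (1 - c i * z)) 1 := by
    intro ι c hs hb
    exact (keyCont c hs hb hm00.le hR0 hmR1).continuousAt hball
  have hcInv : ∀ {ι : Type} (c : ι → ℂ), (Summable fun i => ‖c i‖) → (∀ i, ‖c i‖ ≤ m0) →
      ContinuousAt (fun z : ℂ => ∏' i, (1 - c i * z⁻¹)) 1 := by
    intro ι c hs hb
    have h1 : ContinuousAt (fun z : ℂ => ∏' i, (1 - c i * z)) ((1 : ℂ)⁻¹) := by
      rw [inv_one]; exact hcont c hs hb
    exact h1.comp (continuousAt_inv₀ one_ne_zero)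
  set Φ : ℂ → ℂ := fun z =>
    ((∏' i, (1 - cA1 (p ^ r) (p * q) i * z⁻¹)) * (∏' i, (1 - cA2 (q ^ r) (p * q) i * z⁻¹))) /
      ((∏' i, (1 - cC1 (p ^ r) (p * q) i * z)) * (∏' i, (1 - cB2 (q ^ r) (p * q) i * z)))
    with hPhidef
  have e1 : (∏' i, (1 - cA1 (p ^ r) (p * q) i * (1 : ℂ)⁻¹)) =
      ∏' i, (1 - cA1 (p ^ r) (p * q) i) := tprod_congr fun i => by rw [inv_one, mul_one]
  have e2 : (∏' i, (1 - cA2 (q ^ r) (p * q) i * (1 : ℂ)⁻¹)) =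
      ∏' i, (1 - cA2 (q ^ r) (p * q) i) := tprod_congr fun i => by rw [inv_one, mul_one]
  have e3 : (∏' i, (1 - cC1 (p ^ r) (p * q) i * (1 : ℂ))) =
      ∏' i, (1 - cC1 (p ^ r) (p * q) i) := tprod_congr fun i => by rw [mul_one]
  have e4 : (∏' i, (1 - cB2 (q ^ r) (p * q) i * (1 : ℂ))) =
      ∏' i, (1 - cB2 (q ^ r) (p * q) i) := tprod_congr fun i => by rw [mul_one]
  have hPhicont : ContinuousAt Φ 1 := by
    rw [hPhidef]
    refine ContinuousAt.div ?_ ?_ ?_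
    · exact (hcInv _ hsA1 hbA1).mul (hcInv _ hsA2 hbA2)
    · exact (hcont _ hsC1 hbC1).mul (hcont _ hsB2 hbB2)
    · show (∏' i, (1 - cC1 (p ^ r) (p * q) i * (1 : ℂ))) *
        (∏' i, (1 - cB2 (q ^ r) (p * q) i * (1 : ℂ))) ≠ 0
      rw [e3, e4]
      exact mul_ne_zero hC1ne hB2ne
  have hPhi1 : Φ 1 = 1 / (qPochInf (p ^ r) (p ^ r) * qPochInf (q ^ r) (q ^ r)) := by
    simp only [hPhidef]
    rw [e1, e2, e3, e4, hI1, hI2, hI3, hqp1, hqp2]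
    field_simp
  -- eventual equality
  set U : Set ℂ := {z : ℂ | ‖z‖ < R} ∩ {z : ℂ | R⁻¹ < ‖z‖} with hUdef
  have hUopen : IsOpen U :=
    (isOpen_lt continuous_norm continuous_const).inter
      (isOpen_lt continuous_const continuous_norm)
  have hU1 : (1 : ℂ) ∈ U := by
    constructor
    · show ‖(1 : ℂ)‖ < R
      rw [norm_one]; exact hR1
    · show R⁻¹ < ‖(1 : ℂ)‖
      rw [norm_one]
      exact (inv_lt_one₀ hR0).2 hR1
  have hev : ∀ᶠ z in nhdsWithin 1 {(1 : ℂ)}ᶜ,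
      ((1 : ℂ) - z) * lensGamma r z 0 p q = Φ z := by
    filter_upwards [nhdsWithin_le_nhds (hUopen.mem_nhds hU1), self_mem_nhdsWithin]
      with z hzU hz1
    have hz1' : z ≠ 1 := hz1
    obtain ⟨hzR, hzR'⟩ := hzU
    have hzR : ‖z‖ < R := hzR
    have hzR' : R⁻¹ < ‖z‖ := hzR'
    have hz0 : z ≠ 0 := by
      intro h
      rw [h, norm_zero] at hzR'
      linarith [inv_pos.2 hR0]
    have hzpos : 0 < ‖z‖ := lt_trans (inv_pos.2 hR0) hzR'
    have hzinv : ‖z⁻¹‖ ≤ R := by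
      rw [norm_inv]
      exact (inv_le_comm₀ hzpos hR0).2 hzR'.le
    have h1z : (1 : ℂ) - z ≠ 0 := sub_ne_zero.2 fun h => hz1' h.symm
    obtain ⟨hN1, hN1ne⟩ := keyz (cA1 (p ^ r) (p * q)) z⁻¹ hsA1 hbA1 hzinv
    obtain ⟨hC1z, hC1zne⟩ := keyz (cC1 (p ^ r) (p * q)) z hsC1 hbC1 hzR.le
    obtain ⟨hN2, hN2ne⟩ := keyz (cA2 (q ^ r) (p * q)) z⁻¹ hsA2 hbA2 hzinv
    obtain ⟨hB2z, hB2zne⟩ := keyz (cB2 (q ^ r) (p * q)) z hsB2 hbB2 hzR.le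
    have hD1 : HasProd (fun i : ℕ × ℕ => 1 - z * (p ^ r) ^ i.1 * (p * q) ^ i.2)
        ((1 - z) * ∏' i, (1 - cC1 (p ^ r) (p * q) i * z)) := by
      have hone : HasProd (fun i : ℕ × ℕ => if i = ((0, 0) : ℕ × ℕ) then 1 - z else 1)
          (1 - z) := hasProd_ite_eq _ _
      have hmul := hone.mul hC1z
      have he : (fun i : ℕ × ℕ => 1 - z * (p ^ r) ^ i.1 * (p * q) ^ i.2) =
          (fun i : ℕ × ℕ => if i = ((0, 0) : ℕ × ℕ) then 1 - z else 1) *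
            fun i => 1 - cC1 (p ^ r) (p * q) i * z := by
        funext i
        rcases eq_or_ne i ((0, 0) : ℕ × ℕ) with h | h
        · subst h
          simp [cC1]
        · simp only [cC1, h, if_neg h, if_false, Pi.mul_apply, one_mul]
          ring
      rw [he]
      exact hmul
    have hg1 : ellGamma z (p ^ r) (p * q) =
        (∏' i, (1 - cA1 (p ^ r) (p * q) i * z⁻¹)) /
          ((1 - z) * ∏' i, (1 - cC1 (p ^ r) (p * q) i * z)) := by
      rw [ellGamma]
      have hpt : ∀ jk : ℕ × ℕ,
          (1 - z⁻¹ * (p ^ r) ^ (jk.1 + 1) * (p * q) ^ (jk.2 + 1)) /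
            (1 - z * (p ^ r) ^ jk.1 * (p * q) ^ jk.2) =
          (1 - cA1 (p ^ r) (p * q) jk * z⁻¹) /
            (1 - z * (p ^ r) ^ jk.1 * (p * q) ^ jk.2) := by
        intro jk
        rw [cA1]
        ring_nf
      rw [tprod_congr hpt]
      exact (hasProd_div hN1 hD1 (mul_ne_zero h1z hC1zne)).tprod_eq
    have hqr : (q : ℂ) ^ r ≠ 0 := pow_ne_zero r hq
    have hg2 : ellGamma (z * q ^ r) (q ^ r) (p * q) =
        (∏' i, (1 - cA2 (q ^ r) (p * q) i * z⁻¹)) /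
          (∏' i, (1 - cB2 (q ^ r) (p * q) i * z)) := by
      rw [ellGamma]
      have hpt : ∀ jk : ℕ × ℕ,
          (1 - (z * q ^ r)⁻¹ * ((q : ℂ) ^ r) ^ (jk.1 + 1) * (p * q) ^ (jk.2 + 1)) /
            (1 - (z * q ^ r) * ((q : ℂ) ^ r) ^ jk.1 * (p * q) ^ jk.2) =
          (1 - cA2 (q ^ r) (p * q) jk * z⁻¹) / (1 - cB2 (q ^ r) (p * q) jk * z) := by
        intro jk
        rw [cA2, cB2]
        have hnum : (z * q ^ r)⁻¹ * ((q : ℂ) ^ r) ^ (jk.1 + 1) * (p * q) ^ (jk.2 + 1) =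
            ((q : ℂ) ^ r) ^ jk.1 * (p * q) ^ (jk.2 + 1) * z⁻¹ := by
          rw [mul_inv, pow_succ]
          field_simp
        have hden : (z * q ^ r) * ((q : ℂ) ^ r) ^ jk.1 * (p * q) ^ jk.2 =
            ((q : ℂ) ^ r) ^ (jk.1 + 1) * (p * q) ^ jk.2 * z := by
          rw [pow_succ]
          ring
        rw [hnum, hden]
      rw [tprod_congr hpt]
      exact (hasProd_div hN2 hB2z hB2zne).tprod_eq
    have hlens : lensGamma r z 0 p q =
        ellGamma z (p ^ r) (p * q) * ellGamma (z * q ^ r) (q ^ r) (p * q) := by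
      rw [lensGamma]
      norm_num [zpow_natCast]
    rw [hlens, hg1, hg2]
    simp only [hPhidef]
    field_simp
  have hT : Filter.Tendsto Φ (nhdsWithin 1 {(1 : ℂ)}ᶜ) (nhds (Φ 1)) :=
    hPhicont.tendsto.mono_left nhdsWithin_le_nhds
  rw [hPhi1] at hT
  have hev' : (fun z : ℂ => (1 - z) * lensGamma r z 0 p q) =ᶠ[nhdsWithin 1 {(1 : ℂ)}ᶜ] Φ := hev
  exact Filter.Tendsto.congr' hev'.symm hT
end
end

section
/- Let p, q be nonzero complex numbers with |p| < 1, |q| < 1 and let m ∈ ℤ. For every nonzero z ∈ ℂ not a pole of either side, γ^{(1)}(z, m; p,q) = θ(z; pq | p)_m · θ(qz; pq | q)_{−m} · Γ(z; p,q). Consequently, with σ, τ ∈ ℂ satisfying σ² = pq, τ² = p/q and στ = p, one has Γ^{(1)}(z, m; p,q) = Γ(z; p,q) for every m ∈ ℤ. -/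
open Complex Finset

noncomputable section

/-- The elliptic Pochhammer symbol `θ(x;p|q)_n`. -/
def ellPoch (x p q : ℂ) (n : ℤ) : ℂ :=
  if 0 ≤ n then ∏ j ∈ Finset.range n.toNat, theta0 (x * q ^ (j : ℤ)) p
  else (∏ j ∈ Finset.range (-n).toNat, theta0 (x * q ^ (-(j : ℤ) - 1)) p)⁻¹

namespace LensAux

open Filter

variable {ι : Type*}

lemma hasProd_zero_of_eq_zero {f : ι → ℂ} (i₀ : ι) (h : f i₀ = 0) : HasProd f 0 := by
  have hev : ∀ᶠ s : Finset ι in atTop, ∏ i ∈ s, f i = 0 := by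
    filter_upwards [Filter.eventually_ge_atTop ({i₀} : Finset ι)] with s hs
    exact Finset.prod_eq_zero (by simpa using hs) h
  exact Tendsto.congr' (hev.mono fun s hs => hs.symm) tendsto_const_nhds

lemma eventually_small {u : ι → ℂ} (hu : Summable u) :
    ∀ᶠ i in cofinite, ‖u i‖ ≤ 1 / 2 := by
  have h2 := hu.tendsto_cofinite_zero (Metric.closedBall_mem_nhds (0 : ℂ)
    (by norm_num : (0:ℝ) < 1/2))
  refine Filter.mem_of_superset h2 fun i hi => ?_
  simpa [Metric.mem_closedBall, dist_zero_right] using hi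

lemma multipliable_one_add (v : ι → ℂ) (hv : Summable v) :
    Multipliable fun i => 1 + v i := by
  by_cases hex : ∃ i, 1 + v i = 0
  · obtain ⟨i₀, h0⟩ := hex
    exact ⟨0, hasProd_zero_of_eq_zero i₀ h0⟩
  push_neg at hex
  have hlog : Summable fun i => Complex.log (1 + v i) := by
    refine Summable.of_norm_bounded_eventually (g := fun i => 3 / 2 * ‖v i‖)
      (hv.norm.mul_left _) ?_
    filter_upwards [eventually_small hv] with i hi
    exact Complex.norm_log_one_add_half_le_self hi
  exact Complex.multipliable_of_summable_log hlog

lemma multipliable_one_sub (u : ι → ℂ) (hu : Summable u) :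
    Multipliable fun i => 1 - u i := by
  have := multipliable_one_add (fun i => -u i) hu.neg
  simpa [sub_eq_add_neg] using this

lemma multipliable_inv_one_sub (u : ι → ℂ) (hu : Summable u) (h1 : ∀ i, 1 - u i ≠ 0) :
    Multipliable fun i => (1 - u i)⁻¹ := by
  have hv : Summable fun i => u i / (1 - u i) := by
    refine Summable.of_norm_bounded_eventually (g := fun i => 2 * ‖u i‖) (hu.norm.mul_left _) ?_
    filter_upwards [eventually_small hu] with i hi
    have h12 : (1:ℝ)/2 ≤ ‖1 - u i‖ := by
      have h := norm_sub_norm_le (1 : ℂ) (u i)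
      simp only [norm_one] at h
      linarith
    rw [norm_div, div_le_iff₀ (by linarith)]
    nlinarith [norm_nonneg (u i)]
  refine (multipliable_one_add _ hv).congr fun i => ?_
  have h := h1 i
  field_simp
  ring

lemma summable_geom_left (w b : ℂ) (hb : ‖b‖ < 1) :
    Summable fun k : ℕ => w * b ^ k := by
  have : Summable fun k : ℕ => b ^ k :=
    summable_geometric_iff_norm_lt_one.mpr (by exact hb)
  exact this.mul_left w

lemma summable_grid (w a b : ℂ) (ha : ‖a‖ < 1) (hb : ‖b‖ < 1) :
    Summable fun x : ℕ × ℕ => w * a ^ x.1 * b ^ x.2 := by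
  apply Summable.of_norm
  have hf : Summable fun j : ℕ => ‖w‖ * ‖a‖ ^ j :=
    (summable_geometric_of_lt_one (norm_nonneg a) (by exact ha)).mul_left _
  have hg : Summable fun k : ℕ => ‖b‖ ^ k :=
    summable_geometric_of_lt_one (norm_nonneg b) (by exact hb)
  have h := hf.mul_of_nonneg hg (fun j => by positivity) (fun k => by positivity)
  exact h.congr fun x => by simp [norm_mul, norm_pow, mul_assoc]

end LensAux

namespace LensAux

lemma tprod_peel2 (F : ℕ × ℕ → ℂ)
    (h0 : Multipliable fun k : ℕ => F (0, k))
    (hs : Multipliable fun y : ℕ × ℕ => F (y.1 + 1, y.2)) :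
    ∏' x : ℕ × ℕ, F x = (∏' k : ℕ, F (0, k)) * ∏' y : ℕ × ℕ, F (y.1 + 1, y.2) := by
  classical
  let e : ℕ ≃ {x : ℕ × ℕ | x.1 = 0} :=
      { toFun := fun k => ⟨(0, k), rfl⟩
        invFun := fun x => x.1.2
        left_inv := fun k => rfl
        right_inv := fun x => by
          rcases x with ⟨⟨a, b⟩, hx⟩
          simp only [Set.mem_setOf_eq] at hx
          subst hx
          rfl }
  let e' : ℕ × ℕ ≃ ↑{x : ℕ × ℕ | x.1 = 0}ᶜ :=
      { toFun := fun y => ⟨(y.1 + 1, y.2), by simp⟩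
        invFun := fun x => (x.1.1 - 1, x.1.2)
        left_inv := fun y => by simp
        right_inv := fun x => by
          rcases x with ⟨⟨a, b⟩, hx⟩
          simp only [Set.mem_compl_iff, Set.mem_setOf_eq] at hx
          exact Subtype.ext (show (a - 1 + 1, b) = (a, b) from Prod.ext (by omega) rfl) }
  have h1 : Multipliable (F ∘ ((↑) : {x : ℕ × ℕ | x.1 = 0} → ℕ × ℕ)) :=
    e.multipliable_iff.mp h0
  have h2 : Multipliable (F ∘ ((↑) : ↑{x : ℕ × ℕ | x.1 = 0}ᶜ → ℕ × ℕ)) :=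
    e'.multipliable_iff.mp hs
  rw [← Multipliable.tprod_mul_tprod_compl h1 h2]
  congr 1
  · exact (e.tprod_eq (fun x : {x : ℕ × ℕ | x.1 = 0} => F x)).symm
  · exact (e'.tprod_eq (fun x : ↑{x : ℕ × ℕ | x.1 = 0}ᶜ => F x)).symm

lemma tprod_split (F : ℕ × ℕ → ℂ)
    (hle : Multipliable fun y : ℕ × ℕ => F (y.1 + y.2, y.2))
    (hgt : Multipliable fun y : ℕ × ℕ => F (y.2, y.1 + y.2 + 1)) :
    ∏' x : ℕ × ℕ, F x =
      (∏' y : ℕ × ℕ, F (y.1 + y.2, y.2)) * ∏' y : ℕ × ℕ, F (y.2, y.1 + y.2 + 1) := by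
  classical
  let e : ℕ × ℕ ≃ {x : ℕ × ℕ | x.2 ≤ x.1} :=
      { toFun := fun y => ⟨(y.1 + y.2, y.2), by simp only [Set.mem_setOf_eq]; omega⟩
        invFun := fun x => (x.1.1 - x.1.2, x.1.2)
        left_inv := fun y => by
          exact Prod.ext (show y.1 + y.2 - y.2 = y.1 by omega) rfl
        right_inv := fun x => by
          rcases x with ⟨⟨a, b⟩, hx⟩
          simp only [Set.mem_setOf_eq] at hx
          exact Subtype.ext (show (a - b + b, b) = (a, b) from Prod.ext (by omega) rfl) }
  let e' : ℕ × ℕ ≃ ↑{x : ℕ × ℕ | x.2 ≤ x.1}ᶜ :=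
      { toFun := fun y => ⟨(y.2, y.1 + y.2 + 1), by
          simp only [Set.mem_compl_iff, Set.mem_setOf_eq]; omega⟩
        invFun := fun x => (x.1.2 - x.1.1 - 1, x.1.1)
        left_inv := fun y => by
          exact Prod.ext (show y.1 + y.2 + 1 - y.2 - 1 = y.1 by omega) rfl
        right_inv := fun x => by
          rcases x with ⟨⟨a, b⟩, hx⟩
          simp only [Set.mem_compl_iff, Set.mem_setOf_eq] at hx
          exact Subtype.ext (show (a, b - a - 1 + a + 1) = (a, b) from
            Prod.ext rfl (by omega)) }
  have h1 : Multipliable (F ∘ ((↑) : {x : ℕ × ℕ | x.2 ≤ x.1} → ℕ × ℕ)) :=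
    e.multipliable_iff.mp hle
  have h2 : Multipliable (F ∘ ((↑) : ↑{x : ℕ × ℕ | x.2 ≤ x.1}ᶜ → ℕ × ℕ)) :=
    e'.multipliable_iff.mp hgt
  rw [← Multipliable.tprod_mul_tprod_compl h1 h2]
  congr 1
  · exact (e.tprod_eq (fun x : {x : ℕ × ℕ | x.2 ≤ x.1} => F x)).symm
  · exact (e'.tprod_eq (fun x : ↑{x : ℕ × ℕ | x.2 ≤ x.1}ᶜ => F x)).symm

/-- denominator-inverse double product -/
def EprI (w a b : ℂ) : ℂ := ∏' x : ℕ × ℕ, (1 - w * a ^ x.1 * b ^ x.2)⁻¹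

/-- numerator double product -/
def Epr (w a b : ℂ) : ℂ := ∏' x : ℕ × ℕ, (1 - w * a ^ x.1 * b ^ x.2)

/-- one-index inverse product -/
def GprI (w b : ℂ) : ℂ := ∏' k : ℕ, (1 - w * b ^ k)⁻¹

lemma multE (w a b : ℂ) (ha : ‖a‖ < 1) (hb : ‖b‖ < 1) :
    Multipliable fun x : ℕ × ℕ => 1 - w * a ^ x.1 * b ^ x.2 :=
  multipliable_one_sub _ (summable_grid w a b ha hb)

lemma multEI (w a b : ℂ) (ha : ‖a‖ < 1) (hb : ‖b‖ < 1)
    (h : ∀ j k : ℕ, w * a ^ j * b ^ k ≠ 1) :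
    Multipliable fun x : ℕ × ℕ => (1 - w * a ^ x.1 * b ^ x.2)⁻¹ :=
  multipliable_inv_one_sub _ (summable_grid w a b ha hb)
    fun x => sub_ne_zero_of_ne (Ne.symm (h x.1 x.2))

lemma multG (w b : ℂ) (hb : ‖b‖ < 1) :
    Multipliable fun k : ℕ => 1 - w * b ^ k :=
  multipliable_one_sub _ (summable_geom_left w b hb)

lemma multGI (w b : ℂ) (hb : ‖b‖ < 1) (h : ∀ k : ℕ, w * b ^ k ≠ 1) :
    Multipliable fun k : ℕ => (1 - w * b ^ k)⁻¹ :=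
  multipliable_inv_one_sub _ (summable_geom_left w b hb)
    fun k => sub_ne_zero_of_ne (Ne.symm (h k))

lemma qPochInf_peel (w b : ℂ) (hb : ‖b‖ < 1) :
    qPochInf w b = (1 - w) * qPochInf (w * b) b := by
  have hm : Multipliable fun n : ℕ => 1 - w * b ^ (n + 1) :=
    (multG (w * b) b hb).congr fun k => by ring_nf
  rw [qPochInf, tprod_eq_zero_mul' (f := fun k : ℕ => 1 - w * b ^ k) hm]
  congr 1
  · simp
  · rw [qPochInf]
    exact tprod_congr fun k => by ring_nf

lemma Epr_peel (w a b : ℂ) (ha : ‖a‖ < 1) (hb : ‖b‖ < 1) :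
    Epr w a b = qPochInf w b * Epr (w * a) a b := by
  have h0 : Multipliable fun k : ℕ => 1 - w * a ^ 0 * b ^ k :=
    (multG w b hb).congr fun k => by ring_nf
  have hs : Multipliable fun y : ℕ × ℕ => 1 - w * a ^ (y.1 + 1) * b ^ y.2 :=
    (multE (w * a) a b ha hb).congr fun y => by ring_nf
  rw [Epr, tprod_peel2 (fun x : ℕ × ℕ => 1 - w * a ^ x.1 * b ^ x.2) h0 hs]
  congr 1
  · exact tprod_congr fun k => by simp
  · exact tprod_congr fun y => by ring_nf

lemma EprI_peel (w a b : ℂ) (ha : ‖a‖ < 1) (hb : ‖b‖ < 1)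
    (h : ∀ j k : ℕ, w * a ^ j * b ^ k ≠ 1) :
    EprI w a b = GprI w b * EprI (w * a) a b := by
  have hne : ∀ j k : ℕ, w * a * a ^ j * b ^ k ≠ 1 := fun j k hh =>
    h (j + 1) k (by rw [← hh]; ring)
  have h0 : Multipliable fun k : ℕ => (1 - w * a ^ 0 * b ^ k)⁻¹ :=
    (multGI w b hb fun k => fun hh => h 0 k (by rw [← hh]; ring)).congr
      fun k => by norm_num
  have hs : Multipliable fun y : ℕ × ℕ => (1 - w * a ^ (y.1 + 1) * b ^ y.2)⁻¹ :=
    (multEI (w * a) a b ha hb hne).congr fun y => by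
      congr 2
      ring
  rw [EprI, tprod_peel2 (fun x : ℕ × ℕ => (1 - w * a ^ x.1 * b ^ x.2)⁻¹) h0 hs]
  congr 1
  · exact tprod_congr fun k => by simp
  · exact tprod_congr fun y => by rw [show w * a ^ (y.1+1) * b ^ y.2
      = w * a * a ^ y.1 * b ^ y.2 from by ring]

lemma Epr_swap (w a b : ℂ) : Epr w a b = Epr w b a := by
  rw [Epr, ← (Equiv.prodComm ℕ ℕ).tprod_eq (fun x : ℕ × ℕ => 1 - w * a ^ x.1 * b ^ x.2)]
  exact tprod_congr fun x => by simp [Equiv.prodComm]; ring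

lemma Epr_split (w a b : ℂ) (ha : ‖a‖ < 1) (hb : ‖b‖ < 1) :
    Epr w a b = Epr w a (a * b) * Epr (w * b) b (a * b) := by
  have hle : Multipliable fun y : ℕ × ℕ => 1 - w * a ^ (y.1 + y.2) * b ^ y.2 :=
    (multE w a (a * b) ha (by rw [norm_mul]; nlinarith [norm_nonneg a, norm_nonneg b])).congr
      fun y => by rw [mul_pow]; ring_nf
  have hgt : Multipliable fun y : ℕ × ℕ => 1 - w * a ^ y.2 * b ^ (y.1 + y.2 + 1) :=
    (multE (w * b) b (a * b) hb (by rw [norm_mul]; nlinarith [norm_nonneg a, norm_nonneg b])).congr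
      fun y => by rw [mul_pow]; ring_nf
  rw [Epr, tprod_split (fun x : ℕ × ℕ => 1 - w * a ^ x.1 * b ^ x.2) hle hgt]
  congr 1
  · rw [Epr]
    exact tprod_congr fun y => by ring_nf
  · rw [Epr]
    exact tprod_congr fun y => by ring_nf

lemma EprI_split (w a b : ℂ) (ha : ‖a‖ < 1) (hb : ‖b‖ < 1)
    (h : ∀ j k : ℕ, w * a ^ j * b ^ k ≠ 1) :
    EprI w a b = EprI w a (a * b) * EprI (w * b) b (a * b) := by
  have hab : ‖a * b‖ < 1 := by
    rw [norm_mul]; nlinarith [norm_nonneg a, norm_nonneg b]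
  have hne1 : ∀ j k : ℕ, w * a ^ j * (a * b) ^ k ≠ 1 := fun j k hh =>
    h (j + k) k (by rw [← hh, mul_pow]; ring)
  have hne2 : ∀ j k : ℕ, w * b * b ^ j * (a * b) ^ k ≠ 1 := fun j k hh =>
    h k (j + k + 1) (by rw [← hh, mul_pow]; ring)
  have hle : Multipliable fun y : ℕ × ℕ => (1 - w * a ^ (y.1 + y.2) * b ^ y.2)⁻¹ :=
    (multEI w a (a * b) ha hab hne1).congr fun y => by
      congr 2
      rw [mul_pow]; ring
  have hgt : Multipliable fun y : ℕ × ℕ => (1 - w * a ^ y.2 * b ^ (y.1 + y.2 + 1))⁻¹ :=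
    (multEI (w * b) b (a * b) hb hab hne2).congr fun y => by
      congr 2
      rw [mul_pow]; ring
  rw [EprI, tprod_split (fun x : ℕ × ℕ => (1 - w * a ^ x.1 * b ^ x.2)⁻¹) hle hgt]
  congr 1
  · rw [EprI]
    exact tprod_congr fun y => by rw [show w * a ^ (y.1 + y.2) * b ^ y.2
      = w * a ^ y.1 * (a * b) ^ y.2 from by rw [mul_pow]; ring_nf]
  · rw [EprI]
    exact tprod_congr fun y => by rw [show w * a ^ y.2 * b ^ (y.1 + y.2 + 1)
      = w * b * b ^ y.1 * (a * b) ^ y.2 from by rw [mul_pow]; ring_nf]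

lemma qPoch_GprI_cancel (w b : ℂ) (hb : ‖b‖ < 1)
    (h : ∀ k : ℕ, w * b ^ k ≠ 1) : qPochInf w b * GprI w b = 1 := by
  rw [qPochInf, GprI, ← Multipliable.tprod_mul (multG w b hb) (multGI w b hb h)]
  rw [tprod_congr (g := fun _ : ℕ => (1:ℂ))
    fun k => mul_inv_cancel₀ (sub_ne_zero_of_ne (Ne.symm (h k)))]
  exact tprod_one

lemma ellGamma_eq (w a b : ℂ) (ha : ‖a‖ < 1) (hb : ‖b‖ < 1)
    (h : ∀ j k : ℕ, w * a ^ j * b ^ k ≠ 1) :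
    ellGamma w a b = Epr (w⁻¹ * a * b) a b * EprI w a b := by
  rw [ellGamma, Epr, EprI, ← Multipliable.tprod_mul (multE _ a b ha hb) (multEI w a b ha hb h)]
  refine tprod_congr fun x => ?_
  rw [div_eq_mul_inv]
  congr 2
  ring

end LensAux

namespace LensAux

lemma theta0_eq (w t : ℂ) : theta0 w t = qPochInf w t * qPochInf (t * w⁻¹) t := rfl

lemma ellGamma_shift (a t w : ℂ) (ha1 : ‖a‖ < 1) (ht1 : ‖t‖ < 1)
    (ha : a ≠ 0) (ht : t ≠ 0) (hw : w ≠ 0)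
    (hnv : ∀ j k : ℕ, w * a ^ j * t ^ k ≠ 1) :
    ellGamma (w * a) a t = theta0 w t * ellGamma w a t := by
  have hnv' : ∀ j k : ℕ, w * a * a ^ j * t ^ k ≠ 1 := fun j k hh =>
    hnv (j + 1) k (by rw [← hh]; ring)
  rw [ellGamma_eq (w * a) a t ha1 ht1 hnv', ellGamma_eq w a t ha1 ht1 hnv, theta0_eq]
  rw [show (w * a)⁻¹ * a * t = w⁻¹ * t from by field_simp]
  rw [Epr_peel (w⁻¹ * t) a t ha1 ht1]
  rw [EprI_peel w a t ha1 ht1 hnv]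
  have hc : qPochInf w t * GprI w t = 1 :=
    qPoch_GprI_cancel w t ht1 fun k => by
      have := hnv 0 k
      simpa using this
  rw [show w⁻¹ * t * a = w⁻¹ * a * t from by ring, show t * w⁻¹ = w⁻¹ * t from by ring]
  linear_combination (-(qPochInf (w⁻¹ * t) t * Epr (w⁻¹ * a * t) a t * EprI (w * a) a t)) * hc

lemma gamma_split (p q z : ℂ) (hp1 : ‖p‖ < 1) (hq1 : ‖q‖ < 1)
    (hp : p ≠ 0) (hq : q ≠ 0) (hz : z ≠ 0)
    (hnv : ∀ j k : ℕ, z * p ^ j * q ^ k ≠ 1) :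
    ellGamma z p (p * q) * ellGamma (q * z) q (p * q) = ellGamma z p q := by
  have ht1 : ‖p * q‖ < 1 := by
    rw [norm_mul]; nlinarith [norm_nonneg p, norm_nonneg q]
  have hnv1 : ∀ j k : ℕ, z * p ^ j * (p * q) ^ k ≠ 1 := fun j k h =>
    hnv (j + k) k (by rw [← h, mul_pow]; ring)
  have hnv2 : ∀ j k : ℕ, q * z * q ^ j * (p * q) ^ k ≠ 1 := fun j k h =>
    hnv k (j + k + 1) (by rw [← h, mul_pow]; ring)
  rw [ellGamma_eq z p (p * q) hp1 ht1 hnv1, ellGamma_eq (q * z) q (p * q) hq1 ht1 hnv2,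
    ellGamma_eq z p q hp1 hq1 hnv]
  rw [Epr_swap (z⁻¹ * p * q) p q, Epr_split (z⁻¹ * p * q) q p hq1 hp1,
    EprI_split z p q hp1 hq1 hnv]
  rw [show (q * z)⁻¹ * q * (p * q) = z⁻¹ * p * q from by field_simp]
  rw [show z⁻¹ * p * (p * q) = z⁻¹ * p * q * p from by ring]
  rw [mul_comm q p, mul_comm q z]
  ring

lemma theta_step (t w : ℂ) (ht1 : ‖t‖ < 1) (ht' : t ≠ 0) (hw : w ≠ 0) :
    theta0 w t = -w * theta0 (w * t) t := by
  rw [theta0_eq, theta0_eq]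
  rw [qPochInf_peel w t ht1]
  rw [show t * (w * t)⁻¹ = w⁻¹ from by rw [mul_inv, mul_comm w⁻¹ t⁻¹, ← mul_assoc, mul_inv_cancel₀ ht', one_mul]]
  rw [show t * w⁻¹ = w⁻¹ * t from by ring]
  rw [show qPochInf w⁻¹ t = (1 - w⁻¹) * qPochInf (w⁻¹ * t) t from qPochInf_peel w⁻¹ t ht1]
  have hkey : -w * (1 - w⁻¹) = 1 - w := by field_simp; ring
  linear_combination (-(qPochInf (w * t) t * qPochInf (w⁻¹ * t) t)) * hkey

lemma theta_iter (t w : ℂ) (ht1 : ‖t‖ < 1) (ht : t ≠ 0) (hw : w ≠ 0) (k : ℕ) :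
    theta0 w t = (-1) ^ k * w ^ k * t ^ (∑ i ∈ range k, i) * theta0 (w * t ^ k) t := by
  induction k with
  | zero => simp
  | succ k ih =>
    rw [ih, theta_step t (w * t ^ k) ht1 ht (mul_ne_zero hw (pow_ne_zero _ ht))]
    rw [Finset.sum_range_succ, show w * t ^ k * t = w * t ^ (k + 1) from by ring,
      pow_add, pow_succ, pow_succ]
    ring

end LensAux

namespace LensAux

lemma gamma_poch_nat (a t x : ℂ) (ha1 : ‖a‖ < 1) (ht1 : ‖t‖ < 1)
    (ha : a ≠ 0) (ht : t ≠ 0) (hx : x ≠ 0) (n : ℕ)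
    (hnv : ∀ s j k : ℕ, x * a ^ s * a ^ j * t ^ k ≠ 1) :
    ellGamma (x * a ^ n) a t = (∏ j ∈ range n, theta0 (x * a ^ j) t) * ellGamma x a t := by
  induction n with
  | zero => simp
  | succ n ih =>
    have hstep := ellGamma_shift a t (x * a ^ n) ha1 ht1 ha ht
      (mul_ne_zero hx (pow_ne_zero _ ha)) (hnv n)
    rw [show x * a ^ (n + 1) = x * a ^ n * a from by ring, hstep, ih, Finset.prod_range_succ]
    ring

lemma gamma_poch_down (a t x : ℂ) (ha1 : ‖a‖ < 1) (ht1 : ‖t‖ < 1)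
    (ha : a ≠ 0) (ht : t ≠ 0) (hx : x ≠ 0) (N : ℕ)
    (hnv : ∀ s j k : ℕ, s < N → x * a ^ (-(s:ℤ) - 1) * a ^ j * t ^ k ≠ 1) :
    ellGamma x a t = (∏ j ∈ range N, theta0 (x * a ^ (-(j:ℤ) - 1)) t) *
      ellGamma (x * a ^ (-(N:ℤ))) a t := by
  induction N with
  | zero => simp
  | succ N ih =>
    have hw : x * a ^ (-(N:ℤ) - 1) ≠ 0 := mul_ne_zero hx (zpow_ne_zero _ ha)
    have hstep := ellGamma_shift a t (x * a ^ (-(N:ℤ) - 1)) ha1 ht1 ha ht hw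
      (hnv N · · (by omega))
    have harg : x * a ^ (-(N:ℤ)) = x * a ^ (-(N:ℤ) - 1) * a := by
      rw [mul_assoc, ← zpow_add_one₀ ha]
      norm_num
    rw [ih (fun s j k hs => hnv s j k (by omega)), Finset.prod_range_succ, harg, hstep]
    rw [show (-(((N:ℕ) + 1 : ℕ) : ℤ)) = -(N:ℤ) - 1 from by push_cast; ring]
    ring

lemma gamma_poch (a t x : ℂ) (ha1 : ‖a‖ < 1) (ht1 : ‖t‖ < 1)
    (ha : a ≠ 0) (ht : t ≠ 0) (hx : x ≠ 0) (m : ℤ)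
    (hnv : ∀ s : ℤ, min m 0 ≤ s → ∀ j k : ℕ, x * a ^ s * a ^ j * t ^ k ≠ 1)
    (hden : ∀ j ∈ range m.natAbs, theta0 (x * a ^ (-(j:ℤ) - 1)) t ≠ 0) :
    ellGamma (x * a ^ m) a t = ellPoch x t a m * ellGamma x a t := by
  rcases le_or_gt 0 m with hm | hm
  · have hnvn : ∀ s j k : ℕ, x * a ^ s * a ^ j * t ^ k ≠ 1 := by
      intro s j k hh
      refine hnv (s : ℤ) ((min_le_right m 0).trans (Int.natCast_nonneg s)) j k ?_
      rwa [zpow_natCast]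
    rw [ellPoch, if_pos hm]
    have hxa : x * a ^ m = x * a ^ (m.toNat) := by
      rw [← zpow_natCast a m.toNat, Int.toNat_of_nonneg hm]
    rw [hxa, gamma_poch_nat a t x ha1 ht1 ha ht hx m.toNat hnvn]
    congr 1
    all_goals exact Finset.prod_congr rfl fun j _ => by rw [zpow_natCast]
  · set n := m.natAbs with hn
    have hmn : m = -(n : ℤ) := by omega
    have hnvd : ∀ s j k : ℕ, s < n → x * a ^ (-(s:ℤ) - 1) * a ^ j * t ^ k ≠ 1 := by
      intro s j k hs
      exact hnv (-(s:ℤ) - 1) (by omega) j k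
    have h1 := gamma_poch_down a t x ha1 ht1 ha ht hx n hnvd
    have hP : (∏ j ∈ range n, theta0 (x * a ^ (-(j:ℤ) - 1)) t) ≠ 0 :=
      Finset.prod_ne_zero_iff.mpr hden
    rw [ellPoch, if_neg (by omega), show (-m).toNat = n from by omega,
      show x * a ^ m = x * a ^ (-(n:ℤ)) from by rw [hmn], h1]
    field_simp

lemma sum_id_int (n : ℕ) : 2 * (∑ i ∈ range n, (i : ℤ)) = n * (n - 1) := by
  induction n with
  | zero => simp
  | succ n ih =>
    rw [Finset.sum_range_succ]
    push_cast
    push_cast at ih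
    linear_combination ih

lemma sum_sq_int (n : ℕ) : 6 * (∑ i ∈ range n, (i : ℤ) * (i : ℤ)) = n * (n - 1) * (2 * n - 1) := by
  induction n with
  | zero => simp
  | succ n ih =>
    rw [Finset.sum_range_succ]
    push_cast
    push_cast at ih
    linear_combination ih

lemma sum_succ_int (n : ℕ) : 2 * (∑ j ∈ range n, ((j : ℤ) + 1)) = n * (n + 1) := by
  induction n with
  | zero => simp
  | succ n ih =>
    rw [Finset.sum_range_succ]
    push_cast
    push_cast at ih
    linear_combination ih

lemma sum_sqsucc_int (n : ℕ) :
    6 * (∑ j ∈ range n, ((j : ℤ) + 1) * ((j : ℤ) + 1)) = n * (n + 1) * (2 * n + 1) := by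
  induction n with
  | zero => simp
  | succ n ih =>
    rw [Finset.sum_range_succ]
    push_cast
    push_cast at ih
    linear_combination ih

lemma nat_gauss (j : ℕ) : j + 2 * (∑ i ∈ range j, i) = j * j := by
  induction j with
  | zero => simp
  | succ n ih =>
    rw [Finset.sum_range_succ]
    zify at ih ⊢
    linear_combination ih

lemma key_pows (p q σ τ : ℂ) (hσ : σ ^ 2 = p * q) (hτq : τ * q = σ) (j : ℕ) :
    τ ^ (j * j) * q ^ (j * j) = σ ^ j * (p * q) ^ (∑ i ∈ range j, i) := by
  have hj : j + 2 * (∑ i ∈ range j, i) = j * j := nat_gauss j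
  calc τ ^ (j * j) * q ^ (j * j) = (τ * q) ^ (j * j) := (mul_pow τ q _).symm
    _ = σ ^ (j * j) := by rw [hτq]
    _ = σ ^ (j + 2 * (∑ i ∈ range j, i)) := by rw [hj]
    _ = σ ^ j * (σ ^ 2) ^ (∑ i ∈ range j, i) := by rw [pow_add, pow_mul σ 2]
    _ = σ ^ j * (p * q) ^ (∑ i ∈ range j, i) := by rw [hσ]

lemma key_pows2 (p q σ τ : ℂ) (hσ : σ ^ 2 = p * q) (hστ : σ * τ = p) (k : ℕ) :
    σ ^ k * (p * q) ^ (∑ i ∈ range k, i) * τ ^ (k * k) = p ^ (k * k) := by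
  have hk : k + 2 * (∑ i ∈ range k, i) = k * k := nat_gauss k
  calc σ ^ k * (p * q) ^ (∑ i ∈ range k, i) * τ ^ (k * k)
      = σ ^ k * (σ ^ 2) ^ (∑ i ∈ range k, i) * τ ^ (k * k) := by rw [hσ]
    _ = σ ^ (k + 2 * (∑ i ∈ range k, i)) * τ ^ (k * k) := by rw [pow_add, pow_mul σ 2]
    _ = σ ^ (k * k) * τ ^ (k * k) := by rw [hk]
    _ = (σ * τ) ^ (k * k) := (mul_pow σ τ _).symm
    _ = p ^ (k * k) := by rw [hστ]

end LensAux

namespace LensAux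

lemma PT (p q z σ τ : ℂ) (hp : p ≠ 0) (hq : q ≠ 0) (hz : z ≠ 0) (hσ0 : σ ≠ 0)
    (ht1 : ‖p * q‖ < 1) (hσ : σ ^ 2 = p * q) (hτq : τ * q = σ) (j : ℕ) :
    theta0 (q * z * q ^ (-(j:ℤ) - 1)) (p * q) =
      (-z / σ) ^ j * τ ^ (j * j) * theta0 (z * p ^ ((j:ℕ) : ℤ)) (p * q) := by
  have ht0 : p * q ≠ 0 := mul_ne_zero hp hq
  have harg : q * z * q ^ (-(j:ℤ) - 1) = z * ((q:ℂ) ^ j)⁻¹ := by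
    rw [show (-(j:ℤ) - 1) = -(((j + 1 : ℕ) : ℤ)) from by push_cast; ring, zpow_neg,
      zpow_natCast]
    rw [pow_succ]
    field_simp
  have hw0 : z * ((q:ℂ) ^ j)⁻¹ ≠ 0 := mul_ne_zero hz (inv_ne_zero (pow_ne_zero _ hq))
  have hiter := theta_iter (p * q) (z * ((q:ℂ) ^ j)⁻¹) ht1 ht0 hw0 j
  have harg2 : z * ((q:ℂ) ^ j)⁻¹ * (p * q) ^ j = z * p ^ j := by
    rw [mul_pow]
    field_simp
  have hcoef : (-1 : ℂ) ^ j * (z * ((q:ℂ) ^ j)⁻¹) ^ j * (p * q) ^ (∑ i ∈ range j, i) =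
      (-z / σ) ^ j * τ ^ (j * j) := by
    have hkp := key_pows p q σ τ hσ hτq j
    rw [mul_pow z _ j, inv_pow, ← pow_mul, div_pow, neg_pow z j]
    field_simp
    linear_combination -hkp
  rw [harg, hiter, harg2, zpow_natCast, hcoef]

lemma PT2 (p q z σ τ : ℂ) (hp : p ≠ 0) (hq : q ≠ 0) (hz : z ≠ 0) (hσ0 : σ ≠ 0) (hτ0 : τ ≠ 0)
    (ht1 : ‖p * q‖ < 1) (hσ : σ ^ 2 = p * q) (hστ : σ * τ = p) (j : ℕ) :
    theta0 (z * p ^ (-(j:ℤ) - 1)) (p * q) =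
      (-z / σ) ^ (j + 1) * (τ ^ ((j + 1) * (j + 1)))⁻¹ *
        theta0 (q * z * q ^ ((j:ℕ) : ℤ)) (p * q) := by
  have ht0 : p * q ≠ 0 := mul_ne_zero hp hq
  have harg : z * p ^ (-(j:ℤ) - 1) = z * ((p:ℂ) ^ (j + 1))⁻¹ := by
    rw [show (-(j:ℤ) - 1) = -(((j + 1 : ℕ) : ℤ)) from by push_cast; ring, zpow_neg,
      zpow_natCast]
  have hw0 : z * ((p:ℂ) ^ (j + 1))⁻¹ ≠ 0 := mul_ne_zero hz (inv_ne_zero (pow_ne_zero _ hp))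
  have hiter := theta_iter (p * q) (z * ((p:ℂ) ^ (j + 1))⁻¹) ht1 ht0 hw0 (j + 1)
  have harg2 : z * ((p:ℂ) ^ (j + 1))⁻¹ * (p * q) ^ (j + 1) = q * z * q ^ ((j:ℕ) : ℤ) := by
    rw [zpow_natCast, mul_pow]
    field_simp
    ring
  have hcoef : (-1 : ℂ) ^ (j + 1) * (z * ((p:ℂ) ^ (j + 1))⁻¹) ^ (j + 1) *
      (p * q) ^ (∑ i ∈ range (j + 1), i) =
      (-z / σ) ^ (j + 1) * (τ ^ ((j + 1) * (j + 1)))⁻¹ := by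
    have hkp := key_pows2 p q σ τ hσ hστ (j + 1)
    rw [mul_pow z _ (j + 1), inv_pow, ← pow_mul, div_pow, neg_pow z (j + 1)]
    field_simp
    linear_combination hkp
  rw [harg, hiter, harg2, hcoef]

lemma collapse (p q z σ τ : ℂ) (hp : p ≠ 0) (hq : q ≠ 0) (hz : z ≠ 0)
    (hσ0 : σ ≠ 0) (hτ0 : τ ≠ 0)
    (ht1 : ‖p * q‖ < 1)
    (hσ : σ ^ 2 = p * q) (hστ : σ * τ = p) (hτq : τ * q = σ) (m : ℤ)
    (hden1 : ∀ j ∈ Finset.range m.natAbs, theta0 (z * p ^ (-(j : ℤ) - 1)) (p * q) ≠ 0)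
    (hden2 : ∀ j ∈ Finset.range m.natAbs, theta0 (q * z * q ^ (-(j : ℤ) - 1)) (p * q) ≠ 0) :
    (-z / σ) ^ (m * (m - 1) / 2) * τ ^ (m * (m - 1) * (2 * m - 1) / 6) *
      (ellPoch z (p * q) p m * ellPoch (q * z) (p * q) q (-m)) = 1 := by
  rcases lt_trichotomy m 0 with hm | hm | hm
  · -- m < 0
    set n := m.natAbs with hn
    have hmn : m = -(n : ℤ) := by omega
    set S1 : ℕ := ∑ j ∈ range n, (j + 1) with hS1
    set S2 : ℕ := ∑ j ∈ range n, ((j + 1) * (j + 1)) with hS2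
    have hc1 : 2 * ((S1 : ℤ)) = (n : ℤ) * ((n : ℤ) + 1) := by
      rw [hS1]; push_cast; exact sum_succ_int n
    have hc2 : 6 * ((S2 : ℤ)) = (n : ℤ) * ((n : ℤ) + 1) * (2 * (n : ℤ) + 1) := by
      rw [hS2]; push_cast; exact sum_sqsucc_int n
    have e1 : m * (m - 1) / 2 = (S1 : ℤ) := by
      rw [show m * (m - 1) = 2 * (S1 : ℤ) from by rw [hmn]; linear_combination -hc1]
      exact Int.mul_ediv_cancel_left _ (by norm_num)
    have e2 : m * (m - 1) * (2 * m - 1) / 6 = -(S2 : ℤ) := by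
      rw [show m * (m - 1) * (2 * m - 1) = 6 * (-(S2 : ℤ)) from by
        rw [hmn]; linear_combination hc2]
      exact Int.mul_ediv_cancel_left _ (by norm_num)
    rw [e1, e2, zpow_natCast, zpow_neg, zpow_natCast]
    rw [ellPoch, if_neg (by omega), ellPoch, if_pos (by omega),
      show (-m).toNat = n from by omega]
    set A : ℂ := ∏ j ∈ range n, theta0 (z * p ^ (-(j : ℤ) - 1)) (p * q) with hA
    set B : ℂ := ∏ j ∈ range n, theta0 (q * z * q ^ ((j : ℕ) : ℤ)) (p * q) with hB
    have hA0 : A ≠ 0 := Finset.prod_ne_zero_iff.mpr hden1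
    have hBA : A = (-z / σ) ^ S1 * (τ ^ S2)⁻¹ * B := by
      rw [hA, hB]
      calc (∏ j ∈ range n, theta0 (z * p ^ (-(j : ℤ) - 1)) (p * q))
          = ∏ j ∈ range n, ((-z / σ) ^ (j + 1) * (τ ^ ((j + 1) * (j + 1)))⁻¹ *
              theta0 (q * z * q ^ ((j : ℕ) : ℤ)) (p * q)) :=
            Finset.prod_congr rfl fun j _ => PT2 p q z σ τ hp hq hz hσ0 hτ0 ht1 hσ hστ j
        _ = (∏ j ∈ range n, (-z / σ) ^ (j + 1)) * (∏ j ∈ range n, (τ ^ ((j + 1) * (j + 1)))⁻¹) *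
              ∏ j ∈ range n, theta0 (q * z * q ^ ((j : ℕ) : ℤ)) (p * q) := by
            rw [Finset.prod_mul_distrib, Finset.prod_mul_distrib]
        _ = (-z / σ) ^ S1 * (τ ^ S2)⁻¹ * B := by
            rw [hS1, hS2, hB, ← Finset.prod_pow_eq_pow_sum, ← Finset.prod_pow_eq_pow_sum,
              ← Finset.prod_inv_distrib]
    have hA0' : (-z / σ) ^ S1 * (τ ^ S2)⁻¹ * B ≠ 0 := hBA ▸ hA0
    have hD0 : (-z / σ) ^ S1 * (τ ^ S2)⁻¹ ≠ 0 := left_ne_zero_of_mul hA0'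
    have hB0 : B ≠ 0 := right_ne_zero_of_mul hA0'
    rw [hBA, mul_inv]
    calc ((-z / σ) ^ S1 * (τ ^ S2)⁻¹) *
          ((((-z / σ) ^ S1 * (τ ^ S2)⁻¹)⁻¹ * B⁻¹) * B)
        = (((-z / σ) ^ S1 * (τ ^ S2)⁻¹) * ((-z / σ) ^ S1 * (τ ^ S2)⁻¹)⁻¹) * (B⁻¹ * B) := by
          ring
      _ = 1 := by rw [mul_inv_cancel₀ hD0, inv_mul_cancel₀ hB0, one_mul]
  · -- m = 0
    subst hm
    norm_num [ellPoch]
  · -- m > 0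
    set n := m.toNat with hn
    set S1 : ℕ := ∑ j ∈ range n, j with hS1
    set S2 : ℕ := ∑ j ∈ range n, (j * j) with hS2
    have hmc : m = (n : ℤ) := by omega
    have hc1 : 2 * ((S1 : ℤ)) = (n : ℤ) * ((n : ℤ) - 1) := by
      rw [hS1]; push_cast; exact sum_id_int n
    have hc2 : 6 * ((S2 : ℤ)) = (n : ℤ) * ((n : ℤ) - 1) * (2 * (n : ℤ) - 1) := by
      rw [hS2]; push_cast; exact sum_sq_int n
    have e1 : m * (m - 1) / 2 = (S1 : ℤ) := by
      rw [show m * (m - 1) = 2 * (S1 : ℤ) from by rw [hmc]; linear_combination -hc1]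
      exact Int.mul_ediv_cancel_left _ (by norm_num)
    have e2 : m * (m - 1) * (2 * m - 1) / 6 = (S2 : ℤ) := by
      rw [show m * (m - 1) * (2 * m - 1) = 6 * (S2 : ℤ) from by
        rw [hmc]; linear_combination -hc2]
      exact Int.mul_ediv_cancel_left _ (by norm_num)
    rw [e1, e2, zpow_natCast, zpow_natCast]
    rw [ellPoch, if_pos (le_of_lt hm), ellPoch, if_neg (by omega),
      show m.toNat = n from rfl, show (-(-m)).toNat = n from by omega]
    set A : ℂ := ∏ j ∈ range n, theta0 (z * p ^ ((j : ℕ) : ℤ)) (p * q) with hA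
    set B : ℂ := ∏ j ∈ range n, theta0 (q * z * q ^ (-(j : ℤ) - 1)) (p * q) with hB
    have hden2' : ∀ j ∈ range n, theta0 (q * z * q ^ (-(j : ℤ) - 1)) (p * q) ≠ 0 := by
      intro j hj
      exact hden2 j (by simpa [show m.natAbs = n from by omega] using hj)
    have hB0 : B ≠ 0 := Finset.prod_ne_zero_iff.mpr fun j hj => hden2' j hj
    have hBA : B = (-z / σ) ^ S1 * τ ^ S2 * A := by
      rw [hA, hB]
      calc (∏ j ∈ range n, theta0 (q * z * q ^ (-(j : ℤ) - 1)) (p * q))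
          = ∏ j ∈ range n, ((-z / σ) ^ j * τ ^ (j * j) *
              theta0 (z * p ^ ((j : ℕ) : ℤ)) (p * q)) :=
            Finset.prod_congr rfl fun j _ => PT p q z σ τ hp hq hz hσ0 ht1 hσ hτq j
        _ = (∏ j ∈ range n, (-z / σ) ^ j) * (∏ j ∈ range n, τ ^ (j * j)) *
              ∏ j ∈ range n, theta0 (z * p ^ ((j : ℕ) : ℤ)) (p * q) := by
            rw [Finset.prod_mul_distrib, Finset.prod_mul_distrib]
        _ = (-z / σ) ^ S1 * τ ^ S2 * A := by
            rw [hS1, hS2, hA, ← Finset.prod_pow_eq_pow_sum, ← Finset.prod_pow_eq_pow_sum]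
    calc (-z / σ) ^ S1 * τ ^ S2 * (A * B⁻¹)
        = ((-z / σ) ^ S1 * τ ^ S2 * A) * B⁻¹ := by ring
      _ = B * B⁻¹ := by rw [← hBA]
      _ = 1 := mul_inv_cancel₀ hB0

end LensAux

namespace LensAux

lemma notPole_iff (w P Q : ℂ) (hP : P ≠ 0) (hQ : Q ≠ 0) :
    notPole w P Q ↔ ∀ j k : ℕ, w * P ^ j * Q ^ k ≠ 1 := by
  unfold notPole
  constructor
  · intro h j k heq
    apply h j k
    rw [zpow_neg, zpow_neg, zpow_natCast, zpow_natCast]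
    field_simp
    linear_combination heq
  · intro h j k heq
    apply h j k
    rw [heq, zpow_neg, zpow_neg, zpow_natCast, zpow_natCast]
    field_simp

end LensAux


/-- For `r = 1`: `γ^{(1)}(z,m;p,q) = θ(z;pq|p)_m θ(qz;pq|q)_{−m} Γ(z;p,q)` and hence
`Γ^{(1)}(z,m;p,q) = Γ(z;p,q)` for all `m ∈ ℤ` (formulae (3.8) and below (3.12)). -/
theorem lensGamma_r_eq_one
    (p q σ τ : ℂ) (hp : p ≠ 0) (hq : q ≠ 0)
    (hp1 : ‖p‖ < 1) (hq1 : ‖q‖ < 1)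
    (hσ : σ ^ 2 = p * q) (hτ : τ ^ 2 = p / q) (hστ : σ * τ = p)
    (m : ℤ) (z : ℂ) (hz : z ≠ 0)
    (hreg1 : lensReg 1 z m p q)
    (hreg2 : notPole z p q)
    (hden1 : ∀ j ∈ Finset.range m.natAbs, theta0 (z * p ^ (-(j : ℤ) - 1)) (p * q) ≠ 0)
    (hden2 : ∀ j ∈ Finset.range m.natAbs, theta0 (q * z * q ^ (-(j : ℤ) - 1)) (p * q) ≠ 0) :
    lensGamma 1 z m p q =
        ellPoch z (p * q) p m * ellPoch (q * z) (p * q) q (-m) * ellGamma z p q ∧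
      rarGamma 1 z m p q σ τ = ellGamma z p q := by
  classical
  have ht0 : p * q ≠ 0 := mul_ne_zero hp hq
  have ht1 : ‖p * q‖ < 1 := by
    rw [norm_mul]; nlinarith [norm_nonneg p, norm_nonneg q]
  have hσ0 : σ ≠ 0 := fun h => hp (by rw [← hστ, h, zero_mul])
  have hτ0 : τ ≠ 0 := fun h => hp (by rw [← hστ, h, mul_zero])
  have hτq : τ * q = σ := by
    have hh : σ * (τ * q) = σ * σ := by rw [← mul_assoc, hστ, ← sq, hσ]
    exact (mul_left_cancel₀ hσ0 hh)
  -- translated pole-avoidance hypotheses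
  have hreg2' : ∀ j k : ℕ, z * p ^ j * q ^ k ≠ 1 :=
    (LensAux.notPole_iff z p q hp hq).mp hreg2
  have hreg11 : ∀ j k : ℕ, (z * p ^ m) * p ^ j * (p * q) ^ k ≠ 1 := by
    have h := (LensAux.notPole_iff (z * p ^ m) (p ^ 1) (p * q) (by simpa using hp) ht0).mp
      hreg1.1
    simpa using h
  have hreg12 : ∀ j k : ℕ, (z * q ^ (1 - m)) * q ^ j * (p * q) ^ k ≠ 1 := by
    have h := (LensAux.notPole_iff (z * q ^ (((1:ℕ):ℤ) - m)) (q ^ 1) (p * q)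
      (by simpa using hq) ht0).mp hreg1.2
    simpa using h
  have hnvp : ∀ s : ℤ, min m 0 ≤ s → ∀ j k : ℕ, z * p ^ s * p ^ j * (p * q) ^ k ≠ 1 := by
    intro s hs j k heq
    rcases le_or_gt 0 s with h0 | h0
    · obtain ⟨sn, rfl⟩ : ∃ sn : ℕ, s = (sn : ℤ) := ⟨s.toNat, by omega⟩
      refine hreg2' (sn + j + k) k ?_
      rw [← heq, zpow_natCast, mul_pow]
      ring
    · obtain ⟨d, rfl⟩ : ∃ d : ℕ, s = m + (d : ℤ) := ⟨(s - m).toNat, by omega⟩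
      refine hreg11 (d + j) k ?_
      rw [← heq, zpow_add₀ hp, zpow_natCast, pow_add]
      ring
  have hnvq : ∀ s : ℤ, min (-m) 0 ≤ s → ∀ j k : ℕ, (q * z) * q ^ s * q ^ j * (p * q) ^ k ≠ 1 := by
    intro s hs j k heq
    rcases le_or_gt 0 s with h0 | h0
    · obtain ⟨sn, rfl⟩ : ∃ sn : ℕ, s = (sn : ℤ) := ⟨s.toNat, by omega⟩
      refine hreg2' k (1 + sn + j + k) ?_
      rw [← heq, zpow_natCast, mul_pow]
      ring
    · obtain ⟨d, rfl⟩ : ∃ d : ℕ, s = -m + (d : ℤ) := ⟨(s + m).toNat, by omega⟩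
      refine hreg12 (d + j) k ?_
      have hq1m : z * q ^ (1 - m) = q * z * q ^ (-m) := by
        rw [show (1 : ℤ) - m = 1 + -m from by ring, zpow_add₀ hq, zpow_one]
        ring
      rw [← heq, zpow_add₀ hq, zpow_natCast, hq1m, pow_add]
      ring
  -- the two shift identities
  have hpoch1 : ellGamma (z * p ^ m) p (p * q) =
      ellPoch z (p * q) p m * ellGamma z p (p * q) :=
    LensAux.gamma_poch p (p * q) z hp1 ht1 hp ht0 hz m hnvp hden1
  have hden2' : ∀ j ∈ Finset.range (-m).natAbs,
      theta0 (q * z * q ^ (-(j : ℤ) - 1)) (p * q) ≠ 0 := by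
    intro j hj
    exact hden2 j (by simpa [Int.natAbs_neg] using hj)
  have hpoch2 : ellGamma ((q * z) * q ^ (-m)) q (p * q) =
      ellPoch (q * z) (p * q) q (-m) * ellGamma (q * z) q (p * q) :=
    LensAux.gamma_poch q (p * q) (q * z) hq1 ht1 hq ht0 (mul_ne_zero hq hz) (-m) hnvq hden2'
  have hsplit : ellGamma z p (p * q) * ellGamma (q * z) q (p * q) = ellGamma z p q :=
    LensAux.gamma_split p q z hp1 hq1 hp hq hz hreg2'
  have part1 : lensGamma 1 z m p q =
      ellPoch z (p * q) p m * ellPoch (q * z) (p * q) q (-m) * ellGamma z p q := by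
    rw [lensGamma]
    simp only [pow_one, Nat.cast_one]
    rw [show z * q ^ ((1 : ℤ) - m) = (q * z) * q ^ (-m) from by
      rw [show (1 : ℤ) - m = 1 + -m from by ring, zpow_add₀ hq, zpow_one]; ring]
    rw [hpoch1, hpoch2, ← hsplit]
    ring
  refine ⟨part1, ?_⟩
  have key := LensAux.collapse p q z σ τ hp hq hz hσ0 hτ0 ht1 hσ hστ hτq m hden1 hden2
  rw [rarGamma, part1]
  linear_combination (ellGamma z p q) * key
end
end
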